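/- arXiv:1806.09874 — 7 statements merged into one kernel-verified Lean document; each statement's English description precedes it below -/
import Mathlib

section
/- Let f = g/h be a meromorphic modular form of weight k for SL(2,ℤ) which has at least one pole in ℍ, and let c : ℤ → ℂ and N ∈ ℤ be such that f(τ) = Σ_{n ≥ N} c(n) e^{2πinτ} (absolutely convergent) for every τ ∈ ℍ whose imaginary part exceeds the imaginary part of every pole of f. Let τ* be a pole of f in the vertical strip {τ ∈ ℍ : |Re τ| ≤ 1/2} whose imaginary part t := Im τ* is maximal among poles of f in that strip, and let p ≥ 1 be the maximal order among the poles of f with imaginary part equal to t. Then t ≥ √3/2, and there exists a constant C > 0 such that for every ε > 0 there are infinitely many positive integers n with C · n^{p−1} · e^{2πnt} ≤ |c(n)| ≤ e^{2πn(t+ε)}. -/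
open Complex Real Filter Topology

/-- A level-one holomorphic modular form of weight `k`: holomorphic on the upper
half-plane, 1-periodic, with the weight-`k` transformation under `τ ↦ -1/τ`,
and bounded as `Im τ → ∞`. -/
def IsModularForm (k : ℤ) (f : ℂ → ℂ) : Prop :=
  DifferentiableOn ℂ f {z : ℂ | 0 < z.im} ∧
  (∀ z : ℂ, 0 < z.im → f (z + 1) = f z) ∧
  (∀ z : ℂ, 0 < z.im → f (-z⁻¹) = z ^ k * f z) ∧
  ∃ C A : ℝ, ∀ z : ℂ, A < z.im → ‖f z‖ ≤ C

/-- `f` has a pole of order `p ≥ 1` at `z₀`: near `z₀` (but away from it),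
`f z = G z / (z - z₀)^p` with `G` analytic at `z₀` and `G z₀ ≠ 0`. -/
def IsPoleOfOrder (f : ℂ → ℂ) (z₀ : ℂ) (p : ℕ) : Prop :=
  0 < p ∧ ∃ G : ℂ → ℂ, AnalyticAt ℂ G z₀ ∧ G z₀ ≠ 0 ∧
    ∀ᶠ z in nhdsWithin z₀ {z₀}ᶜ, f z = G z / (z - z₀) ^ p

/-- `f` has a pole at `z₀`. -/
def IsPole (f : ℂ → ℂ) (z₀ : ℂ) : Prop := ∃ p : ℕ, IsPoleOfOrder f z₀ p

lemma norm_exp_aux (m : ℝ) (τ : ℂ) :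
    ‖Complex.exp (2 * π * I * (m : ℂ) * τ)‖ = Real.exp (-(2 * π * m * τ.im)) := by
  rw [Complex.norm_exp]
  congr 1
  have : (2 * (π:ℂ) * I * (m : ℂ) * τ) = ((2 * π * m : ℝ) : ℂ) * (I * τ) := by
    push_cast; ring
  rw [this]
  simp [Complex.mul_re]

lemma analyticAt_zpow' {x : ℂ} (hx : x ≠ 0) (k : ℤ) :
    AnalyticAt ℂ (fun u : ℂ => u ^ k) x := by
  cases k with
  | ofNat m =>
      simpa [zpow_natCast] using (analyticAt_id.fun_pow m : AnalyticAt ℂ (fun u : ℂ => u ^ m) x)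
  | negSucc m =>
      have h1 : AnalyticAt ℂ (fun u : ℂ => u ^ (m + 1)) x := analyticAt_id.pow (m + 1)
      have h2 := h1.fun_inv (pow_ne_zero _ hx)
      simpa [zpow_negSucc] using h2

lemma per_int {f : ℂ → ℂ} (hper : ∀ z : ℂ, 0 < z.im → f (z + 1) = f z) (n : ℤ) :
    ∀ z : ℂ, 0 < z.im → f (z + n) = f z := by
  induction n using Int.induction_on with
  | zero => intro z hz; simp
  | succ k ih =>
      intro z hz
      have ih' := ih z hz
      push_cast at ih' ⊢
      have h1 : f (z + k + 1) = f (z + k) := hper _ (by simp [hz])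
      rw [← add_assoc, h1, ih']
  | pred k ih =>
      intro z hz
      have ih' := ih z hz
      push_cast at ih' ⊢
      have h1 : f (z + (-(k:ℂ) - 1) + 1) = f (z + (-(k:ℂ) - 1)) := hper _ (by simp [hz])
      have e1 : z + (-(k:ℂ) - 1) + 1 = z + -(k:ℂ) := by ring
      rw [e1] at h1
      rw [← h1]
      exact ih'

lemma pole_shift {f : ℂ → ℂ} (hper : ∀ z : ℂ, 0 < z.im → f (z + 1) = f z)
    (n : ℤ) {z₀ : ℂ} (h0 : 0 < z₀.im) {p : ℕ} (hp : IsPoleOfOrder f z₀ p) :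
    IsPoleOfOrder f (z₀ + n) p := by
  obtain ⟨hp0, G, hG, hGne, hE⟩ := hp
  refine ⟨hp0, fun w => G (w - n), ?_, by simpa using hGne, ?_⟩
  · have h2 : AnalyticAt ℂ (fun w : ℂ => w - n) (z₀ + n) := analyticAt_id.sub analyticAt_const
    have hG' : AnalyticAt ℂ G (z₀ + n - n) := by simpa using hG
    have := hG'.fun_comp (x := z₀ + (n:ℂ)) h2
    simpa [Function.comp] using this
  · have htend : Tendsto (fun w : ℂ => w - n) (𝓝[≠] (z₀ + n)) (𝓝[≠] z₀) := by
      rw [tendsto_nhdsWithin_iff]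
      constructor
      · have : Tendsto (fun w : ℂ => w - n) (𝓝 (z₀ + n)) (𝓝 (z₀ + n - n)) :=
          (continuous_id.sub continuous_const).tendsto _
        simpa using this.mono_left nhdsWithin_le_nhds
      · filter_upwards [eventually_mem_nhdsWithin] with w hw
        simp only [Set.mem_compl_iff, Set.mem_singleton_iff] at hw ⊢
        intro hc; apply hw;
        have : w - n + n = z₀ + n := by rw [hc]
        simpa using this
    have him : ∀ᶠ w in 𝓝[≠] (z₀ + n), 0 < w.im := by
      apply Filter.Eventually.filter_mono nhdsWithin_le_nhds
      have hop : IsOpen {z : ℂ | 0 < z.im} := isOpen_lt continuous_const Complex.continuous_im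
      have : {z : ℂ | 0 < z.im} ∈ 𝓝 (z₀ + n) := hop.mem_nhds (by simpa using h0)
      exact eventually_of_mem this (fun w hw => hw)
    filter_upwards [htend.eventually hE, him] with w hw1 hw2
    have hfw : f (w - n + n) = f (w - n) := per_int hper n (w - n) (by simpa using hw2)
    have e : w - (n:ℂ) + n = w := by ring
    rw [e] at hfw
    rw [hfw, hw1]
    congr 2
    ring

lemma pole_S {f : ℂ → ℂ} {k : ℤ}
    (htrans : ∀ z : ℂ, 0 < z.im → f (-z⁻¹) = z ^ k * f z)
    {z₀ : ℂ} (h0 : 0 < z₀.im) {p : ℕ} (hp : IsPoleOfOrder f z₀ p) :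
    IsPoleOfOrder f (-z₀⁻¹) p := by
  obtain ⟨hp0, G, hG, hGne, hE⟩ := hp
  have hz₀ne : z₀ ≠ 0 := by intro hc; rw [hc] at h0; simp at h0
  set w₀ : ℂ := -z₀⁻¹ with hw₀def
  have hw₀ne : w₀ ≠ 0 := neg_ne_zero.2 (inv_ne_zero hz₀ne)
  have hφw₀ : -w₀⁻¹ = z₀ := by rw [hw₀def, inv_neg, inv_inv, neg_neg]
  have him0 : 0 < w₀.im := by
    rw [hw₀def]
    simp only [Complex.neg_im, Complex.inv_im, neg_div, neg_neg]
    exact div_pos h0 (Complex.normSq_pos.2 hz₀ne)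
  have hop : IsOpen {z : ℂ | 0 < z.im} := isOpen_lt continuous_const Complex.continuous_im
  have hφ : AnalyticAt ℂ (fun w : ℂ => -w⁻¹) w₀ := (analyticAt_id.inv hw₀ne).neg
  refine ⟨hp0, fun w => (-w⁻¹) ^ k * G (-w⁻¹) * (w * w₀) ^ p, ?_, ?_, ?_⟩
  · have A1 : AnalyticAt ℂ (fun w : ℂ => (-w⁻¹) ^ k) w₀ := by
      have hzne' : -w₀⁻¹ ≠ 0 := by rw [hφw₀]; exact hz₀ne
      have := AnalyticAt.fun_comp (𝕜 := ℂ) (g := fun u : ℂ => u ^ k) (f := fun w : ℂ => -w⁻¹)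
        (x := w₀) (analyticAt_zpow' hzne' k) hφ
      simpa [Function.comp] using this
    have A2 : AnalyticAt ℂ (fun w : ℂ => G (-w⁻¹)) w₀ := by
      have hGz : AnalyticAt ℂ G (-w₀⁻¹) := by rw [hφw₀]; exact hG
      have := AnalyticAt.fun_comp (𝕜 := ℂ) (g := G) (f := fun w : ℂ => -w⁻¹)
        (x := w₀) hGz hφ
      simpa [Function.comp] using this
    exact (A1.mul A2).mul ((analyticAt_id.mul analyticAt_const).pow p)
  · simp only [hφw₀]
    exact mul_ne_zero (mul_ne_zero (zpow_ne_zero _ hz₀ne) hGne)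
      (pow_ne_zero _ (mul_ne_zero hw₀ne hw₀ne))
  · have hne0 : ∀ᶠ w : ℂ in 𝓝[≠] w₀, w ≠ 0 := by
      apply Filter.Eventually.filter_mono nhdsWithin_le_nhds
      exact eventually_of_mem (isOpen_compl_singleton.mem_nhds hw₀ne) (fun w hw => hw)
    have hwne : ∀ᶠ w : ℂ in 𝓝[≠] w₀, w ≠ w₀ := by
      filter_upwards [eventually_mem_nhdsWithin] with w hw
      simpa using hw
    have htd : Tendsto (fun w : ℂ => -w⁻¹) (𝓝[≠] w₀) (𝓝 z₀) := by
      have h5 : Tendsto (fun w : ℂ => -w⁻¹) (𝓝[≠] w₀) (𝓝 (-w₀⁻¹)) :=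
        hφ.continuousAt.tendsto.mono_left (nhdsWithin_le_nhds (s := {w₀}ᶜ))
      rwa [hφw₀] at h5
    have him : ∀ᶠ w : ℂ in 𝓝[≠] w₀, 0 < (-w⁻¹).im :=
      htd.eventually (eventually_of_mem (hop.mem_nhds h0) (fun u hu => hu))
    have hne_z : ∀ᶠ w : ℂ in 𝓝[≠] w₀, -w⁻¹ ∈ ({z₀}ᶜ : Set ℂ) := by
      filter_upwards [hne0, hwne] with w h1 h2
      simp only [Set.mem_compl_iff, Set.mem_singleton_iff]
      intro hc
      apply h2
      have h5 : -w⁻¹ = -w₀⁻¹ := hc.trans hφw₀.symm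
      exact inv_injective (neg_injective h5)
    have htd' : Tendsto (fun w : ℂ => -w⁻¹) (𝓝[≠] w₀) (𝓝[≠] z₀) :=
      tendsto_nhdsWithin_iff.2 ⟨htd, hne_z⟩
    filter_upwards [hne0, hwne, him, htd'.eventually hE] with w h1 h2 h3 h4
    have ht := htrans (-w⁻¹) h3
    have e : -(-w⁻¹)⁻¹ = w := by rw [inv_neg, inv_inv, neg_neg]
    rw [e] at ht
    rw [ht, h4]
    have key : -w⁻¹ - z₀ = (w - w₀) / (w * w₀) := by
      rw [← hφw₀]
      field_simp
      ring
    rw [key, div_pow]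
    have hsub : (w - w₀) ≠ 0 := sub_ne_zero.2 h2
    field_simp


set_option maxHeartbeats 4000000

/-- Hagedorn growth of the Fourier coefficients of a meromorphic
modular form `f = g/h` with a pole in the upper half-plane: if `t` is the maximal
imaginary part of a pole of `f` in the strip `|Re τ| ≤ 1/2` and `p` the maximal
order among poles at that height, then `t ≥ √3/2` and there is `C > 0` such that
for every `ε > 0` infinitely many positive `n` satisfy
`C n^(p-1) e^(2πnt) ≤ |c(n)| ≤ e^(2πn(t+ε))`. -/
theorem stmt_0 (k₁ k₂ k : ℤ) (g h f : ℂ → ℂ)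
    (hg : IsModularForm k₁ g) (hh : IsModularForm k₂ h)
    (hhne : ∃ z : ℂ, 0 < z.im ∧ h z ≠ 0)
    (hk : k = k₁ - k₂)
    (hf : ∀ z : ℂ, f z = g z / h z)
    (hpole : ∃ z : ℂ, 0 < z.im ∧ IsPole f z)
    (c : ℤ → ℂ) (N : ℤ)
    (hfour : ∀ τ : ℂ, 0 < τ.im →
      (∀ z : ℂ, 0 < z.im → IsPole f z → z.im < τ.im) →
      Summable (fun n : ℕ => ‖c (N + n) * Complex.exp (2 * π * I * ((N : ℂ) + n) * τ)‖) ∧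
      f τ = ∑' n : ℕ, c (N + n) * Complex.exp (2 * π * I * ((N : ℂ) + n) * τ))
    (τstar : ℂ) (hτ1 : 0 < τstar.im) (hτ2 : IsPole f τstar)
    (hτ3 : |τstar.re| ≤ 1 / 2)
    (t : ℝ) (ht : t = τstar.im)
    (htmax : ∀ z : ℂ, 0 < z.im → |z.re| ≤ 1 / 2 → IsPole f z → z.im ≤ t)
    (p : ℕ) (hp1 : 1 ≤ p)
    (hpex : ∃ z : ℂ, 0 < z.im ∧ z.im = t ∧ IsPoleOfOrder f z p)
    (hpmax : ∀ z : ℂ, 0 < z.im → z.im = t → ∀ m : ℕ, IsPoleOfOrder f z m → m ≤ p) :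
    Real.sqrt 3 / 2 ≤ t ∧
    ∃ C : ℝ, 0 < C ∧ ∀ ε : ℝ, 0 < ε →
      {n : ℕ | 0 < n ∧
        C * (n : ℝ) ^ (p - 1) * Real.exp (2 * π * n * t) ≤ ‖c (n : ℤ)‖ ∧
        ‖c (n : ℤ)‖ ≤ Real.exp (2 * π * n * (t + ε))}.Infinite := by
  have ht0 : 0 < t := by rw [ht]; exact hτ1
  -- basic transformation laws for f
  have hfper : ∀ z : ℂ, 0 < z.im → f (z + 1) = f z := by
    intro z hz
    rw [hf, hf, hg.2.1 z hz, hh.2.1 z hz]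
  have hftrans : ∀ z : ℂ, 0 < z.im → f (-z⁻¹) = z ^ k * f z := by
    intro z hz
    have hzne : z ≠ 0 := by intro hc; rw [hc] at hz; simp at hz
    rw [hf, hf, hg.2.2.1 z hz, hh.2.2.1 z hz, hk, mul_div_mul_comm, ← zpow_sub₀ hzne]
  -- every pole has imaginary part at most t
  have hallpoles : ∀ z : ℂ, 0 < z.im → IsPole f z → z.im ≤ t := by
    intro z hz hpz
    obtain ⟨q, hq⟩ := hpz
    set n : ℤ := -round z.re with hndef
    have h1 : IsPoleOfOrder f (z + n) q := pole_shift hfper n hz hq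
    have h2 : 0 < (z + (n:ℂ)).im := by simpa using hz
    have h3 : |(z + (n:ℂ)).re| ≤ 1 / 2 := by
      have : (z + (n:ℂ)).re = z.re - round z.re := by
        simp [hndef]
        ring
      rw [this]
      exact abs_sub_round z.re
    have := htmax _ h2 h3 ⟨q, h1⟩
    simpa using this
  -- the √3/2 bound
  have hsqrt : Real.sqrt 3 / 2 ≤ t := by
    have hτne : τstar ≠ 0 := by intro hc; rw [hc] at hτ1; simp at hτ1
    have hnorm : 1 ≤ Complex.normSq τstar := by
      by_contra hc
      push_neg at hc
      obtain ⟨q, hq⟩ := hτ2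
      have hS : IsPoleOfOrder f (-τstar⁻¹) q := pole_S hftrans hτ1 hq
      have hnpos : 0 < Complex.normSq τstar := Complex.normSq_pos.2 hτne
      have h1 : (-τstar⁻¹).im = τstar.im / Complex.normSq τstar := by
        simp [Complex.inv_im, neg_div]
      have him : t < (-τstar⁻¹).im := by
        rw [h1, ht, lt_div_iff₀ hnpos]
        nlinarith
      have hzim : 0 < (-τstar⁻¹).im := lt_trans ht0 him
      exact absurd (hallpoles _ hzim ⟨q, hS⟩) (not_le.2 him)
    have h4 : 1 ≤ τstar.re ^ 2 + τstar.im ^ 2 := by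
      have := Complex.normSq_apply τstar
      nlinarith
    have h5 : τstar.re ^ 2 ≤ 1 / 4 := by
      have := abs_le.1 hτ3
      nlinarith
    have h6 : 3 / 4 ≤ t ^ 2 := by rw [ht]; nlinarith
    nlinarith [Real.sq_sqrt (by norm_num : (0:ℝ) ≤ 3), Real.sqrt_nonneg 3]
  refine ⟨hsqrt, ?_⟩
  -- the Fourier expansion is available above height t
  have hT : ∀ τ : ℂ, t < τ.im →
      Summable (fun n : ℕ => ‖c (N + n) * Complex.exp (2 * π * I * ((N : ℂ) + n) * τ)‖) ∧
      f τ = ∑' n : ℕ, c (N + n) * Complex.exp (2 * π * I * ((N : ℂ) + n) * τ) := by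
    intro τ hτ
    exact hfour τ (lt_trans ht0 hτ)
      (fun z hz hpz => lt_of_le_of_lt (hallpoles z hz hpz) hτ)
  -- norm of a Fourier summand
  have hsummand : ∀ (n : ℕ) (τ : ℂ),
      ‖c (N + n) * Complex.exp (2 * π * I * ((N : ℂ) + n) * τ)‖
        = ‖c (N + n)‖ * Real.exp (-(2 * π * ((N : ℝ) + n) * τ.im)) := by
    intro n τ
    rw [norm_mul]
    congr 1
    have he : (2 * (π:ℂ) * I * ((N : ℂ) + n) * τ)
        = 2 * π * I * ((((N : ℝ) + n : ℝ)) : ℂ) * τ := by push_cast; ring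
    rw [he, norm_exp_aux]
  -- the upper bound claim
  have hupper : ∀ ε : ℝ, 0 < ε → ∃ n₀ : ℕ, ∀ n : ℕ, n₀ ≤ n →
      ‖c (n : ℤ)‖ ≤ Real.exp (2 * π * n * (t + ε)) := by
    intro ε hε
    set s : ℝ := t + ε / 2 with hsdef
    set τ : ℂ := ((s : ℝ) : ℂ) * I with hτdef
    have hτim : τ.im = s := by simp [hτdef]
    have hsm := (hT τ (by rw [hτim, hsdef]; linarith)).1
    have hs' : Summable (fun n : ℕ => ‖c (N + n)‖ * Real.exp (-(2 * π * ((N:ℝ) + n) * s))) :=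
      (summable_congr (fun n => by rw [hsummand n τ, hτim])).1 hsm
    have hto := hs'.tendsto_atTop_zero
    have hev : ∀ᶠ n : ℕ in atTop,
        ‖c (N + n)‖ * Real.exp (-(2 * π * ((N:ℝ) + n) * s)) < 1 :=
      hto.eventually (gt_mem_nhds one_pos)
    obtain ⟨n₂, hn₂⟩ := eventually_atTop.1 hev
    refine ⟨(N + n₂).toNat + 1, ?_⟩
    intro n hn
    have h1 : N + (n₂:ℤ) ≤ (N + n₂).toNat := Int.self_le_toNat _
    have hnN : N + (n₂:ℤ) < (n:ℤ) := by
      have h2 : ((N + n₂).toNat + 1 : ℤ) ≤ (n:ℤ) := by exact_mod_cast hn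
      omega
    set j : ℕ := ((n:ℤ) - N).toNat with hjdef
    have hjN : N + (j:ℤ) = (n:ℤ) := by omega
    have hjge : n₂ ≤ j := by omega
    have h2 := hn₂ j hjge
    rw [show N + (j:ℤ) = (n:ℤ) from hjN] at h2
    have hreq : (N:ℝ) + j = (n:ℝ) := by exact_mod_cast congrArg (Int.cast : ℤ → ℝ) hjN
    rw [hreq] at h2
    have hepos := Real.exp_pos (2 * π * (n:ℝ) * s)
    have hinv : Real.exp (-(2 * π * (n:ℝ) * s)) * Real.exp (2 * π * (n:ℝ) * s) = 1 := by
      rw [← Real.exp_add]; simp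
    have h4 := mul_lt_mul_of_pos_right h2 hepos
    rw [one_mul, mul_assoc, hinv, mul_one] at h4
    have h5 : Real.exp (2 * π * (n:ℝ) * s) ≤ Real.exp (2 * π * n * (t + ε)) := by
      apply Real.exp_le_exp.2
      have hn0 : (0:ℝ) ≤ (n:ℝ) := Nat.cast_nonneg n
      rw [hsdef]
      nlinarith [Real.pi_pos, mul_nonneg (mul_nonneg (le_of_lt Real.pi_pos) hn0) (le_of_lt hε)]
    exact le_trans (le_of_lt h4) h5
  -- setup pole data at height t
  obtain ⟨z₁, hz₁im, hz₁t, hz₁p⟩ := hpex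
  obtain ⟨hp0, G, hG, hGne, hE⟩ := hz₁p
  have hGpos : 0 < ‖G z₁‖ := norm_pos_iff.2 hGne
  set D : ℝ := (Nat.factorial (p - 1) : ℝ) with hDdef
  have hDpos : 0 < D := by
    rw [hDdef]; exact_mod_cast Nat.factorial_pos _
  set C : ℝ := ‖G z₁‖ * π ^ p / (100 * D) with hCdef
  have hCpos : 0 < C :=
    div_pos (mul_pos hGpos (pow_pos Real.pi_pos p)) (by positivity)
  refine ⟨C, hCpos, ?_⟩
  intro ε hε
  by_contra hfin
  rw [Set.not_infinite] at hfin
  obtain ⟨n₀, hn₀⟩ := hupper ε hε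
  obtain ⟨b, hb⟩ := hfin.bddAbove
  obtain ⟨n₁, h1n₁, hbn₁, hn₀n₁⟩ : ∃ n₁ : ℕ, 1 ≤ n₁ ∧ b + 1 ≤ n₁ ∧ n₀ ≤ n₁ :=
    ⟨max (max n₀ 1) (b + 1), le_trans (le_max_right n₀ 1) (le_max_left _ _),
      le_max_right _ _, le_trans (le_max_left n₀ 1) (le_max_left _ _)⟩
  have hstar : ∀ n : ℕ, n₁ ≤ n →
      ‖c (n:ℤ)‖ < C * (n:ℝ) ^ (p - 1) * Real.exp (2 * π * n * t) := by
    intro n hn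
    by_contra hcn
    push_neg at hcn
    have hnpos : 0 < n := lt_of_lt_of_le (lt_of_lt_of_le one_pos h1n₁) hn
    have hn₀n : n₀ ≤ n := le_trans hn₀n₁ hn
    have hmem : n ∈ {n : ℕ | 0 < n ∧
        C * (n : ℝ) ^ (p - 1) * Real.exp (2 * π * n * t) ≤ ‖c (n : ℤ)‖ ∧
        ‖c (n : ℤ)‖ ≤ Real.exp (2 * π * n * (t + ε))} := ⟨hnpos, hcn, hn₀ n hn₀n⟩
    have hble : n ≤ b := hb hmem
    have : b + 1 ≤ n := le_trans hbn₁ hn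
    omega
  have hstarZ : ∀ m : ℤ, (n₁:ℤ) ≤ m →
      ‖c m‖ ≤ C * (m:ℝ) ^ (p - 1) * Real.exp (2 * π * (m:ℝ) * t) := by
    intro m hm
    have hm0 : 0 ≤ m := le_trans (by exact_mod_cast Nat.zero_le n₁) hm
    have hmn : ((m.toNat : ℤ)) = m := Int.toNat_of_nonneg hm0
    have h2 : n₁ ≤ m.toNat := by omega
    have h3 := le_of_lt (hstar m.toNat h2)
    rw [← hmn]
    push_cast
    push_cast at h3
    exact h3
  -- index threshold
  obtain ⟨j₀, hj₀a, hj₀b⟩ : ∃ j₀ : ℕ, (n₁:ℤ) ≤ N + (j₀:ℤ) ∧ 1 ≤ N + (j₀:ℤ) := by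
    refine ⟨((n₁:ℤ) - N).toNat + 1, ?_, ?_⟩ <;>
      · have h1 : (n₁:ℤ) - N ≤ ((n₁:ℤ) - N).toNat := Int.self_le_toNat _
        push_cast
        omega
  have hjbig : ∀ i : ℕ, (n₁:ℤ) ≤ N + ((i:ℤ) + j₀) ∧ 1 ≤ N + ((i:ℤ) + j₀) := by
    intro i
    constructor <;> [skip; skip] <;> omega
  -- head bound
  set B : ℝ := ∑ i ∈ Finset.range j₀,
      ‖c (N + i)‖ * Real.exp (2 * π * |(N:ℝ) + i| * (t + 1)) with hBdef
  have hBnonneg : 0 ≤ B := Finset.sum_nonneg (fun i _ => by positivity)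
  -- choose y
  obtain ⟨δ, hδpos, hδ⟩ := Metric.mem_nhdsWithin_iff.1 hE
  have hGc : ContinuousAt G z₁ := hG.continuousAt
  obtain ⟨δ₂, hδ₂pos, hδ₂⟩ := Metric.continuousAt_iff.1 hGc (‖G z₁‖ / 2) (by positivity)
  set y : ℝ := min (min (δ / 2) (δ₂ / 2)) (min (1 / 4) (‖G z₁‖ / (8 * (B + 1)))) with hydef
  have hypos : 0 < y := by
    rw [hydef]
    exact lt_min (lt_min (by linarith) (by linarith)) (lt_min (by norm_num) (by positivity))
  have hy14 : y ≤ 1 / 4 := le_trans (min_le_right _ _) (min_le_left _ _)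
  have hyδ : y < δ := lt_of_le_of_lt (le_trans (min_le_left _ _) (min_le_left _ _)) (by linarith)
  have hyδ₂ : y < δ₂ := lt_of_le_of_lt (le_trans (min_le_left _ _) (min_le_right _ _)) (by linarith)
  have hyB : y ≤ ‖G z₁‖ / (8 * (B + 1)) := le_trans (min_le_right _ _) (min_le_right _ _)
  have hy1 : y ≤ 1 := by linarith
  set σ : ℝ := t + y with hσdef
  have hσt : t < σ := by rw [hσdef]; linarith
  have hσpos : 0 < σ := by linarith
  have hσle : σ ≤ t + 1 := by rw [hσdef]; linarith
  set τσ : ℂ := (z₁.re : ℂ) + (σ : ℝ) * I with hτσdef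
  have hτσim : τσ.im = σ := by simp [hτσdef]
  have hτσsub : τσ - z₁ = (y : ℂ) * I := by
    apply Complex.ext
    · simp [hτσdef]
    · simp only [Complex.sub_im, hτσim, Complex.mul_im, Complex.ofReal_re, Complex.I_im,
        Complex.ofReal_im, Complex.I_re, mul_zero, mul_one, zero_mul]
      rw [hσdef, hz₁t]
      ring
  have hdist : dist τσ z₁ = y := by
    rw [dist_eq_norm, hτσsub, norm_mul, Complex.norm_I, mul_one, Complex.norm_real,
      Real.norm_eq_abs, abs_of_pos hypos]
  have hτσne : τσ ≠ z₁ := by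
    intro hc
    rw [hc, dist_self] at hdist
    exact (ne_of_gt hypos) hdist.symm
  have hfτσ : f τσ = G τσ / (τσ - z₁) ^ p := by
    apply hδ
    exact ⟨Metric.mem_ball.2 (by rw [hdist]; exact hyδ), hτσne⟩
  have hGlb : ‖G z₁‖ / 2 ≤ ‖G τσ‖ := by
    have h1 := hδ₂ (by rw [hdist]; exact hyδ₂)
    have h2 : ‖G z₁‖ - ‖G τσ‖ ≤ ‖G z₁ - G τσ‖ := norm_sub_norm_le _ _
    have h3 : ‖G z₁ - G τσ‖ = dist (G τσ) (G z₁) := by rw [dist_comm, dist_eq_norm]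
    rw [h3] at h2
    linarith
  -- Fourier expansion at τσ
  obtain ⟨hsm, heq⟩ := hT τσ (by rw [hτσim]; exact hσt)
  set a : ℕ → ℝ := fun n => ‖c (N + n)‖ * Real.exp (-(2 * π * ((N:ℝ) + n) * σ)) with hadef
  have haeq : ∀ n : ℕ,
      ‖c (N + n) * Complex.exp (2 * π * I * ((N:ℂ) + n) * τσ)‖ = a n := fun n => by
    rw [hsummand n τσ, hτσim]
  have hasum : Summable a := (summable_congr haeq).1 hsm
  have hfle : ‖f τσ‖ ≤ ∑' n, a n := by
    rw [heq]
    exact le_trans (norm_tsum_le_tsum_norm hsm) (le_of_eq (tsum_congr haeq))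
  have hsplit := Summable.sum_add_tsum_nat_add j₀ hasum
  have htails : Summable (fun i : ℕ => a (i + j₀)) := (summable_nat_add_iff j₀).2 hasum
  -- head estimate
  have hhead : ∑ i ∈ Finset.range j₀, a i ≤ B := by
    rw [hBdef]
    apply Finset.sum_le_sum
    intro i _
    simp only [hadef]
    apply mul_le_mul_of_nonneg_left _ (norm_nonneg _)
    apply Real.exp_le_exp.2
    have hx1 : 0 ≤ 2 * π * (|(N:ℝ) + i| + ((N:ℝ) + i)) * σ := by
      have h3 : (0:ℝ) ≤ |(N:ℝ) + i| + ((N:ℝ) + i) := by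
        have := neg_abs_le ((N:ℝ) + i); linarith
      have h2π : (0:ℝ) ≤ 2 * π := by positivity
      exact mul_nonneg (mul_nonneg h2π h3) hσpos.le
    have hx2 : 2 * π * |(N:ℝ) + i| * σ ≤ 2 * π * |(N:ℝ) + i| * (t + 1) := by
      apply mul_le_mul_of_nonneg_left hσle
      positivity
    nlinarith
  -- tail estimate
  have hvpos : 0 < π * y := mul_pos Real.pi_pos hypos
  set r : ℝ := Real.exp (-(π * y)) with hrdef
  have hr0 : 0 ≤ r := le_of_lt (Real.exp_pos _)
  have hr1 : r < 1 := by
    rw [hrdef]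
    exact Real.exp_lt_one_iff.2 (neg_lt_zero.2 hvpos)
  set M : ℝ := C * D / (π * y) ^ (p - 1) * r with hMdef
  have hMnonneg : 0 ≤ M := by
    rw [hMdef]
    apply mul_nonneg _ hr0
    positivity
  have htailterm : ∀ i : ℕ, a (i + j₀) ≤ M * r ^ i := by
    intro i
    obtain ⟨hge1, hge2⟩ := hjbig i
    set x : ℝ := (N:ℝ) + ((i + j₀ : ℕ) : ℝ) with hxdef
    have hxcast : ((N + ((i + j₀ : ℕ) : ℤ) : ℤ) : ℝ) = x := by rw [hxdef]; push_cast; ring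
    have hx1 : (1:ℝ) + i ≤ x := by
      rw [hxdef]
      push_cast
      have h9 : (1:ℝ) ≤ (N:ℝ) + ((j₀:ℝ)) := by exact_mod_cast hj₀b
      linarith
    have hx0 : 0 ≤ x := by linarith [Nat.cast_nonneg (α := ℝ) i]
    have hc1 : ‖c (N + ((i + j₀ : ℕ) : ℤ))‖ ≤ C * x ^ (p - 1) * Real.exp (2 * π * x * t) := by
      have := hstarZ (N + ((i + j₀ : ℕ) : ℤ)) (by exact_mod_cast (by omega : (n₁:ℤ) ≤ N + ((i:ℤ) + (j₀:ℤ))))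
      rw [hxcast] at this
      exact this
    have hstep1 : a (i + j₀) ≤ C * x ^ (p - 1) * Real.exp (2 * π * x * t) *
        Real.exp (-(2 * π * x * σ)) := by
      simp only [hadef]
      have hxeq : (N:ℝ) + ((i + j₀ : ℕ) : ℝ) = x := rfl
      rw [hxeq]
      exact mul_le_mul_of_nonneg_right hc1 (le_of_lt (Real.exp_pos _))
    have hexp1 : Real.exp (2 * π * x * t) * Real.exp (-(2 * π * x * σ))
        = Real.exp (-(2 * π * x * y)) := by
      rw [← Real.exp_add, hσdef]
      congr 1
      ring
    have hpow : x ^ (p - 1) ≤ D * Real.exp (π * y * x) / (π * y) ^ (p - 1) := by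
      have hbase := Real.pow_div_factorial_le_exp (x := π * y * x) (mul_nonneg (le_of_lt hvpos) hx0) (p - 1)
      rw [div_le_iff₀ (by exact_mod_cast Nat.factorial_pos (p-1) : (0:ℝ) < ((p-1).factorial : ℝ))] at hbase
      rw [le_div_iff₀ (pow_pos hvpos _), hDdef]
      have h2 : (π * y * x) ^ (p - 1) = (π * y) ^ (p - 1) * x ^ (p - 1) := mul_pow _ _ _
      have h3 : x ^ (p - 1) * (π * y) ^ (p - 1) = (π * y) ^ (p - 1) * x ^ (p - 1) := mul_comm _ _
      have h4 : (((p-1).factorial : ℕ) : ℝ) * Real.exp (π * y * x)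
          = Real.exp (π * y * x) * (((p-1).factorial : ℕ) : ℝ) := mul_comm _ _
      linarith
    have hstep2 : a (i + j₀) ≤ C * D / (π * y) ^ (p - 1) *
        (Real.exp (π * y * x) * Real.exp (-(2 * π * x * y))) := by
      calc a (i + j₀) ≤ C * x ^ (p - 1) * Real.exp (2 * π * x * t) *
          Real.exp (-(2 * π * x * σ)) := hstep1
        _ = C * x ^ (p - 1) * Real.exp (-(2 * π * x * y)) := by
            rw [mul_assoc, hexp1]
        _ ≤ C * (D * Real.exp (π * y * x) / (π * y) ^ (p - 1)) *
            Real.exp (-(2 * π * x * y)) := by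
            apply mul_le_mul_of_nonneg_right _ (le_of_lt (Real.exp_pos _))
            exact mul_le_mul_of_nonneg_left hpow (le_of_lt hCpos)
        _ = C * D / (π * y) ^ (p - 1) *
            (Real.exp (π * y * x) * Real.exp (-(2 * π * x * y))) := by ring
    have hexp2 : Real.exp (π * y * x) * Real.exp (-(2 * π * x * y))
        = Real.exp (-(π * x * y)) := by
      rw [← Real.exp_add]
      congr 1
      ring
    have hexp3 : Real.exp (-(π * x * y)) ≤ r * r ^ i := by
      have h1 : -(π * x * y) ≤ -(π * y) + (i:ℝ) * (-(π * y)) := by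
        have h5 : π * (1 + (i:ℝ)) * y ≤ π * x * y := mul_le_mul_of_nonneg_right
          (mul_le_mul_of_nonneg_left hx1 (le_of_lt Real.pi_pos)) (le_of_lt hypos)
        have h6 : -(π * y) + (i:ℝ) * (-(π * y)) = -(π * (1 + (i:ℝ)) * y) := by ring
        rw [h6]
        linarith
      calc Real.exp (-(π * x * y)) ≤ Real.exp (-(π * y) + (i:ℝ) * (-(π * y))) :=
            Real.exp_le_exp.2 h1
        _ = r * r ^ i := by
            rw [Real.exp_add, hrdef, Real.exp_nat_mul]
    calc a (i + j₀) ≤ C * D / (π * y) ^ (p - 1) *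
        (Real.exp (π * y * x) * Real.exp (-(2 * π * x * y))) := hstep2
      _ = C * D / (π * y) ^ (p - 1) * Real.exp (-(π * x * y)) := by rw [hexp2]
      _ ≤ C * D / (π * y) ^ (p - 1) * (r * r ^ i) := by
          apply mul_le_mul_of_nonneg_left hexp3
          exact div_nonneg (mul_nonneg hCpos.le hDpos.le) (pow_nonneg hvpos.le _)
      _ = M * r ^ i := by simp only [hMdef]; ring
  have htail : ∑' i : ℕ, a (i + j₀) ≤ M * (1 - r)⁻¹ := by
    have h := Summable.tsum_le_tsum htailterm htails ((summable_geometric_of_lt_one hr0 hr1).mul_left M)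
    rwa [tsum_mul_left, tsum_geometric_of_lt_one hr0 hr1] at h
  -- lower bound for 1 - r
  have hrlb : π * y / 3 ≤ 1 - r := by
    have hv1 : π * y ≤ 1 := by
      have h5 : π * y ≤ 4 * y := mul_le_mul_of_nonneg_right Real.pi_le_four hypos.le
      linarith
    set E : ℝ := Real.exp (π * y) with hEdef
    have hEpos : 0 < E := Real.exp_pos _
    have hrE : r * E = 1 := by
      rw [hrdef, hEdef, ← Real.exp_add]
      simp
    have he1 : π * y + 1 ≤ E := Real.add_one_le_exp _
    have he3 : E ≤ Real.exp 1 := Real.exp_le_exp.2 hv1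
    have he4 : Real.exp 1 < 3 := lt_trans Real.exp_one_lt_d9 (by norm_num)
    have hrpos : 0 < r := Real.exp_pos _
    have hr13 : (1:ℝ) / 3 ≤ r := by
      have h5 : r * E < r * 3 := by
        apply mul_lt_mul_of_pos_left (lt_of_le_of_lt he3 he4) hrpos
      rw [hrE] at h5
      linarith
    have h6 : π * y ≤ E - 1 := by linarith
    have h7 : r * (π * y) ≤ r * (E - 1) := mul_le_mul_of_nonneg_left h6 hr0
    have h8 : r * (E - 1) = 1 - r := by
      have h9 : r * E - r = 1 - r := by rw [hrE]
      linarith [h9]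
    have h10 : (1/3:ℝ) * (π * y) ≤ r * (π * y) := mul_le_mul_of_nonneg_right hr13 hvpos.le
    linarith
  have hinvr : (1 - r)⁻¹ ≤ 3 / (π * y) := by
    have h1 : 0 < π * y / 3 := by positivity
    have h2 : 0 < 1 - r := lt_of_lt_of_le h1 hrlb
    have h3 : (1 - r)⁻¹ ≤ (π * y / 3)⁻¹ := by
      apply inv_anti₀ h1 hrlb
    calc (1 - r)⁻¹ ≤ (π * y / 3)⁻¹ := h3
      _ = 3 / (π * y) := by rw [inv_div]
  -- put everything together
  have hfnorm : ‖f τσ‖ = ‖G τσ‖ / y ^ p := by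
    rw [hfτσ, norm_div, norm_pow, hτσsub, norm_mul, Complex.norm_I, mul_one,
      Complex.norm_real, Real.norm_eq_abs, abs_of_pos hypos]
  have h20 : ‖G τσ‖ / y ^ p ≤ B + M * (3 / (π * y)) := by
    have h21 : M * (1 - r)⁻¹ ≤ M * (3 / (π * y)) := mul_le_mul_of_nonneg_left hinvr hMnonneg
    calc ‖G τσ‖ / y ^ p = ‖f τσ‖ := hfnorm.symm
      _ ≤ ∑' n, a n := hfle
      _ = (∑ i ∈ Finset.range j₀, a i) + ∑' i, a (i + j₀) := hsplit.symm
      _ ≤ B + M * (1 - r)⁻¹ := add_le_add hhead htail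
      _ ≤ B + M * (3 / (π * y)) := by linarith
  have hyppos : 0 < y ^ p := pow_pos hypos p
  have h22 : ‖G τσ‖ ≤ B * y ^ p + M * (3 / (π * y)) * y ^ p := by
    have h23 := mul_le_mul_of_nonneg_right h20 hyppos.le
    rw [div_mul_cancel₀ _ (ne_of_gt hyppos)] at h23
    calc ‖G τσ‖ ≤ (B + M * (3 / (π * y))) * y ^ p := h23
      _ = B * y ^ p + M * (3 / (π * y)) * y ^ p := by ring
  have hppred : p - 1 + 1 = p := Nat.succ_pred_eq_of_pos hp0
  have hy0 : y ≠ 0 := ne_of_gt hypos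
  have hπ0 : π ≠ 0 := ne_of_gt Real.pi_pos
  have hD0 : D ≠ 0 := ne_of_gt hDpos
  have e1 : (π * y) ^ (p - 1) * (π * y) = π ^ p * y ^ p := by
    rw [← pow_succ, hppred, mul_pow]
  have e4 : y ^ p / ((π * y) ^ (p - 1) * (π * y)) = 1 / π ^ p := by
    rw [e1, div_eq_div_iff (by positivity) (by positivity)]
    ring
  have hMeq : M * (3 / (π * y)) * y ^ p
      = 3 * C * D * r * (y ^ p / ((π * y) ^ (p - 1) * (π * y))) := by
    simp only [hMdef]
    ring
  have h40 : M * (3 / (π * y)) * y ^ p = 3 * C * D * r * (1 / π ^ p) := by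
    rw [hMeq, e4]
  have h3CD : 0 ≤ 3 * C * D := mul_nonneg (mul_nonneg (by norm_num) hCpos.le) hDpos.le
  have h41 : 3 * C * D * r * (1 / π ^ p) ≤ 3 * C * D * 1 * (1 / π ^ p) := by
    apply mul_le_mul_of_nonneg_right _ (by positivity)
    calc 3 * C * D * r ≤ 3 * C * D * 1 := by
          exact mul_le_mul_of_nonneg_left hr1.le h3CD
      _ = 3 * C * D * 1 := rfl
  have h42 : 3 * C * D * 1 * (1 / π ^ p) = 3 * ‖G z₁‖ / 100 := by
    simp only [hCdef]
    field_simp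
  have hMle : M * (3 / (π * y)) * y ^ p ≤ 3 * ‖G z₁‖ / 100 := by
    rw [h40, ← h42]
    exact h41
  have hyple : y ^ p ≤ y := by
    have h30 := pow_le_pow_of_le_one hypos.le hy1 hp1
    simpa using h30
  have h31 : B * y ^ p ≤ B * y := mul_le_mul_of_nonneg_left hyple hBnonneg
  have h32 : B * y ≤ B * (‖G z₁‖ / (8 * (B + 1))) := mul_le_mul_of_nonneg_left hyB hBnonneg
  have h33 : B * (‖G z₁‖ / (8 * (B + 1))) ≤ ‖G z₁‖ / 8 := by
    rw [← mul_div_assoc, div_le_div_iff₀ (by positivity) (by norm_num)]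
    linarith [hGpos.le]
  have hchain : ‖G z₁‖ / 2 ≤ ‖G z₁‖ / 8 + 3 * ‖G z₁‖ / 100 := by
    calc ‖G z₁‖ / 2 ≤ ‖G τσ‖ := hGlb
      _ ≤ B * y ^ p + M * (3 / (π * y)) * y ^ p := h22
      _ ≤ ‖G z₁‖ / 8 + 3 * ‖G z₁‖ / 100 := by linarith
  linarith
end

section
/- Let f be a meromorphic function on the upper half-plane ℍ with f(τ+1) = f(τ), having at least one pole, having only finitely many poles in each set {τ ∈ ℍ : |Re τ| ≤ 1/2, Im τ ≥ δ} for every δ > 0, and whose poles have bounded imaginary parts. Let t₀ be the maximal imaginary part of a pole of f, let m₀ be the maximal order among the poles of f with imaginary part t₀, and let c : ℤ → ℂ and N ∈ ℤ be such that f(τ) = Σ_{n ≥ N} c(n) e^{2πinτ} (absolutely convergent) for all τ with Im τ > t₀. Then there exists a constant C > 0 such that |c(n)| > C · n^{m₀−1} · e^{2πn t₀} for infinitely many positive integers n. -/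
open Complex Real Filter Topology

set_option maxHeartbeats 2000000

private lemma aux_pow_exp (j : ℕ) (a t : ℝ) (ha : 0 < a) (ht : 0 ≤ t) :
    t ^ j * Real.exp (-(a * t)) ≤ (j.factorial : ℝ) / a ^ j := by
  have h := Real.pow_div_factorial_le_exp (a * t) (by positivity) j
  have h2 : (a * t) ^ j ≤ (j.factorial : ℝ) * Real.exp (a * t) := by
    rw [div_le_iff₀ (by positivity : (0:ℝ) < (j.factorial : ℝ))] at h
    linarith [h]
  calc t ^ j * Real.exp (-(a * t))
      = ((a * t) ^ j * Real.exp (-(a * t))) / a ^ j := by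
        rw [mul_pow]; field_simp
    _ ≤ (((j.factorial : ℝ) * Real.exp (a * t)) * Real.exp (-(a * t))) / a ^ j := by
        gcongr
    _ = (j.factorial : ℝ) / a ^ j := by
        rw [mul_assoc, ← Real.exp_add]; simp

/-- if `f` is 1-periodic and meromorphic on the upper half-plane with
pole set `P` (nonempty, locally finite in truncated strips, with bounded imaginary
parts), `t₀` is the maximal imaginary part of a pole and `m₀` the maximal order at
that height, then the Fourier coefficients (for the expansion valid above height
`t₀`) satisfy `|c(n)| > C n^(m₀-1) e^(2πnt₀)` for infinitely many positive `n`. -/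
theorem stmt_2 (f : ℂ → ℂ) (P : Set ℂ)
    (hPsub : P ⊆ {z : ℂ | 0 < z.im})
    (hol : DifferentiableOn ℂ f ({z : ℂ | 0 < z.im} \ P))
    (hpoles : ∀ z ∈ P, IsPole f z)
    (hper : ∀ z : ℂ, 0 < z.im → f (z + 1) = f z)
    (hne : P.Nonempty)
    (hfin : ∀ δ : ℝ, 0 < δ →
      {z ∈ P | |z.re| ≤ 1 / 2 ∧ δ ≤ z.im}.Finite)
    (hbdd : BddAbove (Complex.im '' P))
    (t₀ : ℝ) (ht₀ : ∃ z ∈ P, z.im = t₀) (ht₀max : ∀ z ∈ P, z.im ≤ t₀)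
    (m₀ : ℕ) (hm₀ : ∃ z ∈ P, z.im = t₀ ∧ IsPoleOfOrder f z m₀)
    (hm₀max : ∀ z ∈ P, z.im = t₀ → ∀ m : ℕ, IsPoleOfOrder f z m → m ≤ m₀)
    (c : ℤ → ℂ) (N : ℤ)
    (hfour : ∀ τ : ℂ, t₀ < τ.im →
      Summable (fun n : ℕ => ‖c (N + n) * Complex.exp (2 * π * I * ((N : ℂ) + n) * τ)‖) ∧
      f τ = ∑' n : ℕ, c (N + n) * Complex.exp (2 * π * I * ((N : ℂ) + n) * τ)) :
    ∃ C : ℝ, 0 < C ∧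
      {n : ℕ | 0 < n ∧
        C * (n : ℝ) ^ (m₀ - 1) * Real.exp (2 * π * n * t₀) < ‖c (n : ℤ)‖}.Infinite := by
  by_contra hcon
  push_neg at hcon
  obtain ⟨z₀, hz₀P, hz₀im, hm₀pos, G, hG, hGne, hev⟩ := hm₀
  obtain ⟨g, hg⟩ : ∃ g : ℝ, g = ‖G z₀‖ := ⟨_, rfl⟩
  have hgpos : 0 < g := hg ▸ norm_pos_iff.mpr hGne
  obtain ⟨K, hKdef⟩ : ∃ K : ℝ, K = ((m₀ - 1).factorial : ℝ) := ⟨_, rfl⟩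
  have hKpos : (0:ℝ) < K := by rw [hKdef]; positivity
  obtain ⟨C, hCdef⟩ : ∃ C : ℝ, C = g / (4 * K) := ⟨_, rfl⟩
  have hCpos : 0 < C := by rw [hCdef]; positivity
  have hCK : C * K = g / 4 := by
    rw [hCdef]; field_simp
  -- finiteness of the exceptional set
  have hSfin : {n : ℕ | 0 < n ∧
      C * (n : ℝ) ^ (m₀ - 1) * Real.exp (2 * π * n * t₀) < ‖c (n : ℤ)‖}.Finite :=
    hcon C hCpos
  obtain ⟨n₀, hn₀⟩ := hSfin.bddAbove
  have hcoef : ∀ n : ℕ, n₀ < n →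
      ‖c (n : ℤ)‖ ≤ C * (n : ℝ) ^ (m₀ - 1) * Real.exp (2 * π * n * t₀) := by
    intro n hn
    by_contra hlt
    push_neg at hlt
    exact absurd (hn₀ ⟨by omega, hlt⟩) (not_le.mpr hn)
  -- pole-side neighborhood
  obtain ⟨δ, hδpos, hδ⟩ : ∃ δ > 0, ∀ z : ℂ, dist z z₀ < δ → z ≠ z₀ →
      f z = G z / (z - z₀) ^ m₀ ∧ g / 2 ≤ ‖G z‖ := by
    have h2 : ∀ᶠ z in 𝓝 z₀, g / 2 < ‖G z‖ :=
      hG.continuousAt.norm.eventually (eventually_gt_nhds (by linarith))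
    have h3 := hev.and (h2.filter_mono nhdsWithin_le_nhds)
    rw [Filter.Eventually, Metric.mem_nhdsWithin_iff] at h3
    obtain ⟨δ, hδ, h4⟩ := h3
    refine ⟨δ, hδ, fun z hz hzne => ?_⟩
    have := h4 ⟨Metric.mem_ball.mpr hz, hzne⟩
    exact ⟨this.1, this.2.le⟩
  -- set up the head of the series
  obtain ⟨M, hMdef⟩ : ∃ M : ℤ, M = max (max N 1) ((n₀ : ℤ) + 1) := ⟨_, rfl⟩
  have hNM : N ≤ M := hMdef ▸ le_trans (le_max_left N 1) (le_max_left _ _)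
  have hM1 : 1 ≤ M := hMdef ▸ le_trans (le_max_right N 1) (le_max_left _ _)
  have hMn₀ : (n₀ : ℤ) + 1 ≤ M := hMdef ▸ le_max_right _ _
  obtain ⟨k₀, hk₀def⟩ : ∃ k₀ : ℕ, k₀ = (M - N).toNat := ⟨_, rfl⟩
  have hk₀ : N + (k₀ : ℤ) = M := by
    rw [hk₀def, Int.toNat_of_nonneg (by linarith)]; ring
  obtain ⟨B, hBdef⟩ : ∃ B : ℝ, B = ∑ k ∈ Finset.range k₀,
      ‖c (N + k)‖ * Real.exp (-(2 * π * ((N:ℝ) + k) * t₀)) * Real.exp (2 * π * |(N:ℝ) + k|) :=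
    ⟨_, rfl⟩
  have hB0 : 0 ≤ B := hBdef ▸ Finset.sum_nonneg fun k _ => by positivity
  -- the key upper bound
  have key : ∀ ε : ℝ, 0 < ε → ε ≤ 1 → ‖f (z₀ + ε * I)‖ ≤ B + C * K / ε ^ m₀ := by
    intro ε hε hε1
    obtain ⟨τ, hτdef⟩ : ∃ τ : ℂ, τ = z₀ + (ε : ℂ) * I := ⟨_, rfl⟩
    rw [← hτdef]
    have hτim : τ.im = t₀ + ε := by simp [hτdef, hz₀im]
    obtain ⟨hsum, hfτ⟩ := hfour τ (by rw [hτim]; linarith)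
    have unorm : ∀ n : ℕ, ‖c (N + n) * Complex.exp (2 * π * I * ((N : ℂ) + n) * τ)‖
        = ‖c (N + n)‖ * Real.exp (-(2 * π * ((N:ℝ) + n) * (t₀ + ε))) := by
      intro n
      rw [← hτim, norm_mul]
      congr 1
      have h : 2 * (π:ℂ) * I * ((N : ℂ) + n) * τ
          = ((2 * π * ((N:ℝ) + n) : ℝ) : ℂ) * τ * I := by push_cast; ring
      rw [h, Complex.norm_exp]
      congr 1
      simp [Complex.mul_re, Complex.ofReal_mul]
    obtain ⟨v, hvdef⟩ : ∃ v : ℕ → ℝ,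
        ∀ n, v n = ‖c (N + n)‖ * Real.exp (-(2 * π * ((N:ℝ) + n) * (t₀ + ε))) :=
      ⟨_, fun _ => rfl⟩
    have hsumv : Summable v := hsum.congr fun n => (unorm n).trans (hvdef n).symm
    have h1 : ‖f τ‖ ≤ ∑' n, v n := by
      rw [hfτ]
      calc ‖∑' n : ℕ, c (N + n) * Complex.exp (2 * π * I * ((N : ℂ) + n) * τ)‖
          ≤ ∑' n : ℕ, ‖c (N + n) * Complex.exp (2 * π * I * ((N : ℂ) + n) * τ)‖ :=
            norm_tsum_le_tsum_norm hsum
        _ = ∑' n, v n := tsum_congr fun n => (unorm n).trans (hvdef n).symm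
    have hsplit : ∑' n, v n = (∑ i ∈ Finset.range k₀, v i) + ∑' i, v (i + k₀) :=
      (Summable.sum_add_tsum_nat_add k₀ hsumv).symm
    -- head bound
    have hhead : (∑ i ∈ Finset.range k₀, v i) ≤ B := by
      rw [hBdef]
      refine Finset.sum_le_sum fun i _ => ?_
      have hexp : Real.exp (-(2 * π * ((N:ℝ) + i) * (t₀ + ε)))
          = Real.exp (-(2 * π * ((N:ℝ) + i) * t₀)) * Real.exp (-(2 * π * ((N:ℝ) + i) * ε)) := by
        rw [← Real.exp_add]; ring_nf
      rw [hvdef i, hexp, ← mul_assoc]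
      gcongr ?_ * ?_
      · rw [Real.exp_le_exp]
        have e1 : 2 * π * (-((N:ℝ) + i)) ≤ 2 * π * |(N:ℝ) + i| :=
          mul_le_mul_of_nonneg_left (neg_le_abs _) (by positivity)
        have e2 := mul_le_mul_of_nonneg_right e1 hε.le
        have e3 : 2 * π * |(N:ℝ) + i| * ε ≤ 2 * π * |(N:ℝ) + i| * 1 :=
          mul_le_mul_of_nonneg_left hε1 (by positivity)
        nlinarith [e2, e3]
    -- tail bound
    obtain ⟨r, hrdef⟩ : ∃ r : ℝ, r = Real.exp (-(π * ε)) := ⟨_, rfl⟩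
    have hr0 : 0 < r := hrdef ▸ Real.exp_pos _
    have hr1 : r < 1 := hrdef ▸ Real.exp_lt_one_iff.mpr (by nlinarith [Real.pi_pos])
    obtain ⟨W, hWdef⟩ : ∃ W : ℝ, W = C * K / (π * ε) ^ (m₀ - 1) := ⟨_, rfl⟩
    have hW0 : 0 ≤ W := by rw [hWdef]; positivity
    have htail : ∀ i : ℕ, v (i + k₀) ≤ W * r ^ (i + 1) := by
      intro i
      have hn : N + ((i + k₀ : ℕ) : ℤ) = M + i := by push_cast; omega
      set nn : ℕ := (M + i).toNat with hnndef
      have hnn : (nn : ℤ) = M + i := Int.toNat_of_nonneg (by linarith [Int.ofNat_nonneg i])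
      have hnn₀ : n₀ < nn := by omega
      have hnni : (i : ℝ) + 1 ≤ (nn : ℝ) := by
        have : (i : ℤ) + 1 ≤ nn := by omega
        exact_mod_cast this
      have hcn : c (N + ((i + k₀ : ℕ) : ℤ)) = c (nn : ℤ) := by rw [hn, ← hnn]
      have hxr : (N:ℝ) + ((i + k₀ : ℕ) : ℝ) = (nn : ℝ) := by
        have h2 : N + ((i + k₀ : ℕ) : ℤ) = (nn : ℤ) := hn.trans hnn.symm
        exact_mod_cast congrArg (fun z : ℤ => (z : ℝ)) h2
      have hcoef' := hcoef nn hnn₀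
      have hnn0 : (0:ℝ) ≤ (nn:ℝ) := Nat.cast_nonneg _
      calc v (i + k₀)
          = ‖c (nn : ℤ)‖ * Real.exp (-(2 * π * (nn:ℝ) * (t₀ + ε))) := by
            rw [hvdef (i + k₀), hcn, hxr]
        _ ≤ (C * (nn : ℝ) ^ (m₀ - 1) * Real.exp (2 * π * nn * t₀))
              * Real.exp (-(2 * π * (nn:ℝ) * (t₀ + ε))) := by gcongr
        _ = C * ((nn : ℝ) ^ (m₀ - 1) * Real.exp (-(π * ε * (nn:ℝ))))
              * Real.exp (-(π * (nn:ℝ) * ε)) := by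
            have hsplitexp : Real.exp (2 * π * (nn:ℝ) * t₀)
                * Real.exp (-(2 * π * (nn:ℝ) * (t₀ + ε)))
                = Real.exp (-(π * ε * (nn:ℝ))) * Real.exp (-(π * (nn:ℝ) * ε)) := by
              rw [← Real.exp_add, ← Real.exp_add]; congr 1; ring
            calc C * (nn : ℝ) ^ (m₀ - 1) * Real.exp (2 * π * (nn:ℝ) * t₀)
                  * Real.exp (-(2 * π * (nn:ℝ) * (t₀ + ε)))
                = C * (nn : ℝ) ^ (m₀ - 1) * (Real.exp (2 * π * (nn:ℝ) * t₀)
                    * Real.exp (-(2 * π * (nn:ℝ) * (t₀ + ε)))) := by ring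
              _ = C * (nn : ℝ) ^ (m₀ - 1) * (Real.exp (-(π * ε * (nn:ℝ)))
                    * Real.exp (-(π * (nn:ℝ) * ε))) := by rw [hsplitexp]
              _ = C * ((nn : ℝ) ^ (m₀ - 1) * Real.exp (-(π * ε * (nn:ℝ))))
                    * Real.exp (-(π * (nn:ℝ) * ε)) := by ring
        _ ≤ C * (K / (π * ε) ^ (m₀ - 1)) * Real.exp (-(π * (nn:ℝ) * ε)) := by
            gcongr
            exact hKdef ▸ aux_pow_exp (m₀ - 1) (π * ε) (nn : ℝ) (by positivity) hnn0
        _ ≤ W * r ^ (i + 1) := by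
            have hrpow : r ^ (i + 1) = Real.exp (((i:ℝ) + 1) * -(π * ε)) := by
              rw [hrdef, ← Real.exp_nat_mul]
              push_cast
              ring_nf
            rw [hrpow, hWdef, mul_div_assoc]
            gcongr
            nlinarith [mul_le_mul_of_nonneg_left hnni (by positivity : (0:ℝ) ≤ π * ε)]
    have hsummaj : Summable (fun i : ℕ => W * r ^ (i + 1)) := by
      have h := (summable_geometric_of_lt_one hr0.le hr1).mul_left (W * r)
      exact h.congr fun i => by rw [pow_succ']; ring
    have hsumvtail : Summable fun i => v (i + k₀) := (summable_nat_add_iff k₀).mpr hsumv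
    have htailsum : ∑' i, v (i + k₀) ≤ C * K / ε ^ m₀ := by
      have h1 : ∑' i, v (i + k₀) ≤ ∑' i : ℕ, W * r ^ (i + 1) :=
        Summable.tsum_le_tsum htail hsumvtail hsummaj
      have h2 : ∑' i : ℕ, W * r ^ (i + 1) = W * (r * (1 - r)⁻¹) := by
        rw [tsum_mul_left]
        congr 1
        have : (fun i : ℕ => r ^ (i + 1)) = fun i : ℕ => r * r ^ i := by
          funext i; rw [pow_succ']
        rw [this, tsum_mul_left, tsum_geometric_of_lt_one hr0.le hr1]
      have h3 : π * ε * r ≤ 1 - r := by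
        have hh := Real.add_one_le_exp (π * ε)
        have hmul : Real.exp (π * ε) * r = 1 := by
          rw [hrdef, ← Real.exp_add]; simp
        nlinarith [hr0.le]
      have h4 : r * (1 - r)⁻¹ ≤ 1 / (π * ε) := by
        have h1r : 0 < 1 - r := by nlinarith [Real.pi_pos]
        rw [← div_eq_mul_inv, div_le_div_iff₀ h1r (by positivity)]
        nlinarith
      have h5 : W * (r * (1 - r)⁻¹) ≤ W * (1 / (π * ε)) := by gcongr
      have h6 : W * (1 / (π * ε)) = C * K / (π * ε) ^ m₀ := by
        rw [hWdef]
        rw [← Nat.succ_pred_eq_of_pos hm₀pos]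
        rw [pow_succ]
        field_simp
        rw [Nat.succ_sub_one]
      have h7 : C * K / (π * ε) ^ m₀ ≤ C * K / ε ^ m₀ := by
        have hππ : ε ^ m₀ ≤ (π * ε) ^ m₀ :=
          pow_le_pow_left₀ hε.le (by nlinarith [Real.pi_gt_three]) m₀
        exact div_le_div_of_nonneg_left (by positivity) (by positivity) hππ
      calc ∑' i, v (i + k₀) ≤ ∑' i : ℕ, W * r ^ (i + 1) := h1
        _ = W * (r * (1 - r)⁻¹) := h2
        _ ≤ W * (1 / (π * ε)) := h5
        _ = C * K / (π * ε) ^ m₀ := h6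
        _ ≤ C * K / ε ^ m₀ := h7
    calc ‖f τ‖ ≤ ∑' n, v n := h1
      _ = (∑ i ∈ Finset.range k₀, v i) + ∑' i, v (i + k₀) := hsplit
      _ ≤ B + C * K / ε ^ m₀ := add_le_add hhead htailsum
  -- pole-side lower bound
  have keylow : ∀ ε : ℝ, 0 < ε → ε < δ → g / 2 / ε ^ m₀ ≤ ‖f (z₀ + ε * I)‖ := by
    intro ε hε hεδ
    obtain ⟨τ, hτdef⟩ : ∃ τ : ℂ, τ = z₀ + (ε : ℂ) * I := ⟨_, rfl⟩
    rw [← hτdef]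
    have hτne : τ ≠ z₀ := by
      simp only [hτdef, ne_eq, add_eq_left, mul_eq_zero]
      push_neg
      constructor
      · exact_mod_cast hε.ne'
      · exact I_ne_zero
    have hdist : dist τ z₀ = ε := by
      simp only [hτdef, dist_eq_norm, add_sub_cancel_left]
      rw [norm_mul, Complex.norm_I, mul_one, Complex.norm_real, Real.norm_of_nonneg hε.le]
    obtain ⟨hfeq, hGge⟩ := hδ τ (by rw [hdist]; exact hεδ) hτne
    have hsub : τ - z₀ = (ε : ℂ) * I := by rw [hτdef]; ring
    rw [hfeq, norm_div, hsub]
    have hnorm : ‖((ε:ℂ) * I) ^ m₀‖ = ε ^ m₀ := by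
      rw [norm_pow, norm_mul, Complex.norm_I, mul_one, Complex.norm_real,
        Real.norm_of_nonneg hε.le]
    rw [hnorm]
    gcongr
  -- combine
  obtain ⟨ε, hεpos, hε1, hεδ, hεB⟩ : ∃ ε : ℝ, 0 < ε ∧ ε ≤ 1 ∧ ε < δ ∧
      ε ≤ g / (8 * (B + 1)) := by
    refine ⟨min (δ / 2) (min 1 (g / (8 * (B + 1)))), ?_, ?_, ?_, ?_⟩
    · exact lt_min (by linarith) (lt_min one_pos (by positivity))
    · exact le_trans (min_le_right _ _) (min_le_left _ _)
    · exact lt_of_le_of_lt (min_le_left _ _) (by linarith)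
    · exact le_trans (min_le_right _ _) (min_le_right _ _)
  have hlow := keylow ε hεpos hεδ
  have hup := key ε hεpos hε1
  have hεm : 0 < ε ^ m₀ := pow_pos hεpos _
  have hq : g / 4 / ε ^ m₀ ≤ B := by
    rw [hCK] at hup
    have heq : g / 2 / ε ^ m₀ = g / 4 / ε ^ m₀ + g / 4 / ε ^ m₀ := by ring
    linarith [hlow, hup, heq]
  have hεpow : ε ^ m₀ ≤ ε := pow_le_of_le_one hεpos.le hε1 hm₀pos.ne'
  have hq2 : g / 4 / ε ≤ g / 4 / ε ^ m₀ :=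
    div_le_div_of_nonneg_left (by positivity) hεm hεpow
  have hq3 : 2 * (B + 1) ≤ g / 4 / ε := by
    rw [le_div_iff₀ hεpos]
    rw [le_div_iff₀ (by positivity : (0:ℝ) < 8 * (B + 1))] at hεB
    nlinarith
  linarith
end

section
/- For each integer m ≥ 1 let ℒ_m : ℂ∖ℤ → ℂ be the result of applying the operator (1/(2πi)) d/dz exactly (m−1) times to the function z ↦ e^{2πiz}/(1 − e^{2πiz}) (so that ℒ_m(z) = Σ_{n≥1} n^{m−1} e^{2πinz} whenever Im z > 0). Let τ_p ∈ ℂ, let M ≥ 1, and let f be holomorphic on a punctured neighborhood of τ_p with a pole of order at most M at τ_p and Laurent expansion f(τ) = Σ_{n ≥ −M} r(n)(τ − τ_p)^n near τ_p. Then the function τ ↦ f(τ) − Σ_{m=1}^{M} ((−2πi)^m/(m−1)!) · r(−m) · ℒ_m(τ − τ_p) extends holomorphically to a full neighborhood of τ_p. -/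
open Complex Real Filter Topology

/-- `ℒ_m`: the result of applying the operator `(1/(2πi)) d/dz` exactly `m - 1`
times to `z ↦ e^{2πiz}/(1 - e^{2πiz})`; for `Im z > 0` one has
`ℒ_m(z) = Σ_{n≥1} n^{m-1} e^{2πinz} = Li_{1-m}(e^{2πiz})`. -/
noncomputable def polyLi (m : ℕ) : ℂ → ℂ :=
  (fun g : ℂ → ℂ => fun z => (2 * π * I)⁻¹ * deriv g z)^[m - 1]
    (fun z => Complex.exp (2 * π * I * z) / (1 - Complex.exp (2 * π * I * z)))

private lemma twoPiI_ne : (2 * (π:ℂ) * I) ≠ 0 := by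
  simp [Real.pi_ne_zero, Complex.I_ne_zero, Complex.ofReal_ne_zero]

private lemma one_sub_exp_ne (z : ℂ) (h1 : ‖z‖ < 1) (h0 : z ≠ 0) :
    1 - Complex.exp (2*π*I*z) ≠ 0 := by
  rw [sub_ne_zero]
  intro h
  obtain ⟨n, hn⟩ := Complex.exp_eq_one_iff.mp h.symm
  have hz : z = n := by
    have : (2*π*I : ℂ) * z = (2*π*I) * n := by rw [hn]; ring
    exact mul_left_cancel₀ twoPiI_ne this
  rw [hz] at h1 h0
  have hn0 : n ≠ 0 := by simpa using h0
  have : (1:ℝ) ≤ ‖(n:ℂ)‖ := by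
    rw [Complex.norm_intCast]
    exact_mod_cast Int.one_le_abs hn0
  linarith

private lemma tendsto_slope_inv :
    Tendsto (fun z : ℂ => z / (1 - Complex.exp (2*π*I*z))) (𝓝[≠] 0)
      (𝓝 (-(2*π*I : ℂ))⁻¹) := by
  have hd : HasDerivAt (fun z : ℂ => 1 - Complex.exp (2*π*I*z)) (-(2*π*I)) 0 := by
    have h1 : HasDerivAt (fun z : ℂ => Complex.exp (2*π*I*z)) (2*π*I) 0 := by
      have := ((hasDerivAt_id (0:ℂ)).const_mul (2*π*I : ℂ)).cexp
      simpa using this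
    simpa using h1.const_sub (1:ℂ)
  have hs := hasDerivAt_iff_tendsto_slope.mp hd
  have hne : (-(2*π*I : ℂ)) ≠ 0 := neg_ne_zero.mpr twoPiI_ne
  have hsi := hs.inv₀ hne
  refine hsi.congr' ?_
  filter_upwards [self_mem_nhdsWithin] with z hz
  simp only [slope_def_field, mul_zero, Complex.exp_zero, sub_self, sub_zero, inv_div]

/-- the base function minus its pole, with the singularity at 0 removed -/
noncomputable def Bbase : ℂ → ℂ :=
  Function.update
    (fun z => Complex.exp (2*π*I*z) / (1 - Complex.exp (2*π*I*z)) + (2*π*I)⁻¹ * z⁻¹) 0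
    (limUnder (𝓝[≠] 0)
      (fun z => Complex.exp (2*π*I*z) / (1 - Complex.exp (2*π*I*z)) + (2*π*I)⁻¹ * z⁻¹))

private lemma Bbase_diff : DifferentiableOn ℂ Bbase (Metric.ball 0 1) := by
  unfold Bbase
  apply Complex.differentiableOn_update_limUnder_of_isLittleO (Metric.ball_mem_nhds 0 one_pos)
  · intro z hz
    have hz0 : z ≠ 0 := hz.2
    have h1 : 1 - Complex.exp (2*π*I*z) ≠ 0 :=
      one_sub_exp_ne z (by simpa using hz.1) hz0
    apply DifferentiableAt.differentiableWithinAt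
    apply DifferentiableAt.add
    · exact (((differentiableAt_const _).mul differentiableAt_fun_id).cexp).div
        ((differentiableAt_const _).sub
          (((differentiableAt_const _).mul differentiableAt_fun_id).cexp)) h1
    · exact (differentiableAt_const _).mul (differentiableAt_fun_id.inv hz0)
  · rw [Asymptotics.isLittleO_iff_tendsto' (by
      filter_upwards [self_mem_nhdsWithin] with z hz h
      exact absurd (inv_eq_zero.mp (by simpa using h)) hz)]
    have hc : Continuous fun z : ℂ => Complex.exp (2*π*I*z) :=
      Complex.continuous_exp.comp (continuous_const.mul continuous_id)
    have T1 : Tendsto (fun z : ℂ => Complex.exp (2*π*I*z) * (z / (1 - Complex.exp (2*π*I*z))))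
        (𝓝[≠] 0) (𝓝 (1 * (-(2*π*I : ℂ))⁻¹)) := by
      refine Tendsto.mul ?_ tendsto_slope_inv
      have := hc.tendsto 0
      simp only [mul_zero, Complex.exp_zero] at this
      exact this.mono_left nhdsWithin_le_nhds
    have T : Tendsto (fun z : ℂ => Complex.exp (2*π*I*z) * (z / (1 - Complex.exp (2*π*I*z)))
        + (2*π*I : ℂ)⁻¹) (𝓝[≠] 0) (𝓝 0) := by
      have h2 := T1.add (tendsto_const_nhds (x := (2*π*I : ℂ)⁻¹))
      have h3 : (1 : ℂ) * (-(2*π*I : ℂ))⁻¹ + (2*π*I : ℂ)⁻¹ = 0 := by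
        rw [one_mul, inv_neg]; ring
      rwa [h3] at h2
    refine T.congr' ?_
    filter_upwards [self_mem_nhdsWithin] with z hz
    have hz0 : z ≠ (0:ℂ) := hz
    simp only [mul_zero, Complex.exp_zero, sub_self, div_zero, inv_zero, add_zero, sub_zero]
    have hdi : ∀ a : ℂ, a / z⁻¹ = a * z := fun a => by rw [div_eq_mul_inv, inv_inv]
    have h1 : (2*(π:ℂ)*I)⁻¹ * z⁻¹ * z = (2*(π:ℂ)*I)⁻¹ := by
      rw [mul_assoc, inv_mul_cancel₀ hz0, mul_one]
    rw [hdi, add_mul, h1, div_mul_eq_mul_div, mul_div_assoc]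

private lemma Bbase_eq (z : ℂ) (hz : z ≠ 0) :
    Bbase z = Complex.exp (2*π*I*z) / (1 - Complex.exp (2*π*I*z)) + (2*π*I)⁻¹ * z⁻¹ := by
  simp only [Bbase]
  rw [Function.update_of_ne hz]

/-- Laurent-type representation of `polyLi (m+1)` near `0`. -/
private lemma polyLi_rep (m : ℕ) : ∃ δ : ℝ, 0 < δ ∧ ∃ B : ℂ → ℂ,
    AnalyticOnNhd ℂ B (Metric.ball 0 δ) ∧
    ∀ z ∈ Metric.ball (0:ℂ) δ \ {0},
      polyLi (m+1) z = ((m.factorial : ℂ) / (-(2*π*I))^(m+1)) * z ^ (-(m+1:ℤ)) + B z := by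
  have hne : (-(2*π*I) : ℂ) ≠ 0 := neg_ne_zero.mpr twoPiI_ne
  induction m with
  | zero =>
    refine ⟨1, one_pos, Bbase, Bbase_diff.analyticOnNhd Metric.isOpen_ball, ?_⟩
    intro z hz
    have hz0 : z ≠ 0 := hz.2
    rw [Bbase_eq z hz0]
    show Complex.exp (2*π*I*z) / (1 - Complex.exp (2*π*I*z)) = _
    simp only [Nat.cast_zero, Nat.factorial_zero, Nat.cast_one, pow_one, zero_add, zpow_neg_one]
    rw [one_div, inv_neg]
    ring
  | succ m ih =>
    obtain ⟨δ, hδ, B, hB, hBe⟩ := ih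
    refine ⟨δ, hδ, fun z => (2*π*I)⁻¹ * deriv B z, analyticOnNhd_const.mul hB.deriv, ?_⟩
    intro z hz
    have hz0 : z ≠ 0 := hz.2
    have hz1 : z ∈ Metric.ball (0:ℂ) δ := hz.1
    have hopen : IsOpen (Metric.ball (0:ℂ) δ \ {0}) :=
      Metric.isOpen_ball.sdiff isClosed_singleton
    have hmem : Metric.ball (0:ℂ) δ \ {0} ∈ 𝓝 z := hopen.mem_nhds hz
    set c : ℂ := (m.factorial : ℂ) / (-(2*π*I))^(m+1) with hc
    have heq : polyLi (m+1) =ᶠ[𝓝 z]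
        fun w => c * w ^ (-(m+1:ℤ)) + B w := by
      filter_upwards [hmem] with w hw using hBe w hw
    have hstep : polyLi (m+1+1) z = (2*π*I)⁻¹ * deriv (polyLi (m+1)) z := by
      show (fun g : ℂ → ℂ => fun z => (2 * π * I)⁻¹ * deriv g z)^[m+1] _ z = _
      rw [Function.iterate_succ_apply']
      rfl
    have hBz : DifferentiableAt ℂ B z := (hB z hz1).differentiableAt
    have hzp := hasDerivAt_zpow (-(m+1:ℤ)) z (Or.inl hz0)
    have hder : deriv (fun w => c * w ^ (-(m+1:ℤ)) + B w) z
        = c * (((-(m+1:ℤ) : ℤ) : ℂ) * z ^ (-(m+1:ℤ)-1)) + deriv B z :=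
      ((hzp.const_mul c).add hBz.hasDerivAt).deriv
    rw [hstep, heq.deriv_eq, hder]
    have hexp : (-(m+1:ℤ) - 1) = -((m+1:ℕ) + 1 : ℤ) := by push_cast; ring
    rw [hexp, hc]
    have hfac : (((m+1:ℕ)).factorial : ℂ) = ((m.factorial : ℂ)) * ((m:ℂ)+1) := by
      rw [Nat.factorial_succ]; push_cast; ring
    rw [hfac]
    push_cast
    have gen : ∀ t a : ℂ, t ≠ 0 →
        t⁻¹ * (a/(-t)^(m+1) * (-((m:ℂ)+1))) = (a * ((m:ℂ)+1))/((-t)^(m+1) * (-t)) := by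
      intro t a ht
      have h1 : (-t)^(m+1) ≠ 0 := pow_ne_zero _ (neg_ne_zero.mpr ht)
      have h2 : (-t) ≠ 0 := neg_ne_zero.mpr ht
      field_simp
    have hkey : (2*(π:ℂ)*I)⁻¹ * (((m.factorial : ℂ)/(-(2*π*I))^(m+1)) * (-((m:ℂ)+1)))
        = ((m.factorial : ℂ) * ((m:ℂ)+1)) / (-(2*π*I))^(m+1+1) := by
      rw [pow_succ]
      exact gen _ _ twoPiI_ne
    rw [mul_add]
    congr 1
    rw [show (2*(π:ℂ)*I)⁻¹ * (((m.factorial : ℂ)/(-(2*π*I))^(m+1))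
          * (-((m:ℂ)+1) * z ^ (-((m:ℤ) + 1 + 1))))
        = ((2*(π:ℂ)*I)⁻¹ * (((m.factorial : ℂ)/(-(2*π*I))^(m+1)) * (-((m:ℂ)+1))))
          * z ^ (-((m:ℤ) + 1 + 1)) from by ring, hkey]

/-- subtracting the polar combination
`Σ_{m=1}^M ((-2πi)^m/(m-1)!) r(-m) ℒ_m(τ - τ_p)` from a function `f` with a pole
of order at most `M` at `τ_p` (with Laurent coefficients `r`) leaves a function
that extends holomorphically to a full neighborhood of `τ_p`. -/
theorem stmt_4 (τp : ℂ) (M : ℕ) (hM : 1 ≤ M) (f : ℂ → ℂ) (r : ℤ → ℂ)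
    (hhol : ∀ᶠ τ in nhdsWithin τp {τp}ᶜ, DifferentiableAt ℂ f τ)
    (hLaurent : ∃ ε : ℝ, 0 < ε ∧ ∀ τ : ℂ, τ ≠ τp → ‖τ - τp‖ < ε →
      HasSum (fun j : ℕ => r ((j : ℤ) - M) * (τ - τp) ^ ((j : ℤ) - (M : ℤ))) (f τ)) :
    ∃ G : ℂ → ℂ, AnalyticAt ℂ G τp ∧
      ∀ᶠ τ in nhdsWithin τp {τp}ᶜ,
        G τ = f τ - ∑ j ∈ Finset.range M,
          ((-(2 * π * I)) ^ (j + 1) / (Nat.factorial j : ℂ)) * r (-(j + 1 : ℤ))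
            * polyLi (j + 1) (τ - τp) := by

  obtain ⟨ε, hε, hL⟩ := hLaurent
  have hne : (-(2*π*I) : ℂ) ≠ 0 := neg_ne_zero.mpr twoPiI_ne
  set p : FormalMultilinearSeries ℂ ℂ ℂ :=
    FormalMultilinearSeries.ofScalars ℂ (fun n => r (n : ℤ)) with hp
  have key : ∀ τ : ℂ, τ ≠ τp → ‖τ - τp‖ < ε →
      HasSum (fun n : ℕ => r (n : ℤ) * (τ - τp) ^ n)
        (f τ - ∑ i ∈ Finset.range M, r ((i:ℤ) - M) * (τ - τp) ^ ((i:ℤ) - (M:ℤ))) := by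
    intro τ hτ hτε
    have hw0 : τ - τp ≠ 0 := sub_ne_zero.mpr hτ
    have h1 := hL τ hτ hτε
    have h2 := h1.mul_right ((τ - τp) ^ (M:ℕ))
    have hfun : (fun j : ℕ => r ((j:ℤ) - M) * (τ - τp) ^ ((j:ℤ)-(M:ℤ)) * (τ - τp) ^ (M:ℕ))
        = fun j : ℕ => r ((j:ℤ) - M) * (τ - τp) ^ (j:ℕ) := by
      funext j
      rw [mul_assoc, ← zpow_natCast (τ - τp) M, ← zpow_add₀ hw0,
        show ((j:ℤ) - (M:ℤ) + (M:ℤ)) = (j:ℤ) from by ring, zpow_natCast]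
    rw [hfun] at h2
    have h3 : HasSum (fun n : ℕ => r (((n+M:ℕ):ℤ) - M) * (τ - τp) ^ (n+M:ℕ))
        (f τ * (τ - τp) ^ (M:ℕ) - ∑ i ∈ Finset.range M, r ((i:ℤ) - M) * (τ - τp) ^ (i:ℕ)) :=
      (hasSum_nat_add_iff' M).mpr h2
    have h4 := h3.mul_right (((τ - τp) ^ (M:ℕ))⁻¹)
    have hfun2 : (fun n : ℕ => r (((n+M:ℕ):ℤ) - M) * (τ - τp) ^ (n+M:ℕ) * ((τ - τp) ^ (M:ℕ))⁻¹)
        = fun n : ℕ => r ((n:ℤ)) * (τ - τp) ^ n := by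
      funext n
      rw [show (((n+M:ℕ):ℤ) - M) = (n:ℤ) from by push_cast; ring,
        pow_add, mul_assoc, mul_assoc, mul_inv_cancel₀ (pow_ne_zero _ hw0), mul_one]
    rw [hfun2] at h4
    have hval : (f τ * (τ - τp) ^ (M:ℕ) - ∑ i ∈ Finset.range M, r ((i:ℤ) - M) * (τ - τp) ^ (i:ℕ))
          * ((τ - τp) ^ (M:ℕ))⁻¹
        = f τ - ∑ i ∈ Finset.range M, r ((i:ℤ) - M) * (τ - τp) ^ ((i:ℤ) - (M:ℤ)) := by
      rw [sub_mul, mul_assoc, mul_inv_cancel₀ (pow_ne_zero _ hw0), mul_one, Finset.sum_mul]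
      congr 1
      refine Finset.sum_congr rfl fun i _ => ?_
      rw [mul_assoc, zpow_sub₀ hw0, zpow_natCast, zpow_natCast, div_eq_mul_inv]
    rwa [hval] at h4
  have hrad : 0 < p.radius := by
    have hhalf : ((ε/2 : ℝ) : ℂ) ≠ 0 := by exact_mod_cast (half_pos hε).ne'
    have hτ0 : τp + ((ε/2:ℝ):ℂ) ≠ τp := by
      intro h
      exact hhalf (by rwa [add_eq_left] at h)
    have habs : ‖(τp + ((ε/2:ℝ):ℂ)) - τp‖ < ε := by
      rw [add_sub_cancel_left, Complex.norm_real, Real.norm_eq_abs, abs_of_pos (half_pos hε)]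
      linarith
    have hsum := (key _ hτ0 habs).summable
    have hnorm : Summable (fun n => ‖p n‖ * (((ε/2 : ℝ).toNNReal : ℝ)) ^ n) := by
      refine hsum.norm.congr fun n => ?_
      rw [norm_mul, norm_pow, add_sub_cancel_left, hp, FormalMultilinearSeries.ofScalars_norm,
        Complex.norm_real, Real.norm_eq_abs, abs_of_pos (half_pos hε),
        Real.coe_toNNReal _ (half_pos hε).le]
    have hle := p.le_radius_of_summable hnorm
    refine lt_of_lt_of_le ?_ hle
    exact_mod_cast ENNReal.coe_pos.mpr (Real.toNNReal_pos.mpr (half_pos hε))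
  have hpsum_eq : ∀ w : ℂ, p.sum w = ∑' n : ℕ, r (n:ℤ) * w ^ n := by
    intro w
    simp only [FormalMultilinearSeries.sum]
    refine tsum_congr fun n => ?_
    rw [hp, FormalMultilinearSeries.ofScalars_apply_eq, smul_eq_mul]
  choose δ hδ B hB hBe using polyLi_rep
  set G : ℂ → ℂ := fun τ => p.sum (τ - τp)
      - ∑ j ∈ Finset.range M, ((-(2 * π * I)) ^ (j + 1) / (Nat.factorial j : ℂ))
          * r (-(j + 1 : ℤ)) * B j (τ - τp) with hG
  have hsub : AnalyticAt ℂ (fun τ : ℂ => τ - τp) τp := analyticAt_id.sub analyticAt_const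
  refine ⟨G, ?_, ?_⟩
  · have h1 : AnalyticAt ℂ (fun τ => p.sum (τ - τp)) τp :=
      (p.hasFPowerSeriesOnBall hrad).analyticAt.comp_of_eq hsub (by simp)
    refine h1.sub ?_
    refine Finset.analyticAt_fun_sum _ fun j hj => ?_
    have hBj : AnalyticAt ℂ (B j) 0 := hB j 0 (Metric.mem_ball_self (hδ j))
    exact analyticAt_const.mul (hBj.comp_of_eq hsub (by simp))
  · have htend : Tendsto (fun τ : ℂ => τ - τp) (𝓝[≠] τp) (𝓝[≠] 0) := by
      rw [tendsto_nhdsWithin_iff]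
      constructor
      · have h := Continuous.tendsto (show Continuous fun τ : ℂ => τ - τp by fun_prop) τp
        rw [sub_self] at h
        exact h.mono_left nhdsWithin_le_nhds
      · filter_upwards [self_mem_nhdsWithin] with τ hτ
        simp only [Set.mem_compl_iff, Set.mem_singleton_iff, sub_eq_zero]
        exact hτ
    have hrep : ∀ᶠ τ in 𝓝[≠] τp, ∀ j ∈ Finset.range M,
        polyLi (j+1) (τ - τp)
          = ((j.factorial : ℂ) / (-(2*π*I))^(j+1)) * (τ - τp) ^ (-(j+1:ℤ)) + B j (τ - τp) := by
      rw [eventually_all_finset]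
      intro j hj
      have hball : ∀ᶠ w in 𝓝[≠] (0:ℂ), w ∈ Metric.ball (0:ℂ) (δ j) \ {0} := by
        filter_upwards [self_mem_nhdsWithin,
          nhdsWithin_le_nhds (Metric.ball_mem_nhds (0:ℂ) (hδ j))] with w hw1 hw2
        exact ⟨hw2, hw1⟩
      filter_upwards [htend.eventually hball] with τ hτ using hBe j _ hτ
    have hsmall : ∀ᶠ τ in 𝓝[≠] τp, ‖τ - τp‖ < ε := by
      apply nhdsWithin_le_nhds
      have hcont : Continuous fun τ : ℂ => ‖τ - τp‖ :=
        continuous_norm.comp (show Continuous fun τ : ℂ => τ - τp by fun_prop)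
      have h := hcont.tendsto τp
      simp only [sub_self, map_zero, norm_zero] at h
      exact h.eventually (eventually_lt_nhds hε)
    filter_upwards [self_mem_nhdsWithin, hrep, hsmall] with τ hτ hrepτ hsmallτ
    have hτne : τ ≠ τp := hτ
    have hw0 : τ - τp ≠ 0 := sub_ne_zero.mpr hτne
    have hps : p.sum (τ - τp)
        = f τ - ∑ i ∈ Finset.range M, r ((i:ℤ) - M) * (τ - τp) ^ ((i:ℤ) - (M:ℤ)) := by
      rw [hpsum_eq (τ - τp)]
      exact (key τ hτne hsmallτ).tsum_eq
    have hreidx : ∑ i ∈ Finset.range M, r ((i:ℤ) - M) * (τ - τp) ^ ((i:ℤ) - (M:ℤ))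
        = ∑ j ∈ Finset.range M, r (-(j+1:ℤ)) * (τ - τp) ^ (-(j+1:ℤ)) := by
      rw [← Finset.sum_range_reflect]
      refine Finset.sum_congr rfl fun j hj => ?_
      have hjM : j < M := Finset.mem_range.mp hj
      have h1 : ((M - 1 - j : ℕ) : ℤ) = (M:ℤ) - 1 - j := by omega
      have h2 : ((M:ℤ) - 1 - j) - M = -((j:ℤ)+1) := by ring
      rw [h1, h2]
    have hsum2 : ∑ j ∈ Finset.range M,
        ((-(2 * π * I)) ^ (j + 1) / (Nat.factorial j : ℂ)) * r (-(j + 1 : ℤ))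
          * polyLi (j + 1) (τ - τp)
        = ∑ j ∈ Finset.range M, (r (-(j+1:ℤ)) * (τ - τp) ^ (-(j+1:ℤ))
            + ((-(2 * π * I)) ^ (j + 1) / (Nat.factorial j : ℂ)) * r (-(j + 1 : ℤ))
              * B j (τ - τp)) := by
      refine Finset.sum_congr rfl fun j hj => ?_
      have hfac : ((j.factorial : ℂ)) ≠ 0 := by exact_mod_cast j.factorial_ne_zero
      have hcc : ((-(2*π*I)) ^ (j+1) / (j.factorial : ℂ))
          * ((j.factorial : ℂ) / (-(2*π*I))^(j+1)) = 1 := by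
        field_simp
      rw [hrepτ j hj, mul_add]
      congr 1
      rw [show ((-(2*π*I))^(j+1)/(j.factorial:ℂ)) * r (-(j+1:ℤ))
          * (((j.factorial:ℂ)/(-(2*π*I))^(j+1)) * (τ - τp) ^ (-(j+1:ℤ)))
        = (((-(2*π*I))^(j+1)/(j.factorial:ℂ)) * ((j.factorial:ℂ)/(-(2*π*I))^(j+1)))
          * (r (-(j+1:ℤ)) * (τ - τp) ^ (-(j+1:ℤ))) from by ring, hcc, one_mul]
    rw [hG]
    simp only []
    rw [hsum2, Finset.sum_add_distrib, hps, hreidx]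
    ring
end

section
/- Let k ≥ 0 be an even integer, let f be a level-one holomorphic modular form of weight k with Fourier expansion f(τ) = Σ_{n≥0} c(n) e^{2πinτ}, and let B > 0. Then the series Σ_{n=1}^∞ c(n) [Γ(s, 2πnB)/(2πn)^s + i^k Γ(k−s, 2πn/B)/(2πn)^{k−s}] converges absolutely for every s ∈ ℂ, and for every s with Re(s) > k + 1 one has ∫₀^∞ t^{s−1}(f(it) − c(0)) dt = −c(0)·(B^s/s + i^k B^{s−k}/(k−s)) + Σ_{n=1}^∞ c(n) [Γ(s, 2πnB)/(2πn)^s + i^k Γ(k−s, 2πn/B)/(2πn)^{k−s}]. -/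
open Complex Real Filter Topology MeasureTheory

/-- The upper incomplete gamma function `Γ(a, x) = ∫_x^∞ u^{a-1} e^{-u} du`. -/
noncomputable def iGamma (a : ℂ) (x : ℝ) : ℂ :=
  ∫ u in Set.Ioi x, (u : ℂ) ^ (a - 1) * Complex.exp (-(u : ℂ))

open Set

lemma aux_rpow_le_exp (r δ x0 : ℝ) (hδ : 0 < δ) (hx0 : 0 < x0) :
    ∃ C : ℝ, 0 ≤ C ∧ ∀ u : ℝ, x0 ≤ u → u ^ r ≤ C * Real.exp (δ * u) := by
  have h := tendsto_rpow_mul_exp_neg_mul_atTop_nhds_zero r δ hδ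
  have h1 : ∀ᶠ x : ℝ in atTop, x ^ r * Real.exp (-δ * x) ≤ 1 :=
    h.eventually (eventually_le_nhds one_pos)
  obtain ⟨X, hX⟩ := h1.exists_forall_of_atTop
  have hcont : ContinuousOn (fun x : ℝ => x ^ r * Real.exp (-δ * x)) (Icc x0 X) := by
    apply ContinuousOn.mul
    · exact ContinuousOn.rpow_const continuousOn_id
        (fun x hx => Or.inl (ne_of_gt (lt_of_lt_of_le hx0 hx.1)))
    · exact (Real.continuous_exp.comp (continuous_const.mul continuous_id)).continuousOn
  obtain ⟨C0, hC0⟩ := isCompact_Icc.exists_bound_of_continuousOn hcont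
  refine ⟨max C0 1, le_trans zero_le_one (le_max_right _ _), fun u hu => ?_⟩
  have key : u ^ r * Real.exp (-δ * u) ≤ max C0 1 := by
    rcases le_total u X with h' | h'
    · exact le_trans (le_abs_self _) (le_trans (hC0 u ⟨hu, h'⟩) (le_max_left _ _))
    · exact le_trans (hX u h') (le_max_right _ _)
  have e1 : u ^ r = u ^ r * Real.exp (-δ * u) * Real.exp (δ * u) := by
    rw [mul_assoc, ← Real.exp_add]
    norm_num
  rw [e1]
  exact mul_le_mul_of_nonneg_right key (Real.exp_pos _).le

lemma aux_norm (a : ℂ) {t : ℝ} (ht : 0 < t) (y : ℝ) :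
    ‖(t : ℂ) ^ a * Complex.exp ((y : ℂ))‖ = t ^ a.re * Real.exp y := by
  rw [norm_mul,
    Complex.norm_cpow_eq_rpow_re_of_pos ht, Complex.norm_exp, Complex.ofReal_re]

lemma aux_integrableOn (a : ℂ) {w x : ℝ} (hw : 0 < w) (hx : 0 < x) :
    IntegrableOn (fun t : ℝ => (t : ℂ) ^ a * Complex.exp ((-(w * t) : ℝ) : ℂ)) (Set.Ioi x) := by
  obtain ⟨C, hC0, hC⟩ := aux_rpow_le_exp a.re (w / 2) x (by positivity) hx
  have hmeas : AEStronglyMeasurable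
      (fun t : ℝ => (t : ℂ) ^ a * Complex.exp ((-(w * t) : ℝ) : ℂ))
      (volume.restrict (Set.Ioi x)) := by
    apply ContinuousOn.aestronglyMeasurable _ measurableSet_Ioi
    apply ContinuousOn.mul
    · exact fun t ht => (Complex.continuousAt_ofReal_cpow_const t a
        (Or.inr (ne_of_gt (hx.trans ht)))).continuousWithinAt
    · exact (Complex.continuous_exp.comp
        (Complex.continuous_ofReal.comp (continuous_const.mul continuous_id).neg)).continuousOn
  refine Integrable.mono' (((exp_neg_integrableOn_Ioi x (b := w / 2)
    (by positivity))).const_mul C) hmeas ?_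
  rw [ae_restrict_iff' measurableSet_Ioi]
  refine Filter.Eventually.of_forall fun t ht => ?_
  have ht0 : 0 < t := hx.trans ht
  rw [aux_norm a ht0]
  calc t ^ a.re * Real.exp (-(w * t))
      ≤ C * Real.exp (w / 2 * t) * Real.exp (-(w * t)) :=
        mul_le_mul_of_nonneg_right (hC t (le_of_lt ht)) (Real.exp_pos _).le
    _ = C * Real.exp (-(w / 2) * t) := by rw [mul_assoc, ← Real.exp_add]; ring_nf

lemma aux_integral_exp_neg {b x : ℝ} (hb : 0 < b) :
    ∫ u in Set.Ioi x, Real.exp (-(b * u)) = Real.exp (-(b * x)) / b := by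
  have h := integral_comp_mul_left_Ioi (fun u : ℝ => Real.exp (-u)) x hb
  simp only [smul_eq_mul] at h
  rw [h, integral_exp_neg_Ioi]
  field_simp


lemma aux_igamma_integrand_eq (a : ℂ) :
    ∀ u : ℝ, (u : ℂ) ^ (a - 1) * Complex.exp (-(u : ℂ))
      = (u : ℂ) ^ (a - 1) * Complex.exp ((-(1 * u) : ℝ) : ℂ) := by
  intro u; push_cast; ring_nf

lemma aux_iGamma_integrable (a : ℂ) {x : ℝ} (hx : 0 < x) :
    IntegrableOn (fun u : ℝ => (u : ℂ) ^ (a - 1) * Complex.exp (-(u : ℂ))) (Set.Ioi x) := by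
  exact (aux_integrableOn (a - 1) one_pos hx).congr_fun
    (fun u _ => (aux_igamma_integrand_eq a u).symm) measurableSet_Ioi

lemma aux_iGamma_bound (a : ℂ) {x0 : ℝ} (hx0 : 0 < x0) :
    ∃ C : ℝ, 0 ≤ C ∧ ∀ x : ℝ, x0 ≤ x → ‖iGamma a x‖ ≤ C * Real.exp (-(x / 2)) := by
  obtain ⟨C, hC0, hC⟩ := aux_rpow_le_exp (a.re - 1) (1 / 2) x0 (by norm_num) hx0
  refine ⟨2 * C, by positivity, fun x hx => ?_⟩
  have hxpos : 0 < x := lt_of_lt_of_le hx0 hx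
  have hint1 : IntegrableOn
      (fun u : ℝ => ‖(u : ℂ) ^ (a - 1) * Complex.exp (-(u : ℂ))‖) (Set.Ioi x) :=
    (aux_iGamma_integrable a hxpos).norm
  have hint2 : IntegrableOn (fun u : ℝ => C * Real.exp (-(1 / 2 * u))) (Set.Ioi x) := by
    simpa [IntegrableOn] using ((exp_neg_integrableOn_Ioi x (b := (1:ℝ) / 2) (by norm_num)).const_mul C)
  calc ‖iGamma a x‖ ≤ ∫ u in Set.Ioi x, ‖(u : ℂ) ^ (a - 1) * Complex.exp (-(u : ℂ))‖ :=
        norm_integral_le_integral_norm _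
    _ ≤ ∫ u in Set.Ioi x, C * Real.exp (-(1 / 2 * u)) := by
        refine setIntegral_mono_on hint1 hint2 measurableSet_Ioi fun u hu => ?_
        have hu0 : 0 < u := hxpos.trans hu
        rw [aux_igamma_integrand_eq a u, aux_norm (a - 1) hu0]
        have h1 : u ^ (a - 1).re ≤ C * Real.exp (1 / 2 * u) := by
          simpa using hC u (hx.trans hu.le)
        calc u ^ (a - 1).re * Real.exp (-(1 * u))
            ≤ C * Real.exp (1 / 2 * u) * Real.exp (-(1 * u)) :=
              mul_le_mul_of_nonneg_right h1 (Real.exp_pos _).le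
          _ = C * Real.exp (-(1 / 2 * u)) := by rw [mul_assoc, ← Real.exp_add]; ring_nf
    _ = 2 * C * Real.exp (-(x / 2)) := by
        rw [MeasureTheory.integral_const_mul, aux_integral_exp_neg (by norm_num : (0:ℝ) < 1/2)]
        ring_nf

lemma aux_iGamma_scaled (a : ℂ) {w x : ℝ} (hw : 0 < w) (hx : 0 < x) :
    ∫ t in Set.Ioi x, (t : ℂ) ^ (a - 1) * Complex.exp ((-(w * t) : ℝ) : ℂ)
      = iGamma a (w * x) / (w : ℂ) ^ a := by
  have key := integral_comp_mul_left_Ioi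
    (fun u : ℝ => (u : ℂ) ^ (a - 1) * Complex.exp (-(u : ℂ))) x hw
  have hcongr : ∫ t in Set.Ioi x, ((w * t : ℝ) : ℂ) ^ (a - 1) * Complex.exp (-((w * t : ℝ) : ℂ))
      = ∫ t in Set.Ioi x, (w : ℂ) ^ (a - 1) * ((t : ℂ) ^ (a - 1) * Complex.exp ((-(w * t) : ℝ) : ℂ)) := by
    refine setIntegral_congr_fun measurableSet_Ioi fun t ht => ?_
    have ht0 : 0 < t := hx.trans ht
    rw [Complex.ofReal_mul, mul_cpow_ofReal_nonneg hw.le ht0.le]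
    push_cast
    ring
  rw [hcongr] at key
  rw [MeasureTheory.integral_const_mul] at key
  have hw0 : (w : ℂ) ≠ 0 := Complex.ofReal_ne_zero.mpr hw.ne'
  have hwa : (w : ℂ) ^ a ≠ 0 := by
    rw [Ne, Complex.cpow_eq_zero_iff]
    simp [hw0]
  have hsplit : (w : ℂ) ^ a = (w : ℂ) ^ (a - 1) * (w : ℂ) := by
    conv_lhs => rw [show a = a - 1 + 1 by ring]
    rw [Complex.cpow_add _ _ hw0, Complex.cpow_one]
  have hwa1 : (w : ℂ) ^ (a - 1) ≠ 0 := by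
    rw [Ne, Complex.cpow_eq_zero_iff]; simp [hw0]
  rw [Complex.real_smul, Complex.ofReal_inv] at key
  rw [eq_div_iff hwa, hsplit]
  have key2 : (∫ u in Set.Ioi (w * x), (u : ℂ) ^ (a - 1) * Complex.exp (-(u : ℂ)))
      = (w : ℂ) * ((w : ℂ) ^ (a - 1) * ∫ t in Set.Ioi x, (t : ℂ) ^ (a - 1) * Complex.exp ((-(w * t) : ℝ) : ℂ)) := by
    rw [key, ← mul_assoc, mul_inv_cancel₀ hw0, one_mul]
  rw [iGamma, key2]
  ring


lemma aux_geom {b : ℝ} (hb : 0 < b) :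
    Summable (fun n : ℕ => Real.exp (-(b * (n + 1)))) := by
  have h : ∀ n : ℕ, Real.exp (-(b * (n + 1))) = Real.exp (-b) ^ (n + 1) := by
    intro n
    rw [← Real.exp_nat_mul]
    push_cast
    ring_nf
  have hlt : Real.exp (-b) < 1 := Real.exp_lt_one_iff.mpr (by linarith)
  have hs : Summable (fun n : ℕ => Real.exp (-b) ^ n) :=
    summable_geometric_of_lt_one (Real.exp_pos _).le hlt
  refine Summable.congr ?_ (fun n => (h n).symm)
  simpa [pow_succ] using hs.mul_right (Real.exp (-b))

lemma aux_cbound (c : ℕ → ℂ)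
    (h : ∀ ε : ℝ, 0 < ε → Summable fun n : ℕ => ‖c n‖ * Real.exp (-(2 * π * n * ε))) :
    ∀ ε : ℝ, 0 < ε → ∃ C, 0 ≤ C ∧ ∀ n : ℕ, ‖c n‖ ≤ C * Real.exp (2 * π * n * ε) := by
  intro ε hε
  refine ⟨∑' n, ‖c n‖ * Real.exp (-(2 * π * n * ε)),
    tsum_nonneg (fun n => by positivity), fun n => ?_⟩
  have h1 : ‖c n‖ * Real.exp (-(2 * π * n * ε))
      ≤ ∑' n, ‖c n‖ * Real.exp (-(2 * π * n * ε)) :=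
    Summable.le_tsum (h ε hε) n (fun j _ => by positivity)
  have e1 : ‖c n‖ = ‖c n‖ * Real.exp (-(2 * π * n * ε)) * Real.exp (2 * π * n * ε) := by
    rw [mul_assoc, ← Real.exp_add]; norm_num
  rw [e1]
  exact mul_le_mul_of_nonneg_right h1 (Real.exp_pos _).le

lemma aux_S1 (c : ℕ → ℂ)
    (hb : ∀ ε : ℝ, 0 < ε → ∃ C, 0 ≤ C ∧ ∀ n : ℕ, ‖c n‖ ≤ C * Real.exp (2 * π * n * ε))
    (a : ℂ) {X : ℝ} (hX : 0 < X) :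
    Summable (fun n : ℕ =>
      ‖c (n + 1) * (iGamma a (2 * π * (n + 1) * X) / ((2 * π * (n + 1) : ℝ) : ℂ) ^ a)‖) := by
  obtain ⟨C1, hC10, hC1⟩ := hb (X / 8) (by positivity)
  obtain ⟨C2, hC20, hC2⟩ := aux_iGamma_bound a (x0 := 2 * π * X) (by positivity)
  obtain ⟨C3, hC30, hC3⟩ := aux_rpow_le_exp (-a.re) (X / 8) (2 * π) (by positivity)
    (by positivity)
  have key : ∀ n : ℕ, ‖c (n + 1) * (iGamma a (2 * π * (n + 1) * X)
      / ((2 * π * (n + 1) : ℝ) : ℂ) ^ a)‖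
      ≤ C1 * C2 * C3 * Real.exp (-(π * X / 2 * (n + 1))) := by
    intro n
    have hn1 : (1 : ℝ) ≤ (n : ℝ) + 1 := by exact_mod_cast Nat.one_le_iff_ne_zero.mpr (Nat.succ_ne_zero n)
    have hp : (0 : ℝ) < 2 * π * (n + 1) := by positivity
    have hnorm : ‖(((2 * π * (n + 1) : ℝ)) : ℂ) ^ a‖ = (2 * π * (n + 1)) ^ a.re := by
      rw [Complex.norm_cpow_eq_rpow_re_of_pos hp]
    have hb1 : ‖c (n + 1)‖ ≤ C1 * Real.exp (2 * π * (n + 1) * (X / 8)) := by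
      have := hC1 (n + 1); push_cast at this ⊢; exact this
    have hb2 : ‖iGamma a (2 * π * (n + 1) * X)‖
        ≤ C2 * Real.exp (-(2 * π * (n + 1) * X / 2)) := by
      have h1 : 2 * π * X ≤ 2 * π * (n + 1) * X := by nlinarith [mul_nonneg (mul_nonneg (mul_nonneg (by norm_num : (0:ℝ) ≤ 2) Real.pi_pos.le) (Nat.cast_nonneg n)) hX.le]
      simpa using hC2 _ h1
    have hb3 : (2 * π * (n + 1)) ^ (-a.re) ≤ C3 * Real.exp (X / 8 * (2 * π * (n + 1))) := by
      have h1 : 2 * π ≤ 2 * π * (n + 1) := by nlinarith [mul_nonneg (mul_nonneg (by norm_num : (0:ℝ) ≤ 2) Real.pi_pos.le) (Nat.cast_nonneg n)]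
      exact hC3 _ h1
    rw [norm_mul, norm_div, hnorm]
    have hrw : ‖iGamma a (2 * π * (n + 1) * X)‖ / (2 * π * (n + 1)) ^ a.re
        = ‖iGamma a (2 * π * (n + 1) * X)‖ * (2 * π * (n + 1)) ^ (-a.re) := by
      rw [Real.rpow_neg hp.le]; ring
    rw [hrw]
    calc ‖c (n + 1)‖ * (‖iGamma a (2 * π * (n + 1) * X)‖ * (2 * π * (n + 1)) ^ (-a.re))
        ≤ (C1 * Real.exp (2 * π * (n + 1) * (X / 8)))
          * ((C2 * Real.exp (-(2 * π * (n + 1) * X / 2)))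
            * (C3 * Real.exp (X / 8 * (2 * π * (n + 1))))) := by
          apply mul_le_mul hb1 _ (by positivity) (by positivity)
          apply mul_le_mul hb2 hb3 (by positivity) (by positivity)
      _ = C1 * C2 * C3 * Real.exp (-(π * X / 2 * (n + 1))) := by
          rw [show C1 * Real.exp (2 * π * (n + 1) * (X / 8))
              * ((C2 * Real.exp (-(2 * π * (n + 1) * X / 2)))
                * (C3 * Real.exp (X / 8 * (2 * π * (n + 1)))))
              = C1 * C2 * C3 * (Real.exp (2 * π * (n + 1) * (X / 8))
                * Real.exp (-(2 * π * (n + 1) * X / 2)) * Real.exp (X / 8 * (2 * π * (n + 1)))) by ring,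
            ← Real.exp_add, ← Real.exp_add]
          ring_nf
  refine Summable.of_nonneg_of_le (fun n => norm_nonneg _) key ?_
  exact ((aux_geom (by positivity : (0:ℝ) < π * X / 2)).mul_left (C1 * C2 * C3))


lemma aux_term_norm (z : ℂ) (y : ℝ) : ‖z * Complex.exp ((y : ℂ))‖ = ‖z‖ * Real.exp y := by
  rw [norm_mul]
  congr 1
  rw [Complex.norm_exp, Complex.ofReal_re]

lemma aux_swap (f : ℂ → ℂ) (c : ℕ → ℂ)
    (hcont : ContinuousOn f {z : ℂ | 0 < z.im})
    (hsum : ∀ t : ℝ, 0 < t → Summable (fun n : ℕ => ‖c n‖ * Real.exp (-(2 * π * n * t))))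
    (hfe : ∀ t : ℝ, 0 < t →
      f ((t : ℂ) * I) = ∑' n : ℕ, c n * Complex.exp ((-(2 * π * n * t) : ℝ) : ℂ))
    (hb : ∀ ε : ℝ, 0 < ε → ∃ C, 0 ≤ C ∧ ∀ n : ℕ, ‖c n‖ ≤ C * Real.exp (2 * π * n * ε))
    (a : ℂ) {X : ℝ} (hX : 0 < X) :
    IntegrableOn (fun t : ℝ => (t : ℂ) ^ (a - 1) * (f ((t : ℂ) * I) - c 0)) (Set.Ioi X) ∧
    ∫ t in Set.Ioi X, (t : ℂ) ^ (a - 1) * (f ((t : ℂ) * I) - c 0)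
      = ∑' n : ℕ, c (n + 1) *
          (iGamma a (2 * π * (n + 1) * X) / ((2 * π * (n + 1) : ℝ) : ℂ) ^ a) := by
  have hare : (a - 1).re = a.re - 1 := by simp
  -- summability of the complex Fourier series at any t > 0
  have hsumc : ∀ t : ℝ, 0 < t →
      Summable (fun n : ℕ => c n * Complex.exp ((-(2 * π * n * t) : ℝ) : ℂ)) := by
    intro t ht
    refine Summable.of_norm ?_
    exact (hsum t ht).congr fun n => (aux_term_norm _ _).symm
  -- pointwise identity for f(ti) - c 0
  have hpt : ∀ t : ℝ, 0 < t → f ((t : ℂ) * I) - c 0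
      = ∑' n : ℕ, c (n + 1) * Complex.exp ((-(2 * π * (n + 1) * t) : ℝ) : ℂ) := by
    intro t ht
    rw [hfe t ht, Summable.tsum_eq_zero_add (hsumc t ht)]
    have h0 : c 0 * Complex.exp ((-(2 * π * (0:ℕ) * t) : ℝ) : ℂ) = c 0 := by
      norm_num
    rw [h0, add_sub_cancel_left]
    exact tsum_congr fun n => by push_cast; ring_nf
  -- the summand functions
  set F : ℕ → ℝ → ℂ := fun n t =>
    c (n + 1) * ((t : ℂ) ^ (a - 1) * Complex.exp ((-(2 * π * (n + 1) * t) : ℝ) : ℂ)) with hF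
  have hwpos : ∀ n : ℕ, (0 : ℝ) < 2 * π * (n + 1) := fun n => by positivity
  have hw2 : ∀ n : ℕ, 2 * π ≤ 2 * π * (n + 1) := fun n => by
    nlinarith [Real.pi_pos, mul_nonneg (mul_nonneg (by norm_num : (0:ℝ) ≤ 2) Real.pi_pos.le)
      (Nat.cast_nonneg n)]
  have hFint : ∀ n : ℕ, IntegrableOn (F n) (Set.Ioi X) := fun n =>
    (aux_integrableOn (a - 1) (hwpos n) hX).const_mul _
  -- bound on the integrals of norms
  obtain ⟨C, hC0, hC⟩ := aux_rpow_le_exp (a.re - 1) π X Real.pi_pos hX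
  obtain ⟨C1, hC10, hC1⟩ := hb (X / 2) (by positivity)
  have hFbound : ∀ n : ℕ, (∫ t in Set.Ioi X, ‖F n t‖)
      ≤ C1 * C * Real.exp (π * X) / π * Real.exp (-(π * X * (n + 1))) := by
    intro n
    have hsub : (0 : ℝ) < 2 * π * (n + 1) - π := by
      have := hw2 n; linarith [Real.pi_pos]
    have step1 : (∫ t in Set.Ioi X, ‖F n t‖) = ‖c (n + 1)‖
        * ∫ t in Set.Ioi X, ‖(t : ℂ) ^ (a - 1) * Complex.exp ((-(2 * π * (n + 1) * t) : ℝ) : ℂ)‖ := by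
      rw [← MeasureTheory.integral_const_mul]
      exact setIntegral_congr_fun measurableSet_Ioi fun t ht => by rw [hF]; simp [norm_mul]
    rw [step1]
    have step2 : (∫ t in Set.Ioi X,
        ‖(t : ℂ) ^ (a - 1) * Complex.exp ((-(2 * π * (n + 1) * t) : ℝ) : ℂ)‖)
        ≤ ∫ t in Set.Ioi X, C * Real.exp (-((2 * π * (n + 1) - π) * t)) := by
      refine setIntegral_mono_on ((aux_integrableOn (a - 1) (hwpos n) hX).norm)
        ((show IntegrableOn (fun x : ℝ => C * Real.exp (-(2 * π * (n + 1) - π) * x))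
            (Set.Ioi X) volume from (exp_neg_integrableOn_Ioi X hsub).const_mul C).congr_fun
          (fun t _ => by simp only [neg_mul]) measurableSet_Ioi)
        measurableSet_Ioi fun t ht => ?_
      have ht0 : 0 < t := hX.trans ht
      rw [aux_norm (a - 1) ht0, hare]
      calc t ^ (a.re - 1) * Real.exp (-(2 * π * (n + 1) * t))
          ≤ C * Real.exp (π * t) * Real.exp (-(2 * π * (n + 1) * t)) :=
            mul_le_mul_of_nonneg_right (hC t ht.le) (Real.exp_pos _).le
        _ = C * Real.exp (-((2 * π * (n + 1) - π) * t)) := by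
            rw [mul_assoc, ← Real.exp_add]; ring_nf
    have step3 : (∫ t in Set.Ioi X, C * Real.exp (-((2 * π * (n + 1) - π) * t)))
        = C * (Real.exp (-((2 * π * (n + 1) - π) * X)) / (2 * π * (n + 1) - π)) := by
      rw [MeasureTheory.integral_const_mul, aux_integral_exp_neg hsub]
    have step4 : C * (Real.exp (-((2 * π * (n + 1) - π) * X)) / (2 * π * (n + 1) - π))
        ≤ C * (Real.exp (-((2 * π * (n + 1) - π) * X)) / π) := by
      gcongr
      linarith [hw2 n, Real.pi_pos]
    have hcb : ‖c (n + 1)‖ ≤ C1 * Real.exp (2 * π * (n + 1) * (X / 2)) := by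
      have := hC1 (n + 1); push_cast at this ⊢; exact this
    calc ‖c (n + 1)‖ * ∫ t in Set.Ioi X,
          ‖(t : ℂ) ^ (a - 1) * Complex.exp ((-(2 * π * (n + 1) * t) : ℝ) : ℂ)‖
        ≤ (C1 * Real.exp (2 * π * (n + 1) * (X / 2)))
          * (C * (Real.exp (-((2 * π * (n + 1) - π) * X)) / π)) := by
          refine mul_le_mul hcb (le_trans (le_trans step2 (le_of_eq step3)) step4) ?_ (by positivity)
          exact integral_nonneg fun t => norm_nonneg _
      _ = C1 * C * Real.exp (π * X) / π * Real.exp (-(π * X * (n + 1))) := by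
          rw [show C1 * Real.exp (2 * π * (n + 1) * (X / 2))
              * (C * (Real.exp (-((2 * π * (n + 1) - π) * X)) / π))
              = C1 * C / π * (Real.exp (2 * π * (n + 1) * (X / 2))
                * Real.exp (-((2 * π * (n + 1) - π) * X))) by ring, ← Real.exp_add]
          rw [show C1 * C * Real.exp (π * X) / π * Real.exp (-(π * X * (n + 1)))
              = C1 * C / π * (Real.exp (π * X) * Real.exp (-(π * X * (n + 1)))) by ring,
            ← Real.exp_add]
          congr 1
          ring
  have hFsum : Summable fun n : ℕ => ∫ t in Set.Ioi X, ‖F n t‖ := by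
    refine Summable.of_nonneg_of_le (fun n => integral_nonneg fun t => norm_nonneg _)
      hFbound ?_
    have := (aux_geom (b := π * X) (by positivity)).mul_left (C1 * C * Real.exp (π * X) / π)
    exact this
  -- the exchange
  have heq1 : ∫ t in Set.Ioi X, (t : ℂ) ^ (a - 1) * (f ((t : ℂ) * I) - c 0)
      = ∫ t in Set.Ioi X, ∑' n : ℕ, F n t := by
    refine setIntegral_congr_fun measurableSet_Ioi fun t ht => ?_
    rw [hpt t (hX.trans ht), ← tsum_mul_left]
    exact tsum_congr fun n => by rw [hF]; ring
  have heq2 := MeasureTheory.integral_tsum_of_summable_integral_norm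
    (F := F) (μ := volume.restrict (Set.Ioi X)) hFint hFsum
  have heval : ∀ n : ℕ, (∫ t in Set.Ioi X, F n t)
      = c (n + 1) * (iGamma a (2 * π * (n + 1) * X) / ((2 * π * (n + 1) : ℝ) : ℂ) ^ a) := by
    intro n
    rw [hF]
    rw [MeasureTheory.integral_const_mul, aux_iGamma_scaled a (hwpos n) hX]
  constructor
  · -- integrability
    have hKs : Summable (fun n : ℕ => ‖c (n + 1)‖ * Real.exp (-(2 * π * (n + 1) * (X / 2)))) := by
      have := (summable_nat_add_iff 1).mpr (hsum (X / 2) (by positivity))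
      exact this.congr fun n => by push_cast; ring_nf
    set K' : ℝ := ∑' n : ℕ, ‖c (n + 1)‖ * Real.exp (-(2 * π * (n + 1) * (X / 2))) with hK'
    have hK'0 : 0 ≤ K' := tsum_nonneg fun n => by positivity
    have hnorm_bd : ∀ t : ℝ, t ∈ Set.Ioi X → ‖f ((t : ℂ) * I) - c 0‖
        ≤ K' * Real.exp (-(π * t)) := by
      intro t ht
      have ht' : X < t := ht
      have ht0 : 0 < t := hX.trans ht'
      rw [hpt t ht0]
      have hs1 : Summable (fun n : ℕ => ‖c (n + 1)‖ * Real.exp (-(2 * π * (n + 1) * t))) := by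
        have := (summable_nat_add_iff 1).mpr (hsum t ht0)
        exact this.congr fun n => by push_cast; ring_nf
      have hs1' : Summable (fun n : ℕ =>
          ‖c (n + 1) * Complex.exp ((-(2 * π * (n + 1) * t) : ℝ) : ℂ)‖) :=
        hs1.congr fun n => (aux_term_norm _ _).symm
      calc ‖∑' n : ℕ, c (n + 1) * Complex.exp ((-(2 * π * (n + 1) * t) : ℝ) : ℂ)‖
          ≤ ∑' n : ℕ, ‖c (n + 1) * Complex.exp ((-(2 * π * (n + 1) * t) : ℝ) : ℂ)‖ :=
            norm_tsum_le_tsum_norm hs1'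
        _ = ∑' n : ℕ, ‖c (n + 1)‖ * Real.exp (-(2 * π * (n + 1) * t)) :=
            tsum_congr fun n => aux_term_norm _ _
        _ ≤ ∑' n : ℕ, ‖c (n + 1)‖ * Real.exp (-(2 * π * (n + 1) * (X / 2)))
              * Real.exp (-(π * t)) := by
            refine Summable.tsum_le_tsum (fun n => ?_) hs1 (hKs.mul_right _)
            rw [mul_assoc (‖c (n + 1)‖), ← Real.exp_add]
            refine mul_le_mul_of_nonneg_left (Real.exp_le_exp.mpr ?_) (norm_nonneg _)
            nlinarith [Real.pi_pos, mul_nonneg (mul_nonneg Real.pi_pos.le (Nat.cast_nonneg n))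
              (sub_nonneg.mpr ht'.le),
              mul_nonneg (mul_nonneg Real.pi_pos.le (Nat.cast_nonneg n)) ht0.le]
        _ = K' * Real.exp (-(π * t)) := by rw [tsum_mul_right]
    obtain ⟨C4, hC40, hC4⟩ := aux_rpow_le_exp (a.re - 1) (π / 2) X (by positivity) hX
    have hmaps : Set.MapsTo (fun t : ℝ => (t : ℂ) * I) (Set.Ioi X) {z : ℂ | 0 < z.im} := by
      intro t ht
      simp only [Set.mem_setOf_eq, Complex.mul_im, Complex.ofReal_re, Complex.I_im,
        Complex.ofReal_im, Complex.I_re]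
      simpa using hX.trans ht
    have hcf : ContinuousOn (fun t : ℝ => f ((t : ℂ) * I)) (Set.Ioi X) :=
      hcont.comp ((Complex.continuous_ofReal.mul continuous_const).continuousOn) hmaps
    have hcpow : ContinuousOn (fun t : ℝ => (t : ℂ) ^ (a - 1)) (Set.Ioi X) := fun t ht =>
      (Complex.continuousAt_ofReal_cpow_const t _
        (Or.inr (ne_of_gt (hX.trans ht)))).continuousWithinAt
    have hmeas : AEStronglyMeasurable
        (fun t : ℝ => (t : ℂ) ^ (a - 1) * (f ((t : ℂ) * I) - c 0))
        (volume.restrict (Set.Ioi X)) :=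
      (hcpow.mul (hcf.sub continuousOn_const)).aestronglyMeasurable measurableSet_Ioi
    refine Integrable.mono'
      ((exp_neg_integrableOn_Ioi X (by positivity : (0:ℝ) < π / 2)).const_mul (C4 * K'))
      hmeas ?_
    rw [ae_restrict_iff' measurableSet_Ioi]
    refine Filter.Eventually.of_forall fun t ht => ?_
    have ht0 : 0 < t := hX.trans ht
    rw [norm_mul]
    have h1 : ‖(t : ℂ) ^ (a - 1)‖ = t ^ (a.re - 1) := by
      rw [Complex.norm_cpow_eq_rpow_re_of_pos ht0, hare]
    rw [h1]
    calc t ^ (a.re - 1) * ‖f ((t : ℂ) * I) - c 0‖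
        ≤ (C4 * Real.exp (π / 2 * t)) * (K' * Real.exp (-(π * t))) := by
          refine mul_le_mul (hC4 t (le_of_lt ht)) (hnorm_bd t ht) (norm_nonneg _) ?_
          positivity
      _ = C4 * K' * Real.exp (-(π / 2) * t) := by
          rw [show (C4 * Real.exp (π / 2 * t)) * (K' * Real.exp (-(π * t)))
              = C4 * K' * (Real.exp (π / 2 * t) * Real.exp (-(π * t))) by ring, ← Real.exp_add]
          ring_nf
  · rw [heq1, ← heq2]
    exact tsum_congr heval


lemma aux_Ioc_integrable (f : ℂ → ℂ) (c0 : ℂ) {B : ℝ} (hB : 0 < B) (s : ℂ) (k : ℕ)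
    (hs : (k : ℝ) + 1 < s.re)
    (hcont : ContinuousOn f {z : ℂ | 0 < z.im})
    (M : ℝ) (hM : 0 ≤ M)
    (hfb : ∀ t : ℝ, 0 < t → t ≤ B → ‖f ((t : ℂ) * I)‖ * t ^ k ≤ M) :
    IntegrableOn (fun t : ℝ => (t : ℂ) ^ (s - 1) * (f ((t : ℂ) * I) - c0)) (Set.Ioc 0 B) := by
  have hmaps : Set.MapsTo (fun t : ℝ => (t : ℂ) * I) (Set.Ioc 0 B) {z : ℂ | 0 < z.im} := by
    intro t ht
    simp only [Set.mem_setOf_eq, Complex.mul_im, Complex.ofReal_re, Complex.I_im,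
      Complex.ofReal_im, Complex.I_re]
    simpa using ht.1
  have hcf : ContinuousOn (fun t : ℝ => f ((t : ℂ) * I)) (Set.Ioc 0 B) :=
    hcont.comp ((Complex.continuous_ofReal.mul continuous_const).continuousOn) hmaps
  have hcpow : ContinuousOn (fun t : ℝ => (t : ℂ) ^ (s - 1)) (Set.Ioc 0 B) := fun t ht =>
    (Complex.continuousAt_ofReal_cpow_const t _ (Or.inr (ne_of_gt ht.1))).continuousWithinAt
  have hmeas : AEStronglyMeasurable
      (fun t : ℝ => (t : ℂ) ^ (s - 1) * (f ((t : ℂ) * I) - c0))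
      (volume.restrict (Set.Ioc 0 B)) :=
    (hcpow.mul (hcf.sub continuousOn_const)).aestronglyMeasurable measurableSet_Ioc
  have hint : IntegrableOn
      (fun t : ℝ => (M + ‖c0‖ * B ^ k) * t ^ (s.re - 1 - k)) (Set.Ioc 0 B) := by
    refine Integrable.const_mul ?_ _
    have h1 : IntervalIntegrable (fun t : ℝ => t ^ (s.re - 1 - k)) volume 0 B :=
      intervalIntegral.intervalIntegrable_rpow' (by push_cast; linarith)
    exact (intervalIntegrable_iff_integrableOn_Ioc_of_le hB.le).mp h1
  refine Integrable.mono' hint hmeas ?_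
  rw [ae_restrict_iff' measurableSet_Ioc]
  refine Filter.Eventually.of_forall fun t ht => ?_
  have ht0 : 0 < t := ht.1
  rw [norm_mul]
  have h1 : ‖(t : ℂ) ^ (s - 1)‖ = t ^ (s.re - 1) := by
    rw [Complex.norm_cpow_eq_rpow_re_of_pos ht0]
    norm_num
  rw [h1]
  have hfb' : ‖f ((t : ℂ) * I)‖ ≤ M * t ^ (-(k : ℝ)) := by
    have h2 := hfb t ht0 ht.2
    have h3 : (0:ℝ) < t ^ k := by positivity
    rw [← Real.rpow_natCast t k] at h2 h3
    calc ‖f ((t : ℂ) * I)‖ = ‖f ((t : ℂ) * I)‖ * t ^ (k : ℝ) * t ^ (-(k : ℝ)) := by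
          rw [mul_assoc, ← Real.rpow_add ht0]; norm_num
      _ ≤ M * t ^ (-(k : ℝ)) := mul_le_mul_of_nonneg_right h2 (by positivity)
  calc t ^ (s.re - 1) * ‖f ((t : ℂ) * I) - c0‖
      ≤ t ^ (s.re - 1) * (M * t ^ (-(k : ℝ)) + ‖c0‖) := by
        refine mul_le_mul_of_nonneg_left ?_ (by positivity)
        exact le_trans (norm_sub_le _ _) (add_le_add_left hfb' _)
    _ = M * t ^ (s.re - 1 - k) + ‖c0‖ * (t ^ (s.re - 1 - k) * t ^ (k : ℝ)) := by
        rw [mul_add]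
        rw [show t ^ (s.re - 1) * (M * t ^ (-(k : ℝ))) = M * (t ^ (s.re - 1) * t ^ (-(k:ℝ))) by ring,
          ← Real.rpow_add ht0, ← Real.rpow_add ht0]
        ring_nf
    _ ≤ M * t ^ (s.re - 1 - k) + ‖c0‖ * (t ^ (s.re - 1 - k) * B ^ (k : ℝ)) := by
        refine add_le_add_right (mul_le_mul_of_nonneg_left ?_ (norm_nonneg _)) _
        refine mul_le_mul_of_nonneg_left ?_ (by positivity)
        exact Real.rpow_le_rpow ht0.le ht.2 (by positivity)
    _ = (M + ‖c0‖ * B ^ k) * t ^ (s.re - 1 - k) := by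
        rw [Real.rpow_natCast]
        ring


/-- the incomplete-gamma expansion of the L-integral of a level-one
holomorphic modular form of even weight `k ≥ 0`, with reflection point `B > 0`. -/
theorem stmt_6 (k : ℤ) (hk0 : 0 ≤ k) (hke : Even k) (f : ℂ → ℂ)
    (hf : IsModularForm k f) (c : ℕ → ℂ)
    (hc : ∀ τ : ℂ, 0 < τ.im →
      Summable (fun n : ℕ => ‖c n * Complex.exp (2 * π * I * n * τ)‖) ∧
      f τ = ∑' n : ℕ, c n * Complex.exp (2 * π * I * n * τ))
    (B : ℝ) (hB : 0 < B) :
    (∀ s : ℂ, Summable (fun n : ℕ =>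
      ‖c (n + 1) * (iGamma s (2 * π * (n + 1) * B) / (2 * π * ((n : ℂ) + 1)) ^ s
        + I ^ k * iGamma ((k : ℂ) - s) (2 * π * (n + 1) / B)
            / (2 * π * ((n : ℂ) + 1)) ^ ((k : ℂ) - s))‖)) ∧
    ∀ s : ℂ, (k : ℝ) + 1 < s.re →
      ∫ t in Set.Ioi (0:ℝ), (t : ℂ) ^ (s - 1) * (f (t * I) - c 0)
        = -c 0 * ((B : ℂ) ^ s / s + I ^ k * (B : ℂ) ^ (s - (k : ℂ)) / ((k : ℂ) - s))
          + ∑' n : ℕ, c (n + 1) *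
              (iGamma s (2 * π * (n + 1) * B) / (2 * π * ((n : ℂ) + 1)) ^ s
                + I ^ k * iGamma ((k : ℂ) - s) (2 * π * (n + 1) / B)
                    / (2 * π * ((n : ℂ) + 1)) ^ ((k : ℂ) - s)) := by
  -- basic setup
  set m : ℕ := k.toNat with hm
  have hkZ : (m : ℤ) = k := Int.toNat_of_nonneg hk0
  have hkC : (k : ℂ) = (m : ℂ) := by rw [← hkZ]; push_cast; ring
  have hkR : (k : ℝ) = (m : ℝ) := by rw [← hkZ]; push_cast; ring
  have hIk : (I : ℂ) ^ k = I ^ m := by rw [← hkZ, zpow_natCast]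
  have hexp_eq : ∀ (n : ℕ) (t : ℝ),
      (2 * (π:ℂ) * I * (n:ℂ) * ((t:ℂ) * I)) = ((-(2 * π * n * t) : ℝ) : ℂ) := by
    intro n t
    have h := Complex.I_mul_I
    push_cast
    linear_combination (2 * (π:ℂ) * n * t) * h
  have him : ∀ t : ℝ, ((t : ℂ) * I).im = t := fun t => by simp
  have hsum : ∀ t : ℝ, 0 < t → Summable (fun n : ℕ => ‖c n‖ * Real.exp (-(2 * π * n * t))) := by
    intro t ht
    have h1 := (hc ((t : ℂ) * I) (by rw [him]; exact ht)).1
    refine h1.congr fun n => ?_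
    rw [hexp_eq n t, aux_term_norm]
  have hfe : ∀ t : ℝ, 0 < t →
      f ((t : ℂ) * I) = ∑' n : ℕ, c n * Complex.exp ((-(2 * π * n * t) : ℝ) : ℂ) := by
    intro t ht
    rw [(hc ((t : ℂ) * I) (by rw [him]; exact ht)).2]
    exact tsum_congr fun n => by rw [hexp_eq n t]
  have hb := aux_cbound c hsum
  have hcont : ContinuousOn f {z : ℂ | 0 < z.im} := hf.1.continuousOn
  have hbase : ∀ n : ℕ, ((2 * π * (n + 1) : ℝ) : ℂ) = 2 * π * ((n : ℂ) + 1) := by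
    intro n; push_cast; ring
  have harg : ∀ n : ℕ, 2 * π * ((n : ℝ) + 1) * B⁻¹ = 2 * π * ((n : ℝ) + 1) / B :=
    fun n => (div_eq_mul_inv _ _).symm
  have hnormIk : ‖(I : ℂ) ^ k‖ = 1 := by
    rw [hIk, norm_pow, Complex.norm_I, one_pow]
  constructor
  · -- summability for all s
    intro s
    have hs1 := aux_S1 c hb s hB
    have hs2 := aux_S1 c hb ((k : ℂ) - s) (inv_pos.mpr hB)
    refine Summable.of_nonneg_of_le (fun n => norm_nonneg _) (fun n => ?_) (hs1.add hs2)
    rw [mul_add]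
    refine le_trans (norm_add_le _ _) (add_le_add (le_of_eq ?_) (le_of_eq ?_))
    · rw [← hbase n]
    · rw [show c (n + 1) * (I ^ k * iGamma ((k : ℂ) - s) (2 * π * ((n:ℝ) + 1) / B)
            / (2 * π * ((n : ℂ) + 1)) ^ ((k : ℂ) - s))
          = I ^ k * (c (n + 1) * (iGamma ((k : ℂ) - s) (2 * π * ((n:ℝ) + 1) / B)
            / (2 * π * ((n : ℂ) + 1)) ^ ((k : ℂ) - s))) by ring,
        norm_mul, hnormIk, one_mul, ← hbase n, ← harg n]
  · -- the main identity
    intro s hsre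
    have hk0R : (0:ℝ) ≤ (k:ℝ) := by exact_mod_cast hk0
    have hsre' : (m : ℝ) + 1 < s.re := by rwa [hkR] at hsre
    have hs0 : s ≠ 0 := by
      intro h; rw [h] at hsre; simp at hsre; linarith
    have hks0 : (k : ℂ) - s ≠ 0 := by
      intro h
      have := congrArg Complex.re h
      simp [Complex.sub_re, Complex.intCast_re] at this
      linarith
    have hksre : ((k : ℂ) - s - 1).re < -1 := by
      simp [Complex.sub_re, Complex.intCast_re]
      linarith
    have hBinv : (0:ℝ) < B⁻¹ := inv_pos.mpr hB
    have hargB : ((B:ℂ)).arg ≠ π := by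
      rw [Complex.arg_ofReal_of_nonneg hB.le]; exact (Real.pi_ne_zero).symm
    -- the two series/integral exchanges
    have swapB := aux_swap f c hcont hsum hfe hb s hB
    have swapI := aux_swap f c hcont hsum hfe hb ((k : ℂ) - s) hBinv
    -- bound for f near 0 via modularity
    have hMsum : Summable (fun n : ℕ => ‖c n‖ * Real.exp (-(2 * π * n * B⁻¹))) :=
      hsum B⁻¹ hBinv
    set M : ℝ := ∑' n : ℕ, ‖c n‖ * Real.exp (-(2 * π * n * B⁻¹)) with hMdef
    have hM0 : 0 ≤ M := tsum_nonneg fun n => by positivity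
    have hfbd : ∀ y : ℝ, B⁻¹ ≤ y → ‖f ((y : ℂ) * I)‖ ≤ M := by
      intro y hy
      have hy0 : 0 < y := lt_of_lt_of_le hBinv hy
      rw [hfe y hy0]
      have hsy := hsum y hy0
      have hsy' : Summable (fun n : ℕ => ‖c n * Complex.exp ((-(2 * π * n * y) : ℝ) : ℂ)‖) :=
        hsy.congr fun n => (aux_term_norm _ _).symm
      calc ‖∑' n : ℕ, c n * Complex.exp ((-(2 * π * n * y) : ℝ) : ℂ)‖
          ≤ ∑' n : ℕ, ‖c n * Complex.exp ((-(2 * π * n * y) : ℝ) : ℂ)‖ :=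
            norm_tsum_le_tsum_norm hsy'
        _ = ∑' n : ℕ, ‖c n‖ * Real.exp (-(2 * π * n * y)) := tsum_congr fun n => aux_term_norm _ _
        _ ≤ M := by
            refine Summable.tsum_le_tsum (fun n => ?_) hsy hMsum
            refine mul_le_mul_of_nonneg_left (Real.exp_le_exp.mpr ?_) (norm_nonneg _)
            have : 2 * π * n * B⁻¹ ≤ 2 * π * n * y :=
              mul_le_mul_of_nonneg_left hy (by positivity)
            linarith
    have hmodular : ∀ u : ℝ, 0 < u → f (((u:ℂ))⁻¹ * I) = ((u:ℂ) * I) ^ m * f ((u:ℂ) * I) := by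
      intro u hu
      have h1 := hf.2.2.1 ((u:ℂ) * I) (by rw [him]; exact hu)
      have h2 : -(((u:ℂ) * I))⁻¹ = ((u:ℂ))⁻¹ * I := by
        rw [mul_inv, Complex.inv_I]; ring
      rw [h2, ← hkZ, zpow_natCast] at h1
      exact h1
    have hMb : ∀ t : ℝ, 0 < t → t ≤ B → ‖f ((t : ℂ) * I)‖ * t ^ m ≤ M := by
      intro t ht htB
      have htC : (0:ℝ) < t := ht
      have h1 : ‖f ((t:ℂ) * I)‖ * t ^ m = ‖f (((t:ℂ))⁻¹ * I)‖ := by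
        rw [hmodular t ht, norm_mul, norm_pow, norm_mul, Complex.norm_I, Complex.norm_real,
          Real.norm_eq_abs, abs_of_pos ht, mul_one]
        ring
      rw [h1, ← Complex.ofReal_inv]
      exact hfbd t⁻¹ (by
        rw [inv_le_inv₀ (by positivity) ht]
        exact htB)
    have hIoc := aux_Ioc_integrable f (c 0) hB s m hsre' hcont M hM0 hMb
    -- splitting the integral at B
    have hsplit : ∫ t in Set.Ioi (0:ℝ), (t : ℂ) ^ (s - 1) * (f (t * I) - c 0)
        = (∫ t in Set.Ioc 0 B, (t : ℂ) ^ (s - 1) * (f (t * I) - c 0))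
          + ∫ t in Set.Ioi B, (t : ℂ) ^ (s - 1) * (f (t * I) - c 0) := by
      rw [← Set.Ioc_union_Ioi_eq_Ioi hB.le]
      exact setIntegral_union (Set.Ioc_disjoint_Ioi le_rfl) measurableSet_Ioi hIoc swapB.1
    -- the c 0 piece on (0, B]
    have hc0int : IntegrableOn (fun t : ℝ => (t : ℂ) ^ (s - 1) * c 0) (Set.Ioc 0 B) := by
      refine Integrable.mul_const ?_ _
      refine (intervalIntegrable_iff_integrableOn_Ioc_of_le hB.le).mp
        (intervalIntegral.intervalIntegrable_cpow (Or.inl ?_))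
      simp only [Complex.sub_re, Complex.one_re]
      linarith
    have hIocf : IntegrableOn (fun t : ℝ => (t : ℂ) ^ (s - 1) * f (t * I)) (Set.Ioc 0 B) := by
      refine (hIoc.add hc0int).congr (Filter.Eventually.of_forall fun t => ?_)
      simp only [Pi.add_apply]
      ring
    have hIocsplit : (∫ t in Set.Ioc 0 B, (t : ℂ) ^ (s - 1) * (f (t * I) - c 0))
        = (∫ t in Set.Ioc 0 B, (t : ℂ) ^ (s - 1) * f (t * I))
          - ∫ t in Set.Ioc 0 B, (t : ℂ) ^ (s - 1) * c 0 := by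
      rw [← integral_sub hIocf hc0int]
      exact setIntegral_congr_fun measurableSet_Ioc fun t _ => by ring
    have hc0val : (∫ t in Set.Ioc 0 B, (t : ℂ) ^ (s - 1) * c 0) = (B : ℂ) ^ s / s * c 0 := by
      rw [← intervalIntegral.integral_of_le hB.le, intervalIntegral.integral_mul_const,
        integral_cpow (Or.inl (by simp only [Complex.sub_re, Complex.one_re]; linarith))]
      rw [show s - 1 + 1 = s by ring]
      rw [Complex.ofReal_zero, Complex.zero_cpow hs0, sub_zero]
    -- change of variables t ↦ 1/t on (0, B)
    have himg : (fun u : ℝ => u⁻¹) '' (Set.Ioi B⁻¹) = Set.Ioo 0 B := by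
      ext y
      constructor
      · rintro ⟨u, hu, rfl⟩
        have hu0 : 0 < u := lt_trans hBinv hu
        refine ⟨inv_pos.mpr hu0, ?_⟩
        have h3 := inv_strictAnti₀ hBinv hu
        rwa [inv_inv] at h3
      · intro hy
        exact ⟨y⁻¹, inv_strictAnti₀ hy.1 hy.2, inv_inv y⟩
    have hmodint : (∫ t in Set.Ioc 0 B, (t : ℂ) ^ (s - 1) * f (t * I))
        = I ^ k * ∫ u in Set.Ioi B⁻¹, (u : ℂ) ^ ((k : ℂ) - s - 1) * f (u * I) := by
      rw [MeasureTheory.integral_Ioc_eq_integral_Ioo, ← himg]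
      rw [integral_image_eq_integral_abs_deriv_smul measurableSet_Ioi
        (fun u (hu : u ∈ Set.Ioi B⁻¹) =>
          (hasDerivAt_inv (ne_of_gt (lt_trans hBinv hu))).hasDerivWithinAt)
        inv_injective.injOn (fun t : ℝ => (t : ℂ) ^ (s - 1) * f (t * I))]
      rw [show (I:ℂ) ^ k * ∫ u in Set.Ioi B⁻¹, (u : ℂ) ^ ((k : ℂ) - s - 1) * f (u * I)
          = ∫ u in Set.Ioi B⁻¹, I ^ m * ((u : ℂ) ^ ((k : ℂ) - s - 1) * f (u * I))
          from by rw [MeasureTheory.integral_const_mul, hIk]]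
      refine setIntegral_congr_fun measurableSet_Ioi fun u hu => ?_
      have hu0 : 0 < u := lt_trans hBinv hu
      have huC : (u:ℂ) ≠ 0 := Complex.ofReal_ne_zero.mpr hu0.ne'
      have habs : |(-(u^2)⁻¹)| = (u^2)⁻¹ := by
        rw [abs_neg, abs_inv, abs_of_pos (by positivity)]
      rw [habs, Complex.real_smul]
      push_cast
      rw [hmodular u hu0]
      have hargu : ((u:ℂ)).arg ≠ π := by
        rw [Complex.arg_ofReal_of_nonneg hu0.le]; exact (Real.pi_ne_zero).symm
      have hpow : ((u:ℂ)⁻¹) ^ (s-1) = (u:ℂ) ^ (1-s) := by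
        rw [Complex.inv_cpow _ _ hargu, ← Complex.cpow_neg, neg_sub]
      rw [hpow, mul_pow]
      have hstep : (((u:ℂ))^(2:ℕ))⁻¹ * ((u:ℂ)^(1-s) * (u:ℂ)^(m:ℂ)) = (u:ℂ)^((k:ℂ)-s-1) := by
        have h2 : ((u:ℂ)^(2:ℕ)) = (u:ℂ)^(2:ℂ) := by
          rw [show ((2:ℂ)) = ((2:ℕ):ℂ) by norm_num, Complex.cpow_natCast]
        rw [h2, ← Complex.cpow_neg, ← Complex.cpow_add _ _ huC, ← Complex.cpow_add _ _ huC]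
        congr 1
        rw [hkC]
        ring
      rw [show (u:ℂ)^((k:ℂ)-s-1) = ((u:ℂ)^(2:ℕ))⁻¹ * ((u:ℂ)^(1-s) * (u:ℂ)^(m:ℂ)) from hstep.symm,
        Complex.cpow_natCast]
      ring
    -- value of the constant tail integral
    have htail0 : (∫ u in Set.Ioi B⁻¹, (u : ℂ) ^ ((k : ℂ) - s - 1) * c 0)
        = -(B : ℂ) ^ (s - (k:ℂ)) / ((k:ℂ) - s) * c 0 := by
      rw [MeasureTheory.integral_mul_const, integral_Ioi_cpow_of_lt hksre hBinv]
      congr 1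
      rw [show (k:ℂ) - s - 1 + 1 = (k:ℂ) - s by ring]
      rw [Complex.ofReal_inv, Complex.inv_cpow _ _ hargB, ← Complex.cpow_neg, neg_sub]
    have htailint : IntegrableOn (fun u : ℝ => (u : ℂ) ^ ((k : ℂ) - s - 1) * c 0)
        (Set.Ioi B⁻¹) := (integrableOn_Ioi_cpow_of_lt hksre hBinv).mul_const _
    have htail : (∫ u in Set.Ioi B⁻¹, (u : ℂ) ^ ((k : ℂ) - s - 1) * f (u * I))
        = (∑' n : ℕ, c (n + 1) * (iGamma ((k:ℂ) - s) (2 * π * (n + 1) * B⁻¹)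
            / ((2 * π * (n + 1) : ℝ) : ℂ) ^ ((k:ℂ) - s)))
          + -(B : ℂ) ^ (s - (k:ℂ)) / ((k:ℂ) - s) * c 0 := by
      rw [show (∫ u in Set.Ioi B⁻¹, (u : ℂ) ^ ((k : ℂ) - s - 1) * f (u * I))
          = ∫ u in Set.Ioi B⁻¹, ((u : ℂ) ^ ((k : ℂ) - s - 1) * (f (u * I) - c 0)
            + (u : ℂ) ^ ((k : ℂ) - s - 1) * c 0)
          from setIntegral_congr_fun measurableSet_Ioi fun u _ => by ring]
      rw [integral_add swapI.1 htailint, swapI.2, htail0]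
    -- summability of the two tsums
    have hsum1 : Summable (fun n : ℕ => c (n + 1) *
        (iGamma s (2 * π * (n + 1) * B) / ((2 * π * (n + 1) : ℝ) : ℂ) ^ s)) :=
      (aux_S1 c hb s hB).of_norm
    have hsum2 : Summable (fun n : ℕ => c (n + 1) *
        (iGamma ((k:ℂ) - s) (2 * π * (n + 1) * B⁻¹)
          / ((2 * π * (n + 1) : ℝ) : ℂ) ^ ((k:ℂ) - s))) :=
      (aux_S1 c hb ((k:ℂ) - s) hBinv).of_norm
    -- combine the two series
    have hcomb : (∑' n : ℕ, c (n + 1) *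
          (iGamma s (2 * π * (n + 1) * B) / (2 * π * ((n : ℂ) + 1)) ^ s
            + I ^ k * iGamma ((k : ℂ) - s) (2 * π * (n + 1) / B)
                / (2 * π * ((n : ℂ) + 1)) ^ ((k : ℂ) - s)))
        = (∑' n : ℕ, c (n + 1) *
            (iGamma s (2 * π * (n + 1) * B) / ((2 * π * (n + 1) : ℝ) : ℂ) ^ s))
          + I ^ k * ∑' n : ℕ, c (n + 1) *
              (iGamma ((k:ℂ) - s) (2 * π * (n + 1) * B⁻¹)
                / ((2 * π * (n + 1) : ℝ) : ℂ) ^ ((k:ℂ) - s)) := by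
      rw [← tsum_mul_left, ← Summable.tsum_add hsum1 (hsum2.mul_left _)]
      refine tsum_congr fun n => ?_
      rw [← hbase n, ← harg n]
      ring
    -- final assembly
    rw [hsplit, hIocsplit, hc0val, hmodint, htail, swapB.2, hcomb]
    ring
end

section
/- Let B > 0, let 0 < β < B, and let c : ℕ → ℂ satisfy |c(n)| ≤ e^{2πnβ} for all sufficiently large n. Then for every s ∈ ℂ: (i) the series Σ_{n≥1} c(n) Γ(s, 2πnB)/(2πn)^s converges absolutely; and (ii) the function t ↦ Σ_{n≥1} c(n) e^{−2πnt} converges absolutely for every t ≥ B, the integral ∫_B^∞ t^{s−1} (Σ_{n≥1} c(n) e^{−2πnt}) dt converges absolutely, and it equals Σ_{n≥1} c(n) Γ(s, 2πnB)/(2πn)^s. -/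
open Complex Real Filter Topology MeasureTheory

open Set in
private lemma realAux {x a : ℝ} (σ : ℝ) (hx : 0 < x) (ha : 0 < a) :
    IntegrableOn (fun u : ℝ => u ^ σ * Real.exp (-(a * u))) (Ioi x) := by
  apply integrable_of_isBigO_exp_neg (half_pos ha) (a := x)
  · exact (continuousOn_id.rpow_const fun u hu =>
      Or.inl (hx.trans_le hu).ne').mul (Real.continuous_exp.comp (by fun_prop)).continuousOn
  · have h := isLittleO_rpow_exp_pos_mul_atTop σ (half_pos ha)
    have := h.mul_isBigO (Asymptotics.isBigO_refl (fun u : ℝ => Real.exp (-(a * u))) atTop)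
    apply this.isBigO.trans (Asymptotics.isBigO_of_le _ fun u => ?_)
    rw [← Real.exp_add]
    have : a / 2 * u + -(a * u) = -(a / 2 * u) := by ring
    rw [this]
    simp [Real.abs_exp]

private lemma normAux {t : ℝ} (a : ℝ) (s : ℂ) (ht : 0 < t) :
    ‖(t : ℂ) ^ (s - 1) * Complex.exp (-((a * t : ℝ) : ℂ))‖
      = t ^ (s.re - 1) * Real.exp (-(a * t)) := by
  rw [norm_mul,
    Complex.norm_cpow_eq_rpow_re_of_pos ht, Complex.norm_exp]
  simp

open Set in
private lemma contAux {x : ℝ} (a : ℝ) (s : ℂ) (hx : 0 < x) :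
    ContinuousOn (fun u : ℝ => (u : ℂ) ^ (s - 1) * Complex.exp (-((a * u : ℝ) : ℂ))) (Ioi x) := by
  apply ContinuousOn.mul
  · apply continuousOn_of_forall_continuousAt
    intro u hu
    exact (continuousAt_cpow_const (ofReal_mem_slitPlane.2 (hx.trans hu))).comp
      continuous_ofReal.continuousAt
  · fun_prop

open Set in
private lemma cAux {x a : ℝ} (s : ℂ) (hx : 0 < x) (ha : 0 < a) :
    IntegrableOn (fun u : ℝ => (u : ℂ) ^ (s - 1) * Complex.exp (-((a * u : ℝ) : ℂ))) (Ioi x) := by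
  refine Integrable.mono' (realAux (s.re - 1) hx ha)
    (((contAux a s hx).aestronglyMeasurable measurableSet_Ioi)) ?_
  rw [ae_restrict_iff' measurableSet_Ioi]
  filter_upwards with u hu
  rw [normAux a s (hx.trans hu)]

private lemma integrable_tsum_aux {α : Type*} [MeasurableSpace α] {μ : Measure α}
    {F : ℕ → α → ℂ} (hF_int : ∀ i, Integrable (F i) μ)
    (hF_sum : Summable fun i => ∫ a, ‖F i a‖ ∂μ) :
    Integrable (fun a => ∑' i, F i a) μ := by
  have hf'' : ∀ i, AEMeasurable (fun x => (‖F i x‖₊ : ENNReal)) μ :=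
    fun i => (hF_int i).1.nnnorm.aemeasurable.coe_nnreal_ennreal
  have hf' : ∑' i, ∫⁻ a, ‖F i a‖₊ ∂μ ≠ ⊤ := by
    have h (i : ℕ) : ∫⁻ a, ‖F i a‖₊ ∂μ = ‖(∫ a, ‖F i a‖ ∂μ)‖₊ := by
      rw [lintegral_coe_eq_integral (fun a => ‖F i a‖₊) (hF_int i).norm, ENNReal.coe_nnreal_eq,
        coe_nnnorm, Real.norm_of_nonneg (integral_nonneg fun a => norm_nonneg _)]
      simp only [coe_nnnorm]
    rw [funext h, ← ENNReal.coe_tsum]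
    · exact ENNReal.coe_ne_top
    · simp_rw [← NNReal.summable_coe, coe_nnnorm]
      exact hF_sum.abs
  have hhh : ∀ᵐ a ∂μ, Summable fun n => (‖F n a‖₊ : NNReal) := by
    rw [← lintegral_tsum hf''] at hf'
    refine (ae_lt_top' (AEMeasurable.ennreal_tsum hf'') hf').mono fun x hx => ?_
    exact ENNReal.tsum_coe_ne_top_iff_summable.mp hx.ne
  constructor
  · apply aestronglyMeasurable_of_tendsto_ae (f := fun N a => ∑ i ∈ Finset.range N, F i a) atTop
    · exact fun N => Finset.aestronglyMeasurable_fun_sum _ fun i _ => (hF_int i).1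
    · filter_upwards [hhh] with a ha
      have hsa : Summable fun n => F n a := Summable.of_nnnorm ha
      exact hsa.hasSum.tendsto_sum_nat
  · have : ∫⁻ a, ‖∑' i, F i a‖₊ ∂μ < ⊤ := by
      calc ∫⁻ a, ‖∑' i, F i a‖₊ ∂μ ≤ ∫⁻ a, ∑' i, (‖F i a‖₊ : ENNReal) ∂μ := by
            apply lintegral_mono_ae
            filter_upwards [hhh] with a ha
            calc (‖∑' i, F i a‖₊ : ENNReal) ≤ ((∑' i, ‖F i a‖₊ : NNReal) : ENNReal) :=
                  ENNReal.coe_le_coe.mpr (nnnorm_tsum_le ha)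
              _ = ∑' i, (‖F i a‖₊ : ENNReal) := ENNReal.coe_tsum ha
        _ = ∑' i, ∫⁻ a, ‖F i a‖₊ ∂μ := lintegral_tsum hf''
        _ < ⊤ := hf'.lt_top
    exact this

open Set in
private lemma valAux {B a : ℝ} (s : ℂ) (hB : 0 < B) (ha : 0 < a) :
    ∫ t in Ioi B, (t : ℂ) ^ (s - 1) * Complex.exp (-((a * t : ℝ) : ℂ))
      = iGamma s (a * B) / (a : ℂ) ^ s := by
  have key := integral_comp_mul_left_Ioi
    (fun u : ℝ => (u : ℂ) ^ (s - 1) * Complex.exp (-(u : ℂ))) B ha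
  have hg : ∀ t ∈ Ioi B, ((a * t : ℝ) : ℂ) ^ (s - 1) * Complex.exp (-((a * t : ℝ) : ℂ))
      = (a : ℂ) ^ (s - 1) * ((t : ℂ) ^ (s - 1) * Complex.exp (-((a * t : ℝ) : ℂ))) := by
    intro t ht
    rw [Complex.ofReal_mul, mul_cpow_ofReal_nonneg ha.le (hB.trans ht).le]
    ring
  rw [setIntegral_congr_fun measurableSet_Ioi hg, integral_const_mul, real_smul,
    Complex.ofReal_inv] at key
  have hne : (a : ℂ) ≠ 0 := Complex.ofReal_ne_zero.mpr ha.ne'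
  have h1 : (a : ℂ) ^ (s - 1) ≠ 0 := by
    simp [Complex.cpow_eq_zero_iff, hne]
  have hpow : (a : ℂ) ^ s = (a : ℂ) ^ (s - 1) * a := by
    conv_lhs => rw [show s = (s - 1) + 1 by ring, Complex.cpow_add _ _ hne, Complex.cpow_one]
  rw [hpow, eq_div_iff (mul_ne_zero h1 hne)]
  field_simp at key
  rw [iGamma]
  push_cast [Complex.ofReal_mul] at key ⊢
  linear_combination key

open Set in
/-- for coefficients of subcritical exponential growth
`|c(n)| ≤ e^{2πnβ}` with `β < B`, the incomplete-gamma series converges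
absolutely for every `s`, and computes the Mellin-type integral over `(B, ∞)`. -/
theorem stmt_7 (B β : ℝ) (hβ : 0 < β) (hβB : β < B) (c : ℕ → ℂ)
    (hc : ∀ᶠ n : ℕ in atTop, ‖c n‖ ≤ Real.exp (2 * π * n * β)) (s : ℂ) :
    Summable (fun n : ℕ =>
      ‖c (n + 1) * iGamma s (2 * π * (n + 1) * B) / (2 * π * ((n : ℂ) + 1)) ^ s‖) ∧
    (∀ t : ℝ, B ≤ t →
      Summable (fun n : ℕ => ‖c (n + 1) * Complex.exp (-(2 * π * ((n : ℝ) + 1) * t))‖)) ∧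
    IntegrableOn (fun t : ℝ =>
      (t : ℂ) ^ (s - 1) * ∑' n : ℕ, c (n + 1) * Complex.exp (-(2 * π * ((n : ℝ) + 1) * t)))
      (Set.Ioi B) ∧
    ∫ t in Set.Ioi B,
        (t : ℂ) ^ (s - 1) * ∑' n : ℕ, c (n + 1) * Complex.exp (-(2 * π * ((n : ℝ) + 1) * t))
      = ∑' n : ℕ, c (n + 1) * iGamma s (2 * π * (n + 1) * B)
          / (2 * π * ((n : ℂ) + 1)) ^ s := by
  have hB : 0 < B := hβ.trans hβB
  have h2π : (0:ℝ) < 2 * π := by positivity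
  have han : ∀ n : ℕ, (0:ℝ) < 2 * π * ((n:ℝ) + 1) := fun n => by positivity
  obtain ⟨N, hN⟩ := eventually_atTop.1 hc
  -- the basic building blocks
  set G : ℕ → ℝ → ℂ := fun n t =>
    (t : ℂ) ^ (s - 1) * Complex.exp (-((2 * π * ((n:ℝ) + 1) * t : ℝ) : ℂ)) with hGdef
  have hGint : ∀ n, IntegrableOn (G n) (Ioi B) := fun n => cAux s hB (han n)
  have hFint : ∀ n, IntegrableOn (fun t => c (n+1) * G n t) (Ioi B) :=
    fun n => (hGint n).const_mul _
  have hH : ∀ (n : ℕ) (t : ℝ),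
      (t : ℂ) ^ (s - 1) * (c (n+1) * Complex.exp (-(2 * π * ((n : ℝ) + 1) * t)))
        = c (n+1) * G n t := by
    intro n t
    rw [hGdef]
    push_cast
    ring_nf
  -- the dominating integral
  set K : ℝ := ∫ t in Ioi B, t ^ (s.re - 1) * Real.exp (-(2 * π * t)) with hKdef
  have hK0 : 0 ≤ K := by
    apply setIntegral_nonneg measurableSet_Ioi
    intro t ht
    exact mul_nonneg (Real.rpow_nonneg (hB.trans ht).le _) (Real.exp_nonneg _)
  -- norm-integral bound
  have hbound : ∀ n : ℕ, ∫ t in Ioi B, ‖c (n+1) * G n t‖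
      ≤ (‖c (n+1)‖ * Real.exp (-(2 * π * n * B))) * K := by
    intro n
    have hint2 : IntegrableOn
        (fun t : ℝ => (‖c (n+1)‖ * Real.exp (-(2 * π * n * B)))
          * (t ^ (s.re - 1) * Real.exp (-(2 * π * t)))) (Ioi B) :=
      (realAux (s.re - 1) hB h2π).const_mul _
    have hle : ∀ t ∈ Ioi B, ‖c (n+1) * G n t‖
        ≤ (‖c (n+1)‖ * Real.exp (-(2 * π * n * B)))
          * (t ^ (s.re - 1) * Real.exp (-(2 * π * t))) := by
      intro t ht
      rw [norm_mul, hGdef, normAux _ s (hB.trans ht)]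
      have hsplit : Real.exp (-(2 * π * ((n:ℝ) + 1) * t))
          = Real.exp (-(2 * π * n * t)) * Real.exp (-(2 * π * t)) := by
        rw [← Real.exp_add]; ring_nf
      have h2 : Real.exp (-(2 * π * (n:ℝ) * t)) ≤ Real.exp (-(2 * π * n * B)) := by
        apply Real.exp_le_exp.2
        have : (0:ℝ) ≤ 2 * π * n := by positivity
        nlinarith [le_of_lt (Set.mem_Ioi.1 ht)]
      calc ‖c (n+1)‖ * (t ^ (s.re - 1) * Real.exp (-(2 * π * ((n:ℝ) + 1) * t)))
          = (‖c (n+1)‖ * Real.exp (-(2 * π * n * t)))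
            * (t ^ (s.re - 1) * Real.exp (-(2 * π * t))) := by rw [hsplit]; ring
        _ ≤ (‖c (n+1)‖ * Real.exp (-(2 * π * n * B)))
            * (t ^ (s.re - 1) * Real.exp (-(2 * π * t))) := by
            apply mul_le_mul_of_nonneg_right
            · exact mul_le_mul_of_nonneg_left h2 (norm_nonneg _)
            · exact mul_nonneg (Real.rpow_nonneg (hB.trans ht).le _) (Real.exp_nonneg _)
    calc ∫ t in Ioi B, ‖c (n+1) * G n t‖
        ≤ ∫ t in Ioi B, (‖c (n+1)‖ * Real.exp (-(2 * π * n * B)))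
            * (t ^ (s.re - 1) * Real.exp (-(2 * π * t))) :=
          setIntegral_mono_on (hFint n).norm hint2 measurableSet_Ioi hle
      _ = (‖c (n+1)‖ * Real.exp (-(2 * π * n * B))) * K := by
          rw [integral_const_mul]
  -- summability of the norm integrals
  have hsum : Summable fun n : ℕ => ∫ t in Ioi B, ‖c (n+1) * G n t‖ := by
    apply Summable.of_norm_bounded_eventually_nat
      (g := fun n => (Real.exp (2 * π * β) * Real.exp (-(2 * π * (B - β))) ^ n) * K)
    · apply Summable.mul_right
      apply Summable.mul_left
      exact summable_geometric_of_lt_one (Real.exp_nonneg _)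
        (Real.exp_lt_one_iff.2 (by nlinarith))
    · filter_upwards [eventually_ge_atTop N] with n hn
      have hcn : ‖c (n+1)‖ ≤ Real.exp (2 * π * (n+1 : ℕ) * β) := hN (n+1) (le_trans hn (by omega))
      have h0 : 0 ≤ ∫ t in Ioi B, ‖c (n+1) * G n t‖ :=
        setIntegral_nonneg measurableSet_Ioi fun t _ => norm_nonneg _
      rw [Real.norm_of_nonneg h0]
      refine le_trans (hbound n) ?_
      apply mul_le_mul_of_nonneg_right _ hK0
      calc ‖c (n+1)‖ * Real.exp (-(2 * π * n * B))
          ≤ Real.exp (2 * π * (n+1 : ℕ) * β) * Real.exp (-(2 * π * n * B)) :=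
            mul_le_mul_of_nonneg_right hcn (Real.exp_nonneg _)
        _ = Real.exp (2 * π * β) * Real.exp (-(2 * π * (B - β))) ^ n := by
            rw [← Real.exp_nat_mul, ← Real.exp_add, ← Real.exp_add]
            push_cast
            ring_nf
  -- values of the integrals
  have hval : ∀ n : ℕ, c (n + 1) * iGamma s (2 * π * (n + 1) * B) / (2 * π * ((n : ℂ) + 1)) ^ s
      = ∫ t in Ioi B, c (n+1) * G n t := by
    intro n
    rw [hGdef, integral_const_mul, valAux s hB (han n), mul_div_assoc]
    congr 2
    push_cast
    ring
  refine ⟨?_, ?_, ?_, ?_⟩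
  · -- clause 1
    apply Summable.of_nonneg_of_le (fun n => norm_nonneg _) _ hsum
    intro n
    rw [hval n]
    exact norm_integral_le_integral_norm _
  · -- clause 2
    intro t ht
    have htβ : β < t := lt_of_lt_of_le hβB ht
    apply Summable.of_norm_bounded_eventually_nat
      (g := fun n => Real.exp (-(2 * π * (t - β))) * Real.exp (-(2 * π * (t - β))) ^ n)
    · exact (summable_geometric_of_lt_one (Real.exp_nonneg _)
        (Real.exp_lt_one_iff.2 (by nlinarith))).mul_left _
    · filter_upwards [eventually_ge_atTop N] with n hn
      have hcn : ‖c (n+1)‖ ≤ Real.exp (2 * π * (n+1 : ℕ) * β) := hN (n+1) (le_trans hn (by omega))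
      have hexp : Complex.exp (-(2 * π * ((n : ℝ) + 1) * t))
          = Complex.exp (-((2 * π * ((n:ℝ) + 1) * t : ℝ) : ℂ)) := by push_cast; ring_nf
      have hne : ‖Complex.exp (-(2 * π * ((n : ℝ) + 1) * t) : ℂ)‖
          = Real.exp (-(2 * π * ((n:ℝ) + 1) * t)) := by
        rw [hexp, ← Complex.ofReal_neg, Complex.norm_exp_ofReal]
      rw [norm_norm, norm_mul, hne]
      calc ‖c (n+1)‖ * Real.exp (-(2 * π * ((n:ℝ) + 1) * t))
          ≤ Real.exp (2 * π * (n+1 : ℕ) * β) * Real.exp (-(2 * π * ((n:ℝ) + 1) * t)) :=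
            mul_le_mul_of_nonneg_right hcn (Real.exp_nonneg _)
        _ = Real.exp (-(2 * π * (t - β))) * Real.exp (-(2 * π * (t - β))) ^ n := by
            rw [← Real.exp_nat_mul, ← Real.exp_add, ← Real.exp_add]
            push_cast
            ring_nf
  · -- clause 3
    have hfun : (fun t : ℝ => (t : ℂ) ^ (s - 1)
        * ∑' n : ℕ, c (n + 1) * Complex.exp (-(2 * π * ((n : ℝ) + 1) * t)))
        = fun t : ℝ => ∑' n : ℕ, c (n+1) * G n t := by
      funext t
      rw [← tsum_mul_left]
      exact tsum_congr fun n => hH n t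
    rw [hfun]
    exact integrable_tsum_aux hFint hsum
  · -- clause 4
    have hfun : (fun t : ℝ => (t : ℂ) ^ (s - 1)
        * ∑' n : ℕ, c (n + 1) * Complex.exp (-(2 * π * ((n : ℝ) + 1) * t)))
        = fun t : ℝ => ∑' n : ℕ, c (n+1) * G n t := by
      funext t
      rw [← tsum_mul_left]
      exact tsum_congr fun n => hH n t
    calc ∫ t in Ioi B, (t : ℂ) ^ (s - 1)
          * ∑' n : ℕ, c (n + 1) * Complex.exp (-(2 * π * ((n : ℝ) + 1) * t))
        = ∫ t in Ioi B, ∑' n : ℕ, c (n+1) * G n t := by rw [hfun]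
      _ = ∑' n : ℕ, ∫ t in Ioi B, c (n+1) * G n t :=
          (integral_tsum_of_summable_integral_norm hFint hsum).symm
      _ = ∑' n : ℕ, c (n + 1) * iGamma s (2 * π * (n + 1) * B) / (2 * π * ((n : ℂ) + 1)) ^ s :=
          tsum_congr fun n => (hval n).symm
end

section
/- Let f = g/h be a meromorphic modular form of weight k for SL(2,ℤ) such that h(it) ≠ 0 for every t > 0, and suppose f is regular at the cusp: there exist T > 0 and c : ℕ → ℂ such that h(τ) ≠ 0 and f(τ) = Σ_{n≥0} c(n) e^{2πinτ} (absolutely convergent) for all τ with Im τ > T. Then for every s ∈ ℂ with Re(s) > max(k, 0), the integral ∫₀^∞ t^{s−1}(f(it) − c(0)) dt converges absolutely. -/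
set_option maxHeartbeats 1000000


open Complex Real Filter Topology MeasureTheory

/-- the regularized L-integral of a meromorphic modular form `f = g/h`
without poles on the positive imaginary axis which is regular at the cusp
converges absolutely for `Re s > max(k, 0)`. -/
theorem stmt_8 (k₁ k₂ k : ℤ) (g h f : ℂ → ℂ)
    (hg : IsModularForm k₁ g) (hh : IsModularForm k₂ h)
    (hhne : ∃ z : ℂ, 0 < z.im ∧ h z ≠ 0)
    (hk : k = k₁ - k₂)
    (hf : ∀ z : ℂ, f z = g z / h z)
    (haxis : ∀ t : ℝ, 0 < t → h (t * I) ≠ 0)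
    (T : ℝ) (hT : 0 < T) (c : ℕ → ℂ)
    (hcusp : ∀ τ : ℂ, T < τ.im → h τ ≠ 0 ∧
      Summable (fun n : ℕ => ‖c n * Complex.exp (2 * π * I * n * τ)‖) ∧
      f τ = ∑' n : ℕ, c n * Complex.exp (2 * π * I * n * τ)) :
    ∀ s : ℂ, max (k : ℝ) 0 < s.re →
      IntegrableOn (fun t : ℝ => (t : ℂ) ^ (s - 1) * (f (t * I) - c 0)) (Set.Ioi 0) := by
  intro s hs
  have hs0 : 0 < s.re := (le_max_right _ 0).trans_lt hs
  have hsk : (k : ℝ) < s.re := (le_max_left _ _).trans_lt hs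
  obtain ⟨hgd, -, hgmod, -⟩ := hg
  obtain ⟨hhd, -, hhmod, -⟩ := hh
  set φ : ℝ → ℂ := fun t : ℝ => (t : ℂ) ^ (s - 1) * (f (t * I) - c 0) with hφ
  set M : ℝ := T + 1 with hMdef
  have hM0 : (0:ℝ) < M := by positivity
  have hMT : T < M := by simp [hMdef]
  have him : ∀ v : ℝ, ((v:ℂ)*I).im = v := fun v => by simp
  have hexp : ∀ (n : ℕ) (u : ℝ),
      Complex.exp (2*π*I*(n:ℂ)*((u:ℂ)*I)) = ((Real.exp (-(2*π*n*u)) : ℝ) : ℂ) := by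
    intro n u
    rw [Complex.ofReal_exp]
    congr 1
    push_cast
    rw [show (2*π*I*(n:ℂ)*((u:ℂ)*I)) = 2*π*(n:ℂ)*(u:ℂ)*(I*I) by ring, Complex.I_mul_I]
    ring
  have hnorm : ∀ (n : ℕ) (u : ℝ),
      ‖c n * Complex.exp (2*π*I*(n:ℂ)*((u:ℂ)*I))‖ = ‖c n‖ * Real.exp (-(2*π*n*u)) := by
    intro n u
    rw [norm_mul, hexp, Complex.norm_real, Real.norm_eq_abs, abs_of_pos (Real.exp_pos _)]
  -- continuity of φ on Ioi 0
  have hφcont : ContinuousOn φ (Set.Ioi 0) := by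
    have hmaps : Set.MapsTo (fun t : ℝ => (t:ℂ)*I) (Set.Ioi 0) {z : ℂ | 0 < z.im} := by
      intro t ht; simpa using ht
    have hc : Continuous (fun t : ℝ => (t:ℂ)*I) := Complex.continuous_ofReal.mul continuous_const
    have hgc : ContinuousOn (fun t : ℝ => g ((t:ℂ)*I)) (Set.Ioi 0) :=
      hgd.continuousOn.comp hc.continuousOn hmaps
    have hhc : ContinuousOn (fun t : ℝ => h ((t:ℂ)*I)) (Set.Ioi 0) :=
      hhd.continuousOn.comp hc.continuousOn hmaps
    have hA : ContinuousOn (fun t : ℝ => (t:ℂ) ^ (s-1)) (Set.Ioi 0) := by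
      intro t ht
      refine ((continuousAt_cpow_const ?_).comp
        Complex.continuous_ofReal.continuousAt).continuousWithinAt
      exact Or.inl (by simpa using ht)
    have hB : ContinuousOn
        (fun t : ℝ => (t:ℂ) ^ (s-1) * (g ((t:ℂ)*I) / h ((t:ℂ)*I) - c 0)) (Set.Ioi 0) :=
      hA.mul ((hgc.div hhc (fun t ht => haxis t ht)).sub continuousOn_const)
    refine hB.congr (fun t ht => ?_)
    show (t:ℂ) ^ (s-1) * (f ((t:ℂ)*I) - c 0) = (t:ℂ) ^ (s-1) * (g ((t:ℂ)*I) / h ((t:ℂ)*I) - c 0)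
    rw [hf]
  -- the tail constant and exponential bound for large u
  set C' : ℝ := ∑' n : ℕ, ‖c (n+1) * Complex.exp (2*π*I*((n+1:ℕ):ℂ)*((M:ℂ)*I))‖ with hC'
  have hC'0 : 0 ≤ C' := tsum_nonneg fun n => norm_nonneg _
  have hbig : ∀ u : ℝ, M ≤ u →
      ‖f ((u:ℂ)*I) - c 0‖ ≤ C' * Real.exp (2*π*M) * Real.exp (-(2*π)*u) := by
    intro u hu
    obtain ⟨-, hsumU, hval⟩ := hcusp ((u:ℂ)*I) (by rw [him]; linarith)
    obtain ⟨-, hsumM, -⟩ := hcusp ((M:ℂ)*I) (by rw [him]; linarith)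
    have hsumU1 : Summable (fun n : ℕ => ‖c (n+1) * Complex.exp (2*π*I*((n+1:ℕ):ℂ)*((u:ℂ)*I))‖) :=
      (summable_nat_add_iff 1).mpr hsumU
    have hsumM1 : Summable (fun n : ℕ => ‖c (n+1) * Complex.exp (2*π*I*((n+1:ℕ):ℂ)*((M:ℂ)*I))‖) :=
      (summable_nat_add_iff 1).mpr hsumM
    have h0 : f ((u:ℂ)*I) - c 0 =
        ∑' n : ℕ, c (n+1) * Complex.exp (2*π*I*((n+1:ℕ):ℂ)*((u:ℂ)*I)) := by
      rw [hval, Summable.tsum_eq_zero_add hsumU.of_norm]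
      simp
    have hpt : ∀ n : ℕ, ‖c (n+1) * Complex.exp (2*π*I*((n+1:ℕ):ℂ)*((u:ℂ)*I))‖ ≤
        ‖c (n+1) * Complex.exp (2*π*I*((n+1:ℕ):ℂ)*((M:ℂ)*I))‖ * Real.exp (-(2*π)*(u-M)) := by
      intro n
      rw [hnorm, hnorm, mul_assoc (‖c (n+1)‖), ← Real.exp_add]
      refine mul_le_mul_of_nonneg_left (Real.exp_le_exp.2 ?_) (norm_nonneg _)
      have hm : (1:ℝ) ≤ ((n+1:ℕ):ℝ) := by exact_mod_cast Nat.succ_le_succ (Nat.zero_le n)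
      nlinarith [mul_nonneg (mul_nonneg Real.pi_pos.le (sub_nonneg.2 hm)) (sub_nonneg.2 hu)]
    calc ‖f ((u:ℂ)*I) - c 0‖
        = ‖∑' n : ℕ, c (n+1) * Complex.exp (2*π*I*((n+1:ℕ):ℂ)*((u:ℂ)*I))‖ := by rw [h0]
      _ ≤ ∑' n : ℕ, ‖c (n+1) * Complex.exp (2*π*I*((n+1:ℕ):ℂ)*((u:ℂ)*I))‖ :=
          norm_tsum_le_tsum_norm hsumU1
      _ ≤ ∑' n : ℕ, ‖c (n+1) * Complex.exp (2*π*I*((n+1:ℕ):ℂ)*((M:ℂ)*I))‖ * Real.exp (-(2*π)*(u-M)) :=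
          Summable.tsum_le_tsum hpt hsumU1 (hsumM1.mul_right _)
      _ = C' * Real.exp (-(2*π)*(u-M)) := tsum_mul_right
      _ = _ := by
          rw [show (-(2*π)*(u-M)) = 2*π*M + (-(2*π)*u) by ring, Real.exp_add, ← mul_assoc]
  -- modular transformation on the imaginary axis
  have htrans : ∀ t : ℝ, 0 < t →
      f ((t:ℂ)*I) = ((t:ℂ)*I) ^ (-k) * f (((t⁻¹ : ℝ) : ℂ)*I) := by
    intro t ht
    have hz : ((t:ℂ)*I) ≠ 0 := mul_ne_zero (by exact_mod_cast ht.ne') I_ne_zero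
    have him' : 0 < ((t:ℂ)*I).im := by simpa using ht
    have hneg : -((t:ℂ)*I)⁻¹ = ((t⁻¹:ℝ):ℂ)*I := by
      rw [mul_inv, Complex.inv_I]
      push_cast
      ring
    have key : f (((t⁻¹:ℝ):ℂ)*I) = ((t:ℂ)*I) ^ k * f ((t:ℂ)*I) := by
      rw [← hneg, hf, hf, hgmod _ him', hhmod _ him', mul_div_mul_comm,
        ← zpow_sub₀ hz, ← hk]
    rw [key, ← mul_assoc, zpow_neg, inv_mul_cancel₀ (zpow_ne_zero _ hz), one_mul]
  -- norm of the cpow factor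
  have hcpow : ∀ t : ℝ, 0 < t → ‖(t:ℂ) ^ (s-1)‖ = t ^ (s.re - 1) := by
    intro t ht
    rw [Complex.norm_cpow_eq_rpow_re_of_pos ht, Complex.sub_re, Complex.one_re]
  -- Part 1 : Ioi M
  have part1 : IntegrableOn φ (Set.Ioi M) := by
    refine Integrable.mono'
      (g := fun t : ℝ => (C' * Real.exp (2*π*M) * Real.exp ((1-2*π)*M)) *
        (Real.exp (-t) * t ^ (s.re - 1))) ?_ ?_ ?_
    · exact ((Real.GammaIntegral_convergent hs0).mono_set
        (Set.Ioi_subset_Ioi hM0.le)).const_mul _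
    · exact ((hφcont.mono (Set.Ioi_subset_Ioi hM0.le)).aestronglyMeasurable measurableSet_Ioi)
    · filter_upwards [ae_restrict_mem measurableSet_Ioi] with t ht
      have htM : M ≤ t := (Set.mem_Ioi.mp ht).le
      have ht0 : 0 < t := hM0.trans_le htM
      have h1 : Real.exp (-(2*π)*t) = Real.exp (-t) * Real.exp ((1-2*π)*t) := by
        rw [← Real.exp_add]; ring_nf
      have h2 : Real.exp ((1-2*π)*t) ≤ Real.exp ((1-2*π)*M) := by
        apply Real.exp_le_exp.2
        nlinarith [Real.pi_gt_three]
      calc ‖φ t‖ = t ^ (s.re - 1) * ‖f ((t:ℂ)*I) - c 0‖ := by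
            rw [hφ, norm_mul, hcpow t ht0]
        _ ≤ t ^ (s.re - 1) * (C' * Real.exp (2*π*M) * Real.exp (-(2*π)*t)) :=
            mul_le_mul_of_nonneg_left (hbig t htM) (Real.rpow_nonneg ht0.le _)
        _ = (C' * Real.exp (2*π*M)) * (Real.exp (-t) * t ^ (s.re - 1)) *
              Real.exp ((1-2*π)*t) := by rw [h1]; ring
        _ ≤ (C' * Real.exp (2*π*M)) * (Real.exp (-t) * t ^ (s.re - 1)) *
              Real.exp ((1-2*π)*M) := by
            refine mul_le_mul_of_nonneg_left h2 ?_
            have := Real.rpow_nonneg ht0.le (s.re - 1)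
            positivity
        _ = _ := by ring
  -- Part 2 : Ioc M⁻¹ M
  have part2 : IntegrableOn φ (Set.Ioc M⁻¹ M) := by
    have hsub : Set.Icc M⁻¹ M ⊆ Set.Ioi 0 := by
      intro x hx
      exact lt_of_lt_of_le (by positivity) hx.1
    exact ((hφcont.mono hsub).integrableOn_compact isCompact_Icc).mono_set Set.Ioc_subset_Icc_self
  -- Part 3 : Ioc 0 M⁻¹
  have part3 : IntegrableOn φ (Set.Ioc 0 M⁻¹) := by
    set B : ℝ := C' * Real.exp (2*π*M) + ‖c 0‖ with hB
    have hfb : ∀ u : ℝ, M ≤ u → ‖f ((u:ℂ)*I)‖ ≤ B := by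
      intro u hu
      have h1 : ‖f ((u:ℂ)*I)‖ ≤ ‖f ((u:ℂ)*I) - c 0‖ + ‖c 0‖ := by
        simpa using norm_add_le (f ((u:ℂ)*I) - c 0) (c 0)
      have h2 : Real.exp (-(2*π)*u) ≤ 1 := by
        rw [Real.exp_le_one_iff]
        nlinarith [Real.pi_pos, hM0.trans_le hu]
      have h3 : C' * Real.exp (2*π*M) * Real.exp (-(2*π)*u) ≤ C' * Real.exp (2*π*M) * 1 :=
        mul_le_mul_of_nonneg_left h2 (by positivity)
      have := hbig u hu
      rw [hB]
      linarith
    refine Integrable.mono'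
      (g := fun t : ℝ => B * t ^ (s.re - 1 + (-k : ℤ)) + ‖c 0‖ * t ^ (s.re - 1)) ?_ ?_ ?_
    · have i1 : IntegrableOn (fun t : ℝ => t ^ (s.re - 1 + (-k : ℤ))) (Set.Ioc 0 M⁻¹) := by
        have := intervalIntegral.intervalIntegrable_rpow'
          (r := s.re - 1 + (-k : ℤ)) (by push_cast; linarith) (a := 0) (b := M⁻¹)
        rwa [intervalIntegrable_iff_integrableOn_Ioc_of_le (by positivity)] at this
      have i2 : IntegrableOn (fun t : ℝ => t ^ (s.re - 1)) (Set.Ioc 0 M⁻¹) := by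
        have := intervalIntegral.intervalIntegrable_rpow'
          (r := s.re - 1) (by linarith) (a := 0) (b := M⁻¹)
        rwa [intervalIntegrable_iff_integrableOn_Ioc_of_le (by positivity)] at this
      exact (i1.const_mul B).add (i2.const_mul _)
    · exact ((hφcont.mono Set.Ioc_subset_Ioi_self).aestronglyMeasurable measurableSet_Ioc)
    · filter_upwards [ae_restrict_mem measurableSet_Ioc] with t ht
      obtain ⟨ht0, htle⟩ := ht
      have hMt : M ≤ t⁻¹ := by
        rw [← inv_inv M]
        exact inv_anti₀ ht0 htle
      have hzn : ‖f ((t:ℂ)*I)‖ ≤ t ^ ((-k : ℤ) : ℝ) * B := by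
        have e := htrans t ht0
        have hnz : ‖((t:ℂ)*I) ^ (-k)‖ = t ^ ((-k : ℤ) : ℝ) := by
          rw [norm_zpow, norm_mul, Complex.norm_real, Complex.norm_I, mul_one,
            Real.norm_eq_abs, abs_of_pos ht0, Real.rpow_intCast]
        calc ‖f ((t:ℂ)*I)‖ = ‖((t:ℂ)*I) ^ (-k)‖ * ‖f (((t⁻¹:ℝ):ℂ)*I)‖ := by
              rw [e, norm_mul]
          _ ≤ t ^ ((-k : ℤ) : ℝ) * B := by
              rw [hnz]
              exact mul_le_mul_of_nonneg_left (hfb _ hMt) (Real.rpow_nonneg ht0.le _)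
      calc ‖φ t‖ = t ^ (s.re - 1) * ‖f ((t:ℂ)*I) - c 0‖ := by
            rw [hφ, norm_mul, hcpow t ht0]
        _ ≤ t ^ (s.re - 1) * (t ^ ((-k : ℤ) : ℝ) * B + ‖c 0‖) := by
            refine mul_le_mul_of_nonneg_left ?_ (Real.rpow_nonneg ht0.le _)
            have := norm_sub_le (f ((t:ℂ)*I)) (c 0)
            linarith
        _ = B * t ^ (s.re - 1 + (-k : ℤ)) + ‖c 0‖ * t ^ (s.re - 1) := by
            rw [Real.rpow_add ht0]
            ring
  have hδM : M⁻¹ ≤ M := by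
    rw [inv_le_iff_one_le_mul₀ hM0]
    nlinarith
  have hunion : Set.Ioi (0:ℝ) = (Set.Ioc 0 M⁻¹ ∪ Set.Ioc M⁻¹ M) ∪ Set.Ioi M := by
    rw [Set.Ioc_union_Ioc_eq_Ioc (by positivity) hδM, Set.Ioc_union_Ioi_eq_Ioi hM0.le]
  rw [hunion]
  exact (part3.union part2).union part1
end

section
/- Let f = g/h be a meromorphic modular form of weight k for SL(2,ℤ) such that h(it) ≠ 0 for every t > 0, and suppose f is regular at the cusp: there exist T > 0 and c : ℕ → ℂ such that h(τ) ≠ 0 and f(τ) = Σ_{n≥0} c(n) e^{2πinτ} for all τ with Im τ > T. Then for every B > 0 and every s ∈ ℂ with Re(s) > max(k, 0), ∫₀^∞ t^{s−1}(f(it) − c(0)) dt = −c(0)·(B^s/s + i^k B^{s−k}/(k−s)) + ∫_B^∞ t^{s−1}(f(it) − c(0)) dt + i^k ∫_{1/B}^∞ t^{k−s−1}(f(it) − c(0)) dt, all three integrals converging absolutely. -/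
open Complex Real Filter Topology MeasureTheory



lemma tail_int (G : ℝ → ℂ) (a : ℂ) (hcont : ContinuousOn G (Set.Ioi 0))
    {T' C : ℝ} (hC : 0 ≤ C)
    (hbnd : ∀ t : ℝ, T' ≤ t → ‖G t‖ ≤ C * Real.exp (-(2 * π) * t))
    {b : ℝ} (hb : 0 < b) :
    IntegrableOn (fun t : ℝ => (t : ℂ) ^ a * G t) (Set.Ioi b) := by
  have hcont2 : ContinuousOn (fun t : ℝ => (t : ℂ) ^ a * G t) (Set.Ioi 0) := fun t ht =>
    ((Complex.continuousAt_ofReal_cpow_const t a (Or.inr (ne_of_gt ht))).continuousWithinAt).mul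
      (hcont t ht)
  have hsub : Set.Ici b ⊆ Set.Ioi 0 := fun x hx => lt_of_lt_of_le hb hx
  have hloc : LocallyIntegrableOn (fun t : ℝ => (t : ℂ) ^ a * G t) (Set.Ici b) :=
    (hcont2.mono hsub).locallyIntegrableOn measurableSet_Ici
  have hO : (fun t : ℝ => (t : ℂ) ^ a * G t) =O[atTop] fun t => Real.exp (-π * t) := by
    rw [Asymptotics.isBigO_iff]
    refine ⟨C, ?_⟩
    have key : Tendsto (fun t : ℝ => t ^ a.re * Real.exp (-π * t)) atTop (𝓝 0) :=
      tendsto_rpow_mul_exp_neg_mul_atTop_nhds_zero _ _ Real.pi_pos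
    have hev1 : ∀ᶠ t : ℝ in atTop, t ^ a.re * Real.exp (-π * t) ≤ 1 :=
      key.eventually (eventually_le_nhds one_pos)
    filter_upwards [hev1, eventually_ge_atTop (max T' 1)] with t h1 h2
    have ht1 : (1:ℝ) ≤ t := le_trans (le_max_right _ _) h2
    have ht0 : (0:ℝ) < t := lt_of_lt_of_le one_pos ht1
    have hTt : T' ≤ t := le_trans (le_max_left _ _) h2
    have hnorm : ‖(t : ℂ) ^ a‖ = t ^ a.re := by
      rw [Complex.norm_cpow_eq_rpow_re_of_pos ht0]
    rw [norm_mul, hnorm]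
    calc t ^ a.re * ‖G t‖ ≤ t ^ a.re * (C * Real.exp (-(2 * π) * t)) := by
          exact mul_le_mul_of_nonneg_left (hbnd t hTt) (Real.rpow_nonneg ht0.le _)
      _ = (t ^ a.re * Real.exp (-π * t)) * (C * Real.exp (-π * t)) := by
          rw [show -(2 * π) * t = -π * t + -π * t by ring, Real.exp_add]; ring
      _ ≤ 1 * (C * Real.exp (-π * t)) := by
          exact mul_le_mul_of_nonneg_right h1
            (mul_nonneg hC (Real.exp_nonneg _))
      _ = C * ‖Real.exp (-π * t)‖ := by
          rw [one_mul, Real.norm_eq_abs, abs_of_pos (Real.exp_pos _)]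
  have hg : IntegrableAtFilter (fun t : ℝ => Real.exp (-π * t)) atTop :=
    ⟨Set.Ioi 0, Ioi_mem_atTop 0, exp_neg_integrableOn_Ioi 0 Real.pi_pos⟩
  exact (hloc.integrableOn_of_isBigO_atTop hO hg).mono_set Set.Ioi_subset_Ici_self


lemma f_rel {k₁ k₂ k : ℤ} {g h f : ℂ → ℂ}
    (hg2 : ∀ z : ℂ, 0 < z.im → g (-z⁻¹) = z ^ k₁ * g z)
    (hh2 : ∀ z : ℂ, 0 < z.im → h (-z⁻¹) = z ^ k₂ * h z)
    (hk : k = k₁ - k₂) (hf : ∀ z, f z = g z / h z)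
    {t : ℝ} (ht : 0 < t) :
    f ((t : ℂ)⁻¹ * I) = ((t : ℂ) * I) ^ k * f ((t : ℂ) * I) := by
  set z : ℂ := (t : ℂ) * I with hz
  have him : z.im = t := by simp [hz]
  have hzpos : 0 < z.im := by rw [him]; exact ht
  have hzne : z ≠ 0 := by
    intro h0
    rw [h0] at him
    simp at him
    exact ht.ne' him.symm
  have hinv : -z⁻¹ = (t : ℂ)⁻¹ * I := by
    rw [hz, mul_inv, Complex.inv_I]; ring
  calc f ((t : ℂ)⁻¹ * I) = f (-z⁻¹) := by rw [hinv]
    _ = g (-z⁻¹) / h (-z⁻¹) := hf _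
    _ = (z ^ k₁ * g z) / (z ^ k₂ * h z) := by rw [hg2 z hzpos, hh2 z hzpos]
    _ = (z ^ k₁ / z ^ k₂) * (g z / h z) := (mul_div_mul_comm _ _ _ _)
    _ = z ^ k * f z := by rw [← zpow_sub₀ hzne, ← hk, hf]


lemma exp_term_eq (t : ℝ) (n : ℕ) :
    Complex.exp (2 * π * I * n * ((t : ℂ) * I)) = ((Real.exp (-(2 * π) * (n * t)) : ℝ) : ℂ) := by
  rw [Complex.ofReal_exp]
  congr 1
  push_cast
  ring_nf
  rw [Complex.I_sq]
  ring

lemma term_norm (c : ℕ → ℂ) (t : ℝ) (n : ℕ) :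
    ‖c n * Complex.exp (2 * π * I * n * ((t : ℂ) * I))‖
      = ‖c n‖ * Real.exp (-(2 * π) * (n * t)) := by
  rw [norm_mul, exp_term_eq]
  rw [Complex.norm_real, Real.norm_eq_abs, abs_of_pos (Real.exp_pos _)]

lemma decay (f : ℂ → ℂ) (T : ℝ) (hT : 0 < T) (c : ℕ → ℂ)
    (hcusp : ∀ τ : ℂ, T < τ.im →
      Summable (fun n : ℕ => ‖c n * Complex.exp (2 * π * I * n * τ)‖) ∧
      f τ = ∑' n : ℕ, c n * Complex.exp (2 * π * I * n * τ)) :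
    ∃ C : ℝ, 0 ≤ C ∧ ∀ t : ℝ, T + 1 ≤ t →
      ‖f ((t : ℂ) * I) - c 0‖ ≤ C * Real.exp (-(2 * π) * t) := by
  set T' : ℝ := T + 1 with hT'
  have him : ∀ t : ℝ, ((t : ℂ) * I).im = t := by intro t; simp
  have hTlt : T < T' := by rw [hT']; linarith
  obtain ⟨hsumT, -⟩ := hcusp ((T' : ℂ) * I) (by rw [him]; exact hTlt)
  set S : ℝ := ∑' n : ℕ, ‖c (n + 1)‖ * Real.exp (-(2 * π) * ((n + 1) * T')) with hS
  have hsumT' : Summable (fun n : ℕ => ‖c n‖ * Real.exp (-(2 * π) * (n * T'))) := by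
    refine hsumT.congr fun n => ?_
    rw [term_norm]
  have hsumS : Summable (fun n : ℕ => ‖c (n + 1)‖ * Real.exp (-(2 * π) * ((n + 1) * T'))) := by
    have := (summable_nat_add_iff 1).2 hsumT'
    refine this.congr fun n => by push_cast; ring_nf
  have hS0 : 0 ≤ S :=
    tsum_nonneg fun n => mul_nonneg (norm_nonneg _) (Real.exp_nonneg _)
  refine ⟨S * Real.exp (2 * π * T'), mul_nonneg hS0 (Real.exp_nonneg _), ?_⟩
  intro t ht
  have htT : T < t := lt_of_lt_of_le hTlt ht
  obtain ⟨hsum, hexp⟩ := hcusp ((t : ℂ) * I) (by rw [him]; exact htT)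
  have hsum' : Summable (fun n : ℕ => c n * Complex.exp (2 * π * I * n * ((t : ℂ) * I))) :=
    hsum.of_norm
  rw [hexp, hsum'.tsum_eq_zero_add]
  have h0 : c 0 * Complex.exp (2 * π * I * (0 : ℕ) * ((t : ℂ) * I)) = c 0 := by
    norm_num
  rw [h0, add_sub_cancel_left]
  have hsumnorm : Summable
      (fun n : ℕ => ‖c (n + 1) * Complex.exp (2 * π * I * (n + 1 : ℕ) * ((t : ℂ) * I))‖) :=
    (summable_nat_add_iff 1).2 hsum
  refine le_trans (norm_tsum_le_tsum_norm hsumnorm) ?_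
  have hbound : ∀ n : ℕ,
      ‖c (n + 1) * Complex.exp (2 * π * I * (n + 1 : ℕ) * ((t : ℂ) * I))‖
        ≤ (‖c (n + 1)‖ * Real.exp (-(2 * π) * ((n + 1) * T')))
            * (Real.exp (2 * π * T') * Real.exp (-(2 * π) * t)) := by
    intro n
    rw [term_norm]
    rw [mul_assoc, ← Real.exp_add, ← Real.exp_add]
    refine mul_le_mul_of_nonneg_left ?_ (norm_nonneg _)
    refine Real.exp_le_exp.2 ?_
    push_cast
    have h1 : (0:ℝ) ≤ n := Nat.cast_nonneg n
    have h2 : T' ≤ t := ht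
    nlinarith [mul_nonneg (mul_nonneg (mul_nonneg (by norm_num : (0:ℝ) ≤ 2) Real.pi_pos.le) h1) (sub_nonneg.2 h2)]
  have hsumrhs : Summable (fun n : ℕ =>
      (‖c (n + 1)‖ * Real.exp (-(2 * π) * ((n + 1) * T')))
        * (Real.exp (2 * π * T') * Real.exp (-(2 * π) * t))) :=
    hsumS.mul_right _
  refine le_trans (Summable.tsum_le_tsum hbound hsumnorm hsumrhs) ?_
  rw [tsum_mul_right, ← hS]
  ring_nf
  try rfl


lemma near_int (G : ℝ → ℂ) (hcont : ContinuousOn G (Set.Ioi 0)) (k : ℤ)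
    {M N ε : ℝ} (hε : 0 < ε) (hM : 0 ≤ M) (hN : 0 ≤ N)
    (hbnd : ∀ t : ℝ, 0 < t → t ≤ ε → ‖G t‖ ≤ M * t ^ (-(k : ℝ)) + N)
    (s : ℂ) (hs1 : (k : ℝ) < s.re) (hs2 : 0 < s.re) {B : ℝ} (hB : 0 < B) :
    IntegrableOn (fun t : ℝ => (t : ℂ) ^ (s - 1) * G t) (Set.Ioc 0 B) := by
  have hcont2 : ContinuousOn (fun t : ℝ => (t : ℂ) ^ (s - 1) * G t) (Set.Ioi 0) := fun t ht =>
    ((Complex.continuousAt_ofReal_cpow_const t _ (Or.inr (ne_of_gt ht))).continuousWithinAt).mul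
      (hcont t ht)
  set ε' : ℝ := min ε B with hε'
  have hε'0 : 0 < ε' := lt_min hε hB
  have hε'B : ε' ≤ B := min_le_right _ _
  have hunion : Set.Ioc 0 ε' ∪ Set.Ioc ε' B = Set.Ioc 0 B :=
    Set.Ioc_union_Ioc_eq_Ioc hε'0.le hε'B
  rw [← hunion]
  refine IntegrableOn.union ?_ ?_
  · -- near zero
    have hmeas : AEStronglyMeasurable (fun t : ℝ => (t : ℂ) ^ (s - 1) * G t)
        (volume.restrict (Set.Ioc 0 ε')) :=
      (hcont2.mono (fun x hx => hx.1)).aestronglyMeasurable measurableSet_Ioc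
    have hmaj : IntegrableOn
        (fun t : ℝ => M * t ^ (s.re - 1 - k) + N * t ^ (s.re - 1)) (Set.Ioc 0 ε') := by
      have h1 : IntervalIntegrable (fun t : ℝ => t ^ (s.re - 1 - k)) volume 0 ε' :=
        intervalIntegral.intervalIntegrable_rpow' (by push_cast; linarith)
      have h2 : IntervalIntegrable (fun t : ℝ => t ^ (s.re - 1)) volume 0 ε' :=
        intervalIntegral.intervalIntegrable_rpow' (by linarith)
      have h1' := (intervalIntegrable_iff_integrableOn_Ioc_of_le hε'0.le).1 h1
      have h2' := (intervalIntegrable_iff_integrableOn_Ioc_of_le hε'0.le).1 h2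
      exact (h1'.const_mul M).add (h2'.const_mul N)
    refine Integrable.mono' hmaj hmeas ?_
    refine (ae_restrict_iff' measurableSet_Ioc).2 (ae_of_all _ ?_)
    intro t ht
    obtain ⟨ht0, htε⟩ := ht
    have htε2 : t ≤ ε := le_trans htε (min_le_left _ _)
    have hnorm : ‖(t : ℂ) ^ (s - 1)‖ = t ^ (s.re - 1) := by
      rw [Complex.norm_cpow_eq_rpow_re_of_pos ht0]
      norm_num
    rw [norm_mul, hnorm]
    calc t ^ (s.re - 1) * ‖G t‖ ≤ t ^ (s.re - 1) * (M * t ^ (-(k : ℝ)) + N) :=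
          mul_le_mul_of_nonneg_left (hbnd t ht0 htε2) (Real.rpow_nonneg ht0.le _)
      _ = M * (t ^ (s.re - 1) * t ^ (-(k : ℝ))) + N * t ^ (s.re - 1) := by ring
      _ = M * t ^ (s.re - 1 - k) + N * t ^ (s.re - 1) := by
          rw [← Real.rpow_add ht0]
          ring_nf
  · -- compact part
    have : Set.Ioc ε' B ⊆ Set.Icc ε' B := Set.Ioc_subset_Icc_self
    refine IntegrableOn.mono_set ?_ this
    refine ContinuousOn.integrableOn_Icc ?_
    exact hcont2.mono fun x hx => lt_of_lt_of_le hε'0 hx.1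


lemma image_inv_Ioi {B : ℝ} (hB : 0 < B) : Inv.inv '' Set.Ioi B⁻¹ = Set.Ioo 0 B := by
  have hB' : 0 < B⁻¹ := inv_pos.2 hB
  ext x
  constructor
  · rintro ⟨u, hu, rfl⟩
    have hu0 : 0 < u := lt_trans hB' hu
    refine ⟨inv_pos.2 hu0, ?_⟩
    rw [show B = (B⁻¹)⁻¹ by rw [inv_inv]]
    exact (inv_lt_inv₀ hu0 hB').2 hu
  · rintro ⟨hx0, hxB⟩
    refine ⟨x⁻¹, ?_, by rw [inv_inv]⟩
    exact Set.mem_Ioi.2 ((inv_lt_inv₀ hB hx0).2 hxB)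

lemma sub_inv (G : ℝ → ℂ) {B : ℝ} (hB : 0 < B) :
    ∫ t in Set.Ioc 0 B, G t = ∫ u in Set.Ioi B⁻¹, |(u ^ 2)⁻¹| • G u⁻¹ := by
  rw [integral_Ioc_eq_integral_Ioo, ← image_inv_Ioi hB]
  rw [integral_image_eq_integral_abs_deriv_smul measurableSet_Ioi
    (fun x hx => (hasDerivAt_inv (ne_of_gt (lt_trans (inv_pos.2 hB) hx))).hasDerivWithinAt)
    (fun x _ y _ hxy => inv_injective hxy) G]
  congr 1
  ext u
  rw [abs_neg]

lemma int_inv (G : ℝ → ℂ) {B : ℝ} (hB : 0 < B)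
    (hi : IntegrableOn (fun u : ℝ => |(u ^ 2)⁻¹| • G u⁻¹) (Set.Ioi B⁻¹)) :
    IntegrableOn G (Set.Ioc 0 B) := by
  have : IntegrableOn G (Set.Ioo 0 B) := by
    rw [← image_inv_Ioi hB]
    rw [integrableOn_image_iff_integrableOn_abs_deriv_smul measurableSet_Ioi
      (fun x hx => (hasDerivAt_inv (ne_of_gt (lt_trans (inv_pos.2 hB) hx))).hasDerivWithinAt)
      (fun x _ y _ hxy => inv_injective hxy) G]
    refine hi.congr_fun (fun u hu => ?_) measurableSet_Ioi
    rw [abs_neg]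
  exact (integrableOn_Ioc_iff_integrableOn_Ioo).2 this

/-- splitting of the L-integral of a meromorphic modular form `f = g/h`
with no poles on the positive imaginary axis, regular at the cusp, at a reflection
point `B > 0`: the polar term plus two absolutely convergent integrals. -/
theorem stmt_9 (k₁ k₂ k : ℤ) (g h f : ℂ → ℂ)
    (hg : IsModularForm k₁ g) (hh : IsModularForm k₂ h)
    (hhne : ∃ z : ℂ, 0 < z.im ∧ h z ≠ 0)
    (hk : k = k₁ - k₂)
    (hf : ∀ z : ℂ, f z = g z / h z)
    (haxis : ∀ t : ℝ, 0 < t → h (t * I) ≠ 0)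
    (T : ℝ) (hT : 0 < T) (c : ℕ → ℂ)
    (hcusp : ∀ τ : ℂ, T < τ.im → h τ ≠ 0 ∧
      Summable (fun n : ℕ => ‖c n * Complex.exp (2 * π * I * n * τ)‖) ∧
      f τ = ∑' n : ℕ, c n * Complex.exp (2 * π * I * n * τ)) :
    ∀ B : ℝ, 0 < B → ∀ s : ℂ, max (k : ℝ) 0 < s.re →
      IntegrableOn (fun t : ℝ => (t : ℂ) ^ (s - 1) * (f (t * I) - c 0)) (Set.Ioi 0) ∧
      IntegrableOn (fun t : ℝ => (t : ℂ) ^ (s - 1) * (f (t * I) - c 0)) (Set.Ioi B) ∧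
      IntegrableOn (fun t : ℝ =>
        (t : ℂ) ^ ((k : ℂ) - s - 1) * (f (t * I) - c 0)) (Set.Ioi (1 / B)) ∧
      ∫ t in Set.Ioi (0:ℝ), (t : ℂ) ^ (s - 1) * (f (t * I) - c 0)
        = -c 0 * ((B : ℂ) ^ s / s + I ^ k * (B : ℂ) ^ (s - (k : ℂ)) / ((k : ℂ) - s))
          + (∫ t in Set.Ioi B, (t : ℂ) ^ (s - 1) * (f (t * I) - c 0))
          + I ^ k * ∫ t in Set.Ioi (1 / B),
              (t : ℂ) ^ ((k : ℂ) - s - 1) * (f (t * I) - c 0) := by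
  obtain ⟨hgd, -, hg2, -⟩ := hg
  obtain ⟨hhd, -, hh2, -⟩ := hh
  -- continuity of t ↦ f(it)
  have hφ : Continuous fun t : ℝ => (t : ℂ) * I :=
    Complex.continuous_ofReal.mul continuous_const
  have hmaps : ∀ t : ℝ, t ∈ Set.Ioi (0:ℝ) → ((t : ℂ) * I) ∈ {z : ℂ | 0 < z.im} := by
    intro t ht; simpa using ht
  have hgc : ContinuousOn (fun t : ℝ => g ((t : ℂ) * I)) (Set.Ioi 0) :=
    hgd.continuousOn.comp hφ.continuousOn hmaps
  have hhc : ContinuousOn (fun t : ℝ => h ((t : ℂ) * I)) (Set.Ioi 0) :=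
    hhd.continuousOn.comp hφ.continuousOn hmaps
  have hcontf : ContinuousOn (fun t : ℝ => f ((t : ℂ) * I)) (Set.Ioi 0) := by
    have : (fun t : ℝ => f ((t : ℂ) * I))
        = fun t : ℝ => g ((t : ℂ) * I) / h ((t : ℂ) * I) := by
      funext t; rw [hf]
    rw [this]
    exact hgc.div hhc fun t ht => haxis t ht
  have hcontF : ContinuousOn (fun t : ℝ => f ((t : ℂ) * I) - c 0) (Set.Ioi 0) :=
    hcontf.sub continuousOn_const
  -- decay at infinity
  obtain ⟨C, hC0, hdec⟩ := decay f T hT c fun τ hτ => ⟨(hcusp τ hτ).2.1, (hcusp τ hτ).2.2⟩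
  -- modular relation
  have hrel : ∀ t : ℝ, 0 < t →
      f ((t : ℂ)⁻¹ * I) = ((t : ℂ) * I) ^ k * f ((t : ℂ) * I) := fun t ht =>
    f_rel hg2 hh2 hk hf ht
  -- bound at infinity for f itself
  set M : ℝ := ‖c 0‖ + C with hM
  have hM0 : 0 ≤ M := add_nonneg (norm_nonneg _) hC0
  have hMb : ∀ u : ℝ, T + 1 ≤ u → ‖f ((u : ℂ) * I)‖ ≤ M := by
    intro u hu
    have hu0 : 0 < u := by linarith
    have h1 : ‖f ((u : ℂ) * I)‖ ≤ ‖f ((u : ℂ) * I) - c 0‖ + ‖c 0‖ := by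
      calc ‖f ((u : ℂ) * I)‖ = ‖(f ((u : ℂ) * I) - c 0) + c 0‖ := by ring_nf
        _ ≤ ‖f ((u : ℂ) * I) - c 0‖ + ‖c 0‖ := norm_add_le _ _
    have h2 : ‖f ((u : ℂ) * I) - c 0‖ ≤ C * Real.exp (-(2 * π) * u) := hdec u hu
    have h3 : C * Real.exp (-(2 * π) * u) ≤ C := by
      calc C * Real.exp (-(2 * π) * u) ≤ C * 1 := by
            refine mul_le_mul_of_nonneg_left ?_ hC0
            rw [Real.exp_le_one_iff]
            nlinarith [Real.pi_pos]
        _ = C := mul_one C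
    rw [hM]
    linarith
  -- bound near zero
  have hbnd0 : ∀ t : ℝ, 0 < t → t ≤ (T + 1)⁻¹ →
      ‖f ((t : ℂ) * I) - c 0‖ ≤ M * t ^ (-(k : ℝ)) + ‖c 0‖ := by
    intro t ht htε
    have hT1 : (0:ℝ) < T + 1 := by linarith
    have hti : T + 1 ≤ t⁻¹ := by
      rw [show T + 1 = ((T + 1)⁻¹)⁻¹ by rw [inv_inv]]
      exact inv_anti₀ ht htε
    have hzne : (t : ℂ) * I ≠ 0 := by
      apply mul_ne_zero
      · exact_mod_cast ht.ne'
      · exact I_ne_zero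
    have hfe : f ((t : ℂ) * I) = ((t : ℂ) * I) ^ (-k) * f ((t : ℂ)⁻¹ * I) := by
      rw [hrel t ht, ← mul_assoc, zpow_neg, inv_mul_cancel₀ (zpow_ne_zero _ hzne), one_mul]
    have hnz : ‖((t : ℂ) * I) ^ (-k)‖ = t ^ (-(k : ℝ)) := by
      rw [norm_zpow]
      have : ‖(t : ℂ) * I‖ = t := by
        rw [norm_mul, Complex.norm_I, mul_one, Complex.norm_real, Real.norm_eq_abs,
          abs_of_pos ht]
      rw [this]
      rw [show -(k : ℝ) = ((-k : ℤ) : ℝ) by push_cast; ring, Real.rpow_intCast]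
    have hfu : ‖f ((t : ℂ)⁻¹ * I)‖ ≤ M := by
      have := hMb t⁻¹ hti
      rwa [Complex.ofReal_inv] at this
    calc ‖f ((t : ℂ) * I) - c 0‖ ≤ ‖f ((t : ℂ) * I)‖ + ‖c 0‖ := norm_sub_le _ _
      _ ≤ M * t ^ (-(k : ℝ)) + ‖c 0‖ := by
          rw [hfe, norm_mul, hnz, mul_comm M]
          gcongr
  intro B hB s hs
  obtain ⟨hsk, hs0⟩ := max_lt_iff.mp hs
  have hB' : 0 < B⁻¹ := inv_pos.2 hB
  -- integrabilities
  have I2 : IntegrableOn (fun t : ℝ => (t : ℂ) ^ (s - 1) * (f ((t:ℂ) * I) - c 0))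
      (Set.Ioi B) := tail_int _ (s - 1) hcontF hC0 hdec hB
  have I3 : IntegrableOn (fun t : ℝ => (t : ℂ) ^ ((k : ℂ) - s - 1) * (f ((t:ℂ) * I) - c 0))
      (Set.Ioi B⁻¹) := tail_int _ ((k : ℂ) - s - 1) hcontF hC0 hdec hB'
  have I0c : IntegrableOn (fun t : ℝ => (t : ℂ) ^ (s - 1) * (f ((t:ℂ) * I) - c 0))
      (Set.Ioc 0 B) :=
    near_int _ hcontF k (inv_pos.2 (by linarith : (0:ℝ) < T + 1)) hM0 (norm_nonneg _)
      hbnd0 s hsk hs0 hB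
  have I0 : IntegrableOn (fun t : ℝ => (t : ℂ) ^ (s - 1) * (f ((t:ℂ) * I) - c 0))
      (Set.Ioi 0) := by
    rw [← Set.Ioc_union_Ioi_eq_Ioi hB.le]
    exact I0c.union I2
  rw [one_div]
  refine ⟨I0, I2, I3, ?_⟩
  -- final equality
  have hsne : s ≠ 0 := fun h0 => by rw [h0] at hs0; simp at hs0
  have hksne : (k : ℂ) - s ≠ 0 := by
    intro h0
    have := congrArg Complex.re h0
    simp only [Complex.sub_re, Complex.intCast_re, Complex.zero_re] at this
    linarith
  have hks : ((k : ℂ) - s - 1).re < -1 := by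
    simp only [Complex.sub_re, Complex.intCast_re, Complex.one_re]
    linarith
  have hms : (-s - 1).re < -1 := by
    simp only [Complex.sub_re, Complex.neg_re, Complex.one_re]
    linarith
  have Icpow1 : IntegrableOn (fun u : ℝ => (u : ℂ) ^ ((k : ℂ) - s - 1)) (Set.Ioi B⁻¹) :=
    integrableOn_Ioi_cpow_of_lt hks hB'
  have Icpow2 : IntegrableOn (fun u : ℝ => (u : ℂ) ^ (-s - 1)) (Set.Ioi B⁻¹) :=
    integrableOn_Ioi_cpow_of_lt hms hB'
  have hsplit : (∫ t in Set.Ioi (0:ℝ), (t : ℂ) ^ (s - 1) * (f ((t:ℂ) * I) - c 0))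
      = (∫ t in Set.Ioc 0 B, (t : ℂ) ^ (s - 1) * (f ((t:ℂ) * I) - c 0))
        + ∫ t in Set.Ioi B, (t : ℂ) ^ (s - 1) * (f ((t:ℂ) * I) - c 0) := by
    rw [← Set.Ioc_union_Ioi_eq_Ioi hB.le,
      setIntegral_union (Set.Ioc_disjoint_Ioi le_rfl) measurableSet_Ioi I0c I2]
  have harg : ∀ u : ℝ, 0 < u → ((u : ℂ)).arg ≠ π := fun u hu => by
    rw [Complex.arg_ofReal_of_nonneg hu.le]; exact Real.pi_ne_zero.symm
  have hptw : Set.EqOn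
      (fun u : ℝ => |(u ^ 2)⁻¹| •
        ((fun t : ℝ => (t : ℂ) ^ (s - 1) * (f ((t:ℂ) * I) - c 0)) u⁻¹))
      (fun u : ℝ => I ^ k * ((u : ℂ) ^ ((k : ℂ) - s - 1) * (f ((u:ℂ) * I) - c 0))
        + c 0 * (I ^ k * (u : ℂ) ^ ((k : ℂ) - s - 1) - (u : ℂ) ^ (-s - 1)))
      (Set.Ioi B⁻¹) := by
    intro u hu
    have hu0 : 0 < u := lt_trans hB' hu
    have hXne : (u : ℂ) ≠ 0 := by exact_mod_cast hu0.ne'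
    simp only
    rw [Complex.real_smul, abs_of_pos (by positivity : (0:ℝ) < (u ^ 2)⁻¹)]
    push_cast
    rw [hrel u hu0]
    rw [inv_cpow _ _ (harg u hu0), ← Complex.cpow_neg]
    rw [mul_zpow]
    rw [← Complex.cpow_intCast (u : ℂ) k]
    have h2 : (((u : ℂ)) ^ 2)⁻¹ = (u : ℂ) ^ (-2 : ℂ) := by
      rw [Complex.cpow_neg]
      congr 1
      rw [show (2 : ℂ) = ((2 : ℕ) : ℂ) by norm_num, Complex.cpow_natCast]
    rw [h2]
    have e1 : (u : ℂ) ^ (-s - 1) = (u : ℂ) ^ (-2 : ℂ) * (u : ℂ) ^ (-(s - 1)) := by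
      rw [← Complex.cpow_add _ _ hXne]
      congr 1
      ring
    have e2 : (u : ℂ) ^ ((k : ℂ) - s - 1)
        = (u : ℂ) ^ (-2 : ℂ) * (u : ℂ) ^ (-(s - 1)) * (u : ℂ) ^ ((k : ℤ) : ℂ) := by
      rw [← Complex.cpow_add _ _ hXne, ← Complex.cpow_add _ _ hXne]
      congr 1
      push_cast
      ring
    rw [e1, e2]
    ring
  have hb1 : (((B⁻¹ : ℝ)) : ℂ) ^ ((k : ℂ) - s - 1 + 1) = (B : ℂ) ^ (s - (k : ℂ)) := by
    rw [Complex.ofReal_inv, inv_cpow _ _ (harg B hB), ← Complex.cpow_neg]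
    congr 1
    ring
  have hb2 : (((B⁻¹ : ℝ)) : ℂ) ^ (-s - 1 + 1) = (B : ℂ) ^ s := by
    rw [Complex.ofReal_inv, inv_cpow _ _ (harg B hB), ← Complex.cpow_neg]
    congr 1
    ring
  have hIoc : (∫ t in Set.Ioc 0 B, (t : ℂ) ^ (s - 1) * (f ((t:ℂ) * I) - c 0))
      = I ^ k * (∫ u in Set.Ioi B⁻¹, (u : ℂ) ^ ((k : ℂ) - s - 1) * (f ((u:ℂ) * I) - c 0))
        + c 0 * (I ^ k * (-((B : ℂ) ^ (s - (k : ℂ))) / ((k : ℂ) - s)) - (B : ℂ) ^ s / s) := by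
    rw [sub_inv _ hB]
    rw [setIntegral_congr_fun measurableSet_Ioi hptw]
    have Ia : IntegrableOn
        (fun u : ℝ => I ^ k * ((u : ℂ) ^ ((k : ℂ) - s - 1) * (f ((u:ℂ) * I) - c 0)))
        (Set.Ioi B⁻¹) := I3.const_mul _
    have Ib : IntegrableOn
        (fun u : ℝ => I ^ k * (u : ℂ) ^ ((k : ℂ) - s - 1) - (u : ℂ) ^ (-s - 1))
        (Set.Ioi B⁻¹) := by
      exact (Icpow1.const_mul _).sub Icpow2
    have Ic : IntegrableOn
        (fun u : ℝ => c 0 * (I ^ k * (u : ℂ) ^ ((k : ℂ) - s - 1) - (u : ℂ) ^ (-s - 1)))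
        (Set.Ioi B⁻¹) := Ib.const_mul _
    rw [integral_add Ia Ic]
    rw [integral_const_mul, integral_const_mul,
      integral_sub (Icpow1.const_mul _) Icpow2, integral_const_mul]
    rw [integral_Ioi_cpow_of_lt hks hB', integral_Ioi_cpow_of_lt hms hB']
    rw [hb1, hb2]
    have d1 : (k : ℂ) - s - 1 + 1 = (k : ℂ) - s := by ring
    have d2 : -s - 1 + 1 = -s := by ring
    rw [d1, d2]
    field_simp
    have hI : ∀ u : ℝ, I * (u : ℂ) = (u : ℂ) * I := fun u => mul_comm _ _
    simp only [hI]
  rw [hsplit, hIoc]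
  ring
end
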